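/- arXiv:2108.04464 — 4 statements merged into one kernel-verified Lean document; each statement's English description precedes it below -/
import Mathlib

section
/- Let F_V be a cdf on ℝ, let α ∈ [0,1], and let Z be a random variable uniformly distributed on (0,1) on a probability space (Ω, 𝔽, ℙ). Define Ṽ = F_V^{-1}(Z + α) on the event {Z ≤ 1 − α} and Ṽ = F_V^{-1}(1 − Z) on the event {Z > 1 − α}. Then Ṽ has cdf F_V, i.e., ℙ(Ṽ ≤ z) = max{0, F_V(z) − α} + min{F_V(z), α} = F_V(z) for every z ∈ ℝ. -/
open MeasureTheory Filter Topology

/-- The (real-valued) quantile function of a distribution function `F : ℝ → ℝ`: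
`F⁻¹(t) = inf {z ∈ ℝ : F(z) ≥ t}`. -/
noncomputable def realQuantile (F : ℝ → ℝ) (t : ℝ) : ℝ :=
  sInf {x : ℝ | t ≤ F x}

/-- Galois-type inequality for the quantile function, for `t ∈ (0,1)`. -/
lemma realQuantile_le_iff (FV : ℝ → ℝ) (hFVmono : Monotone FV)
    (hFVrc : ∀ x : ℝ, Tendsto FV (𝓝[>] x) (𝓝 (FV x)))
    (hFVbot : Tendsto FV atBot (𝓝 0)) (hFVtop : Tendsto FV atTop (𝓝 1))
    {t : ℝ} (ht0 : 0 < t) (ht1 : t < 1) (z : ℝ) :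
    realQuantile FV t ≤ z ↔ t ≤ FV z := by
  have hne : {x : ℝ | t ≤ FV x}.Nonempty := by
    obtain ⟨x, hx⟩ := (hFVtop.eventually (eventually_ge_nhds ht1)).exists
    exact ⟨x, hx⟩
  have hbdd : BddBelow {x : ℝ | t ≤ FV x} := by
    obtain ⟨x0, hx0⟩ : ∃ x0 : ℝ, ∀ x ≤ x0, FV x < t := by
      have := (hFVbot.eventually (eventually_lt_nhds ht0))
      rw [eventually_atBot] at this
      exact this
    refine ⟨x0, fun y hy => ?_⟩
    by_contra hlt
    push_neg at hlt
    exact absurd hy (not_le.2 (lt_of_le_of_lt (hFVmono hlt.le) (hx0 x0 le_rfl)))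
  constructor
  · intro h
    have key : ∀ y ∈ Set.Ioi z, t ≤ FV y := by
      intro y hy
      obtain ⟨s, hs, hsy⟩ := (csInf_lt_iff hbdd hne).1 (lt_of_le_of_lt h hy)
      exact le_trans hs (hFVmono hsy.le)
    exact ge_of_tendsto (hFVrc z) (eventually_nhdsWithin_of_forall key)
  · intro h
    exact csInf_le hbdd h

/-- Let `F_V` be a cdf on `ℝ`, `α ∈ [0,1]`, and `Z` uniformly distributed on
`(0,1)`. Define `Ṽ = F_V⁻¹(Z + α)` on `{Z ≤ 1 − α}` and `Ṽ = F_V⁻¹(1 − Z)` on `{Z > 1 − α}`.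
Then `Ṽ` has cdf `F_V`; indeed `ℙ(Ṽ ≤ z) = max{0, F_V(z) − α} + min{F_V(z), α} = F_V(z)` for
every `z ∈ ℝ`. -/
theorem constructed_rv_has_cdf {Ω : Type*} [MeasurableSpace Ω]
    (P : Measure Ω) [IsProbabilityMeasure P]
    (FV : ℝ → ℝ) (hFVmono : Monotone FV)
    (hFVrc : ∀ x : ℝ, Tendsto FV (𝓝[>] x) (𝓝 (FV x)))
    (hFVbot : Tendsto FV atBot (𝓝 0)) (hFVtop : Tendsto FV atTop (𝓝 1))
    (α : ℝ) (hα : α ∈ Set.Icc (0 : ℝ) 1)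
    (Z : Ω → ℝ) (hZ : Measurable Z)
    (hZunif : ∀ t ∈ Set.Icc (0 : ℝ) 1, (P {ω | Z ω ≤ t}).toReal = t)
    (Vt : Ω → ℝ)
    (hVt : Vt = fun ω =>
      if Z ω ≤ 1 - α then realQuantile FV (Z ω + α) else realQuantile FV (1 - Z ω)) :
    ∀ z : ℝ,
      (P {ω | Vt ω ≤ z}).toReal = max 0 (FV z - α) + min (FV z) α ∧
      max 0 (FV z - α) + min (FV z) α = FV z := by
  obtain ⟨hα0, hα1⟩ := hα
  -- basic measurability
  have hmeas : ∀ c : ℝ, MeasurableSet {ω | Z ω ≤ c} := fun c =>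
    hZ measurableSet_Iic
  have hfin : ∀ s : Set Ω, P s ≠ ⊤ := fun s => measure_ne_top P s
  -- endpoint measures
  have hZ0 : P {ω | Z ω ≤ 0} = 0 := by
    have h := hZunif 0 ⟨le_refl 0, zero_le_one⟩
    rcases (ENNReal.toReal_eq_zero_iff _).1 h with h' | h'
    · exact h'
    · exact absurd h' (hfin _)
  have hZ1 : P {ω | Z ω ≤ 1} = 1 := by
    have h := hZunif 1 ⟨zero_le_one, le_refl 1⟩
    exact (ENNReal.toReal_eq_one_iff _).1 h
  -- singletons are null
  have hsingle : ∀ c : ℝ, c ∈ Set.Icc (0 : ℝ) 1 → P {ω | Z ω = c} = 0 := by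
    intro c ⟨hc0, hc1⟩
    rcases eq_or_lt_of_le hc0 with h0 | h0
    · refine measure_mono_null (fun ω hω => ?_) hZ0
      simp only [Set.mem_setOf_eq] at hω ⊢
      rw [hω, ← h0]
    · have key : ∀ ε : ℝ, 0 < ε → (P {ω | Z ω = c}).toReal ≤ ε := by
        intro ε hε
        set c' : ℝ := max 0 (c - ε) with hc'
        have hc'0 : 0 ≤ c' := le_max_left _ _
        have hc'lt : c' < c := by
          rcases le_total 0 (c - ε) with h | h
          · rw [hc', max_eq_right h]; linarith
          · rw [hc', max_eq_left h]; linarith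
        have hsub : {ω | Z ω ≤ c'} ⊆ {ω | Z ω ≤ c} := fun ω hω =>
          le_trans hω hc'lt.le
        have hsub2 : {ω | Z ω = c} ⊆ {ω | Z ω ≤ c} \ {ω | Z ω ≤ c'} := by
          intro ω hω
          simp only [Set.mem_setOf_eq] at hω
          exact ⟨le_of_eq hω, by simp only [Set.mem_setOf_eq, hω]; linarith⟩
        have hdiff : P ({ω | Z ω ≤ c} \ {ω | Z ω ≤ c'}) = P {ω | Z ω ≤ c} - P {ω | Z ω ≤ c'} :=
          measure_diff hsub (hmeas c').nullMeasurableSet (hfin _)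
        have hmono' : P {ω | Z ω ≤ c'} ≤ P {ω | Z ω ≤ c} := measure_mono hsub
        calc (P {ω | Z ω = c}).toReal
            ≤ (P ({ω | Z ω ≤ c} \ {ω | Z ω ≤ c'})).toReal := by
              apply ENNReal.toReal_mono (hfin _) (measure_mono hsub2)
          _ = (P {ω | Z ω ≤ c}).toReal - (P {ω | Z ω ≤ c'}).toReal := by
              rw [hdiff, ENNReal.toReal_sub_of_le hmono' (hfin _)]
          _ = c - c' := by
              rw [hZunif c ⟨hc0, hc1⟩, hZunif c' ⟨hc'0, le_trans hc'lt.le hc1⟩]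
          _ ≤ ε := by
              rcases le_total 0 (c - ε) with h | h
              · rw [hc', max_eq_right h]; linarith
              · rw [hc', max_eq_left h]; linarith
      have h1 : (P {ω | Z ω = c}).toReal ≤ 0 :=
        le_of_forall_pos_le_add (fun ε hε => by linarith [key ε hε])
      have h2 : (P {ω | Z ω = c}).toReal = 0 :=
        le_antisymm h1 ENNReal.toReal_nonneg
      rcases (ENNReal.toReal_eq_zero_iff _).1 h2 with h' | h'
      · exact h'
      · exact absurd h' (hfin _)
  intro z
  set F : ℝ := FV z with hF
  have hF0 : 0 ≤ F := hFVmono.le_of_tendsto hFVbot z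
  have hF1 : F ≤ 1 := hFVmono.ge_of_tendsto hFVtop z
  -- the two target sets
  set G1 : Set Ω := {ω | Z ω ≤ F - α} with hG1
  set G2 : Set Ω := {ω | Z ω ≤ 1 - min α F}ᶜ with hG2
  have hminle : F - α ≤ 1 - min α F := by
    rcases le_total α F with h | h
    · rw [min_eq_left h]; linarith
    · rw [min_eq_right h]; linarith
  have hdisj : Disjoint G1 G2 := by
    exact Disjoint.mono_left (fun ω hω => le_trans hω hminle)
      (disjoint_compl_right (a := {ω | Z ω ≤ 1 - min α F}))
  -- null set outside which the pointwise identification holds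
  have hnull : P ({ω | Z ω ≤ 0} ∪ {ω | Z ω ≤ 1}ᶜ ∪ {ω | Z ω = 1} ∪
      {ω | Z ω = 1 - α} ∪ {ω | Z ω = 1 - F}) = 0 := by
    have h1 : P ({ω | Z ω ≤ 1}ᶜ) = 0 := by
      have := measure_compl (hmeas 1) (hfin _)
      rw [hZ1, measure_univ] at this
      simp [this]
    repeat rw [measure_union_null_iff]
    exact ⟨⟨⟨⟨hZ0, h1⟩, hsingle 1 ⟨zero_le_one, le_refl 1⟩⟩,
      hsingle (1 - α) ⟨by linarith, by linarith⟩⟩,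
      hsingle (1 - F) ⟨by linarith, by linarith⟩⟩
  have hae : ∀ᵐ ω ∂P, ω ∉ ({ω | Z ω ≤ 0} ∪ {ω | Z ω ≤ 1}ᶜ ∪ {ω | Z ω = 1} ∪
      {ω | Z ω = 1 - α} ∪ {ω | Z ω = 1 - F}) := by
    exact compl_mem_ae_iff.2 hnull
  -- pointwise identification
  have hpt : ∀ᵐ ω ∂P, (ω ∈ {ω | Vt ω ≤ z} ↔ ω ∈ G1 ∪ G2) := by
    filter_upwards [hae] with ω hω
    simp only [Set.mem_union, Set.mem_compl_iff, Set.mem_setOf_eq, not_or] at hω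
    obtain ⟨⟨⟨⟨h0, h1⟩, h2⟩, h3⟩, h4⟩ := hω
    push_neg at h0 h1
    have hZ1' : Z ω < 1 := lt_of_le_of_ne h1 h2
    simp only [Set.mem_union, Set.mem_setOf_eq, hG1, hG2, Set.mem_compl_iff, not_le, hVt]
    by_cases hb : Z ω ≤ 1 - α
    · have hb' : Z ω < 1 - α := lt_of_le_of_ne hb h3
      rw [if_pos hb]
      rw [realQuantile_le_iff FV hFVmono hFVrc hFVbot hFVtop (by linarith) (by linarith) z]
      constructor
      · intro h; left; linarith
      · rintro (h | h)
        · linarith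
        · exfalso
          have := min_le_left α F
          linarith
    · push_neg at hb
      rw [if_neg (not_le.2 hb)]
      rw [realQuantile_le_iff FV hFVmono hFVrc hFVbot hFVtop (by linarith) (by linarith) z]
      constructor
      · intro h
        right
        have h1F : 1 - F ≠ Z ω := fun he => h4 he.symm
        have : 1 - F < Z ω := lt_of_le_of_ne (by linarith) h1F
        have : 1 - Z ω < min α F := lt_min (by linarith) (by linarith)
        linarith
      · rintro (h | h)
        · exfalso; linarith
        · have := min_le_right α F
          linarith
  have hcongr : P {ω | Vt ω ≤ z} = P (G1 ∪ G2) :=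
    measure_congr (eventuallyEq_set.2 hpt)
  -- compute the measures
  have hPG1 : (P G1).toReal = max 0 (F - α) := by
    rcases le_total 0 (F - α) with h | h
    · rw [max_eq_right h, hG1]
      exact hZunif (F - α) ⟨h, by linarith⟩
    · rw [max_eq_left h]
      have : P G1 = 0 := by
        refine measure_mono_null (fun ω hω => ?_) hZ0
        simp only [Set.mem_setOf_eq, hG1] at hω ⊢
        linarith
      rw [this, ENNReal.toReal_zero]
  have hm01 : (0 : ℝ) ≤ 1 - min α F ∧ 1 - min α F ≤ 1 := by
    constructor
    · rcases le_total α F with h | h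
      · rw [min_eq_left h]; linarith
      · rw [min_eq_right h]; linarith
    · have : 0 ≤ min α F := le_min hα0 hF0
      linarith
  have hPG2 : (P G2).toReal = min F α := by
    rw [hG2, measure_compl (hmeas _) (hfin _), measure_univ,
      ENNReal.toReal_sub_of_le prob_le_one ENNReal.one_ne_top, ENNReal.toReal_one,
      hZunif (1 - min α F) ⟨hm01.1, hm01.2⟩, min_comm]
    ring
  have hsum : (P (G1 ∪ G2)).toReal = max 0 (F - α) + min F α := by
    rw [measure_union hdisj ((hmeas _).compl),
      ENNReal.toReal_add (hfin _) (hfin _), hPG1, hPG2]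
  constructor
  · rw [hcongr, hsum]
  · rcases le_total F α with h | h
    · rw [min_eq_left h, max_eq_left (by linarith)]; ring
    · rw [min_eq_right h, max_eq_right (by linarith)]; ring
end

section
/- Let (Ω, 𝔽, ℙ) be an atomless probability space, let W be a real-valued random variable on it with cdf F_W, and let F_V be a cdf on ℝ such that at least one of F_W, F_V is continuous. Then the supremum of ℙ(W ≤ V), taken over all random variables V on (Ω, 𝔽, ℙ) whose cdf equals F_V, equals 1 − sup_{z∈ℝ} (F_V(z) − F_W(z)), and this supremum over V is attained by some such V. -/
open MeasureTheory Filter Topology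

open Set
open scoped ENNReal NNReal
set_option linter.unusedSectionVars false
set_option linter.unusedTactic false
set_option maxHeartbeats 1000000

/-- A measure is atomless if every set of positive measure contains a measurable subset of
strictly smaller, yet positive, measure. -/
def Atomless {Ω : Type*} [MeasurableSpace Ω] (P : Measure Ω) : Prop :=
  ∀ s : Set Ω, MeasurableSet s → 0 < P s →
    ∃ t : Set Ω, t ⊆ s ∧ MeasurableSet t ∧ 0 < P t ∧ P t < P s



section Sierpinski
variable {Ω : Type*} [MeasurableSpace Ω] {P : Measure Ω} [IsProbabilityMeasure P]

lemma halve (hat : Atomless P) {s : Set Ω} (hs : MeasurableSet s) (h : 0 < P s) :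
    ∃ t, t ⊆ s ∧ MeasurableSet t ∧ 0 < P t ∧ P t ≤ P s / 2 := by
  obtain ⟨t, hts, htm, ht0, htlt⟩ := hat s hs h
  rcases le_or_gt (P t) (P s / 2) with hle | hgt
  · exact ⟨t, hts, htm, ht0, hle⟩
  · have h1 : P (s \ t) = P s - P t := measure_diff hts htm.nullMeasurableSet (measure_ne_top P t)
    refine ⟨s \ t, diff_subset, hs.diff htm, ?_, ?_⟩
    · rw [h1]; exact tsub_pos_of_lt htlt
    · rw [h1]
      calc P s - P t ≤ P s - P s / 2 := tsub_le_tsub_left hgt.le _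
        _ = P s / 2 := ENNReal.sub_half (measure_ne_top P s)

lemma exists_small_subset (hat : Atomless P) {s : Set Ω} (hs : MeasurableSet s) (h : 0 < P s)
    {ε : ℝ≥0∞} (hε : 0 < ε) :
    ∃ t, t ⊆ s ∧ MeasurableSet t ∧ 0 < P t ∧ P t ≤ ε := by
  have key : ∀ n : ℕ, ∃ t, t ⊆ s ∧ MeasurableSet t ∧ 0 < P t ∧ P t ≤ P s / 2 ^ n := by
    intro n
    induction n with
    | zero => exact ⟨s, subset_rfl, hs, h, by simp⟩
    | succ n ih =>
      obtain ⟨t, hts, htm, ht0, hle⟩ := ih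
      obtain ⟨u, hut, hum, hu0, hule⟩ := halve hat htm ht0
      refine ⟨u, hut.trans hts, hum, hu0, hule.trans ?_⟩
      have h2 : P s / 2 ^ n / 2 = P s / 2 ^ (n + 1) := by
        rw [div_eq_mul_inv (P s / 2 ^ n), div_eq_mul_inv (P s), div_eq_mul_inv (P s),
          mul_assoc, ← ENNReal.mul_inv (Or.inl (by positivity)) (Or.inl (by simp)), pow_succ]
      rw [← h2]
      exact ENNReal.div_le_div_right hle 2
  obtain ⟨n, hn⟩ := ENNReal.exists_inv_two_pow_lt hε.ne'
  obtain ⟨t, hts, htm, ht0, hle⟩ := key n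
  refine ⟨t, hts, htm, ht0, hle.trans ?_⟩
  calc P s / 2 ^ n ≤ 1 / 2 ^ n := ENNReal.div_le_div_right prob_le_one _
    _ = 2⁻¹ ^ n := by rw [one_div, ENNReal.inv_pow]
    _ ≤ ε := hn.le

lemma sierpinski (hat : Atomless P) {s : Set Ω} (hs : MeasurableSet s) {c : ℝ≥0∞}
    (hc : c ≤ P s) : ∃ t, t ⊆ s ∧ MeasurableSet t ∧ P t = c := by
  classical
  let δ : Set Ω → ℝ≥0∞ := fun t =>
    ⨆ u : {u : Set Ω // u ⊆ s \ t ∧ MeasurableSet u ∧ P t + P u ≤ c}, P u.1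
  let Φ : Set Ω → Set Ω → Prop := fun t u =>
    u ⊆ s \ t ∧ MeasurableSet u ∧ P t + P u ≤ c ∧ δ t ≤ 2 * P u
  have hex : ∀ t : Set Ω, P t ≤ c → ∃ u, Φ t u := by
    intro t htc
    rcases eq_or_ne (δ t) 0 with h0 | h0
    · exact ⟨∅, empty_subset _, MeasurableSet.empty, by simpa using htc, by simp [h0]⟩
    · have hδtop : δ t ≠ ∞ := by
        refine ne_top_of_le_ne_top (measure_ne_top P s) ?_
        exact iSup_le fun u => measure_mono (u.2.1.trans diff_subset)
      have hlt : δ t / 2 < δ t := ENNReal.half_lt_self h0 hδtop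
      obtain ⟨u, hu⟩ := lt_iSup_iff.mp hlt
      refine ⟨u.1, u.2.1, u.2.2.1, u.2.2.2, ?_⟩
      calc δ t = δ t / 2 + δ t / 2 := (ENNReal.add_halves _).symm
        _ ≤ P u.1 + P u.1 := add_le_add hu.le hu.le
        _ = 2 * P u.1 := (two_mul _).symm
  let next : Set Ω → Set Ω := fun t => t ∪ (if h : ∃ u, Φ t u then h.choose else ∅)
  let T : ℕ → Set Ω := fun n => next^[n] ∅
  have hT0 : T 0 = ∅ := rfl
  have hTsucc : ∀ n, T (n + 1) = next (T n) := fun n => Function.iterate_succ_apply' next n ∅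
  have hinv : ∀ n, MeasurableSet (T n) ∧ T n ⊆ s ∧ P (T n) ≤ c := by
    intro n
    induction n with
    | zero => simp [hT0]
    | succ n ih =>
      obtain ⟨hm, hsub, hc'⟩ := ih
      have he := hex (T n) hc'
      have hΦ : Φ (T n) (he.choose) := he.choose_spec
      have hu : T (n + 1) = T n ∪ he.choose := by
        rw [hTsucc]; show T n ∪ _ = _; rw [dif_pos he]
      rw [hu]
      refine ⟨hm.union hΦ.2.1, union_subset hsub (hΦ.1.trans diff_subset), ?_⟩
      calc P (T n ∪ he.choose) ≤ P (T n) + P he.choose := measure_union_le _ _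
        _ ≤ c := hΦ.2.2.1
  have hstep : ∀ n, ∃ u, Φ (T n) u ∧ T (n + 1) = T n ∪ u := by
    intro n
    have he := hex (T n) (hinv n).2.2
    refine ⟨he.choose, he.choose_spec, ?_⟩
    rw [hTsucc]; show T n ∪ _ = _; rw [dif_pos he]
  have hmono : Monotone T := by
    apply monotone_nat_of_le_succ
    intro n
    obtain ⟨u, _, hu⟩ := hstep n
    rw [hu]; exact subset_union_left
  set Tinf := ⋃ n, T n with hTinf
  have hTinfm : MeasurableSet Tinf := MeasurableSet.iUnion fun n => (hinv n).1
  have hTinfs : Tinf ⊆ s := iUnion_subset fun n => (hinv n).2.1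
  have hPTinf : P Tinf = ⨆ n, P (T n) := hmono.measure_iUnion
  have hTinfc : P Tinf ≤ c := by rw [hPTinf]; exact iSup_le fun n => (hinv n).2.2
  refine ⟨Tinf, hTinfs, hTinfm, ?_⟩
  by_contra hne
  have hlt : P Tinf < c := lt_of_le_of_ne hTinfc hne
  have hdiffpos : 0 < P (s \ Tinf) := by
    have : P (s \ Tinf) = P s - P Tinf :=
      measure_diff hTinfs hTinfm.nullMeasurableSet (measure_ne_top P _)
    rw [this]
    exact tsub_pos_of_lt (lt_of_lt_of_le hlt hc)
  obtain ⟨u, hus, hum, hu0, hule⟩ := exists_small_subset hat (hs.diff hTinfm) hdiffpos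
    (tsub_pos_of_lt hlt)
  set η := P u with hη
  have hηδ : ∀ n, η ≤ δ (T n) := by
    intro n
    have h1 : u ⊆ s \ T n := hus.trans (diff_subset_diff_right (le_iSup T n))
    have h2 : P (T n) + P u ≤ c := by
      calc P (T n) + P u ≤ P Tinf + (c - P Tinf) :=
            add_le_add (measure_mono (le_iSup T n)) hule
        _ = c := add_tsub_cancel_of_le hlt.le
    exact le_iSup (fun v : {u : Set Ω // u ⊆ s \ T n ∧ MeasurableSet u ∧ P (T n) + P u ≤ c} =>
      P v.1) ⟨u, h1, hum, h2⟩
  have hgrow : ∀ n : ℕ, (n : ℝ≥0∞) * (η / 2) ≤ P (T n) := by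
    intro n
    induction n with
    | zero => simp
    | succ n ih =>
      obtain ⟨v, hΦv, hv⟩ := hstep n
      have hηv : η / 2 ≤ P v := by
        have := hΦv.2.2.2
        have h3 : η ≤ 2 * P v := le_trans (hηδ n) this
        calc η / 2 ≤ 2 * P v / 2 := ENNReal.div_le_div_right h3 2
          _ = P v := by
            rw [mul_comm, mul_div_assoc, ENNReal.div_self two_ne_zero ENNReal.ofNat_ne_top,
              mul_one]
      have hdisj : Disjoint (T n) v := by
        rw [Set.disjoint_right]
        intro x hxv hxT
        exact (hΦv.1 hxv).2 hxT
      have hPv : P (T (n + 1)) = P (T n) + P v := by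
        rw [hv, measure_union hdisj hΦv.2.1]
      rw [Nat.cast_succ, add_mul, one_mul, hPv]
      exact add_le_add ih hηv
  have hη2 : η / 2 ≠ 0 := by
    simp only [ne_eq, ENNReal.div_eq_zero_iff]
    push_neg
    exact ⟨hu0.ne', ENNReal.ofNat_ne_top⟩
  have hη2top : η / 2 ≠ ∞ := by
    refine ne_top_of_le_ne_top (measure_ne_top P u) ?_
    exact ENNReal.half_le_self
  obtain ⟨n, hn⟩ := ENNReal.exists_nat_gt (ENNReal.inv_ne_top.mpr hη2)
  have : (1 : ℝ≥0∞) < n * (η / 2) := by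
    calc (1 : ℝ≥0∞) = (η / 2)⁻¹ * (η / 2) := (ENNReal.inv_mul_cancel hη2 hη2top).symm
      _ < n * (η / 2) := by
        rw [mul_comm _ (η / 2), mul_comm (n : ℝ≥0∞)]
        exact ENNReal.mul_lt_mul_right hη2 hη2top hn
  have hcon : (n : ℝ≥0∞) * (η / 2) ≤ 1 := le_trans (hgrow n) (le_trans (hinv n).2.2
    (hc.trans prob_le_one))
  exact absurd hcon (not_le.mpr this)

end Sierpinski







lemma one_div_succ_anti {a b : ℕ} (hab : a ≤ b) : (1:ℝ) / (b + 1) ≤ 1 / (a + 1) := by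
  apply one_div_le_one_div_of_le (by positivity)
  have : (a:ℝ) ≤ b := Nat.cast_le.mpr hab
  linarith

section FWfacts
variable {Ω : Type*} [MeasurableSpace Ω] (P : Measure Ω) [IsProbabilityMeasure P] (W : Ω → ℝ)

/-- The cdf of `W` as a real-valued function. -/
noncomputable def FWf (z : ℝ) : ℝ := (P {ω | W ω ≤ z}).toReal

variable {W}
variable (hW : Measurable W)
include hW

lemma measurable_le_const (z : ℝ) : MeasurableSet {ω | W ω ≤ z} := by
  have : {ω | W ω ≤ z} = W ⁻¹' (Iic z) := rfl
  rw [this]; exact hW measurableSet_Iic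

lemma measurable_lt_const (z : ℝ) : MeasurableSet {ω | W ω < z} := by
  have : {ω | W ω < z} = W ⁻¹' (Iio z) := rfl
  rw [this]; exact hW measurableSet_Iio

omit hW

lemma FWf_ofReal (z : ℝ) : P {ω | W ω ≤ z} = ENNReal.ofReal (FWf P W z) :=
  (ENNReal.ofReal_toReal (measure_ne_top P _)).symm

lemma FWf_mono : Monotone (FWf P W) := by
  intro a b hab
  exact ENNReal.toReal_mono (measure_ne_top P _)
    (measure_mono (fun ω (h : W ω ≤ a) => le_trans h hab))

lemma FWf_nonneg (z : ℝ) : 0 ≤ FWf P W z := ENNReal.toReal_nonneg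

lemma FWf_le_one (z : ℝ) : FWf P W z ≤ 1 := by
  have := measure_mono (subset_univ {ω | W ω ≤ z}) (μ := P)
  rw [measure_univ] at this
  calc FWf P W z ≤ (1 : ℝ≥0∞).toReal := ENNReal.toReal_mono (by simp) this
    _ = 1 := by simp

include hW

lemma measure_lt_eq_iSup (x : ℝ) :
    P {ω | W ω < x} = ⨆ n : ℕ, P {ω | W ω ≤ x - 1 / (n + 1)} := by
  have hU : {ω | W ω < x} = ⋃ n : ℕ, {ω | W ω ≤ x - 1 / (n + 1)} := by
    ext ω
    simp only [mem_setOf_eq, mem_iUnion]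
    constructor
    · intro h
      obtain ⟨n, hn⟩ := exists_nat_one_div_lt (sub_pos.mpr h)
      exact ⟨n, by push_cast at hn ⊢; linarith⟩
    · rintro ⟨n, hn⟩
      have : (0:ℝ) < 1 / (n + 1) := by positivity
      linarith
  rw [hU]
  refine Monotone.measure_iUnion ?_
  intro a b hab ω (h : W ω ≤ _)
  refine le_trans h ?_
  have h1 : (1:ℝ) / (b + 1) ≤ 1 / (a + 1) := one_div_succ_anti hab
  linarith

lemma measure_le_eq_iInf (x : ℝ) :
    P {ω | W ω ≤ x} = ⨅ n : ℕ, P {ω | W ω ≤ x + 1 / (n + 1)} := by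
  have hI : {ω | W ω ≤ x} = ⋂ n : ℕ, {ω | W ω ≤ x + 1 / (n + 1)} := by
    ext ω
    simp only [mem_setOf_eq, mem_iInter]
    constructor
    · intro h n
      have : (0:ℝ) < 1 / (n + 1) := by positivity
      linarith
    · intro h
      by_contra hx
      push_neg at hx
      obtain ⟨n, hn⟩ := exists_nat_one_div_lt (sub_pos.mpr hx)
      have := h n
      push_cast at hn
      linarith
  rw [hI]
  refine Directed.measure_iInter (fun n => (measurable_le_const hW _).nullMeasurableSet) ?_
    ⟨0, measure_ne_top P _⟩
  have hanti : Antitone (fun n : ℕ => {ω | W ω ≤ x + 1 / (n + 1)}) := by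
    intro a b hab ω (h : W ω ≤ _)
    refine le_trans h ?_
    have h1 : (1:ℝ) / (b + 1) ≤ 1 / (a + 1) := one_div_succ_anti hab
    linarith
  exact hanti.directed_ge

lemma exists_FWf_gt {t : ℝ} (ht1 : t < 1) : ∃ z : ℝ, t < FWf P W z := by
  have hU : (univ : Set Ω) = ⋃ n : ℕ, {ω | W ω ≤ (n : ℝ)} := by
    ext ω
    simp only [mem_univ, mem_iUnion, mem_setOf_eq, true_iff]
    obtain ⟨n, hn⟩ := exists_nat_gt (W ω)
    exact ⟨n, hn.le⟩
  have h1 : (1 : ℝ≥0∞) = ⨆ n : ℕ, P {ω | W ω ≤ (n : ℝ)} := by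
    rw [← measure_univ (μ := P), hU]
    refine Monotone.measure_iUnion ?_
    intro a b hab ω (h : W ω ≤ _)
    exact le_trans h (Nat.cast_le.mpr hab)
  have hlt : ENNReal.ofReal t < 1 := by
    rcases le_or_gt t 0 with h | h
    · simp [ENNReal.ofReal_eq_zero.mpr h]
    · rw [← ENNReal.ofReal_one]
      exact ENNReal.ofReal_lt_ofReal_iff one_pos |>.mpr ht1
  rw [h1] at hlt
  obtain ⟨n, hn⟩ := lt_iSup_iff.mp hlt
  refine ⟨n, ?_⟩
  rw [FWf_ofReal] at hn
  rcases le_or_gt t 0 with h | h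
  · exact lt_of_le_of_lt h (by
      by_contra hh
      push_neg at hh
      have : FWf P W n = 0 := le_antisymm hh (FWf_nonneg P n)
      rw [this] at hn
      simp at hn)
  · exact (ENNReal.ofReal_lt_ofReal_iff_of_nonneg h.le).mp hn

lemma exists_FWf_lt {t : ℝ} (ht0 : 0 < t) : ∃ z : ℝ, FWf P W z < t := by
  have hI : (∅ : Set Ω) = ⋂ n : ℕ, {ω | W ω ≤ -(n : ℝ)} := by
    ext ω
    simp only [mem_empty_iff_false, mem_iInter, mem_setOf_eq, false_iff]
    push_neg
    obtain ⟨n, hn⟩ := exists_nat_gt (-W ω)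
    exact ⟨n, by linarith⟩
  have h0 : (0 : ℝ≥0∞) = ⨅ n : ℕ, P {ω | W ω ≤ -(n : ℝ)} := by
    rw [← measure_empty (μ := P), hI]
    refine Directed.measure_iInter (fun n => (measurable_le_const hW _).nullMeasurableSet) ?_
      ⟨0, measure_ne_top P _⟩
    have hanti : Antitone (fun n : ℕ => {ω | W ω ≤ -(n : ℝ)}) := by
      intro a b hab ω (h : W ω ≤ _)
      refine le_trans h ?_
      simp only [neg_le_neg_iff, Nat.cast_le]
      exact_mod_cast hab
    exact hanti.directed_ge
  have hlt : ⨅ n : ℕ, P {ω | W ω ≤ -(n : ℝ)} < ENNReal.ofReal t := by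
    rw [← h0]
    exact ENNReal.ofReal_pos.mpr ht0
  obtain ⟨n, hn⟩ := iInf_lt_iff.mp hlt
  refine ⟨-(n:ℝ), ?_⟩
  rw [FWf_ofReal] at hn
  exact (ENNReal.ofReal_lt_ofReal_iff ht0).mp hn

end FWfacts
section Cfun
variable {Ω : Type*} [MeasurableSpace Ω] (P : Measure Ω) [IsProbabilityMeasure P] (W : Ω → ℝ)

/-- Generalized inverse (upper quantile) of the cdf of `W`. -/
noncomputable def cfun (t : ℝ) : ℝ := sInf {z | t < FWf P W z}

variable {W}
variable (hW : Measurable W)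
include hW

lemma cfun_nonempty {t : ℝ} (ht1 : t < 1) : {z | t < FWf P W z}.Nonempty :=
  exists_FWf_gt P hW ht1

lemma cfun_bddBelow {t : ℝ} (ht0 : 0 < t) : BddBelow {z | t < FWf P W z} := by
  obtain ⟨z0, hz0⟩ := exists_FWf_lt P hW ht0
  refine ⟨z0, fun y hy => ?_⟩
  by_contra hc
  push_neg at hc
  exact absurd (lt_of_le_of_lt (le_trans hy.le (FWf_mono P hc.le)) hz0) (lt_irrefl t)

lemma cfun_mono {t t' : ℝ} (ht0 : 0 < t) (ht1' : t' < 1) (htt : t ≤ t') :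
    cfun P W t ≤ cfun P W t' := by
  refine csInf_le_csInf (cfun_bddBelow P hW ht0) (cfun_nonempty P hW ht1') ?_
  intro z hz
  exact lt_of_le_of_lt htt hz

lemma cfun_le {t : ℝ} (ht0 : 0 < t) {q : ℝ} (hq : t < FWf P W q) : cfun P W t ≤ q :=
  csInf_le (cfun_bddBelow P hW ht0) hq

lemma FWf_le_of_lt_cfun {t : ℝ} (ht0 : 0 < t) {z : ℝ} (hz : z < cfun P W t) :
    FWf P W z ≤ t := by
  by_contra hc
  push_neg at hc
  exact absurd (cfun_le P hW ht0 hc) (not_le.mpr hz)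

lemma le_FWf_cfun {t : ℝ} (ht0 : 0 < t) (ht1 : t < 1) : t ≤ FWf P W (cfun P W t) := by
  by_contra hc
  push_neg at hc
  have hiInf := measure_le_eq_iInf P hW (cfun P W t)
  rw [FWf_ofReal] at hiInf
  have hlt : ⨅ n : ℕ, P {ω | W ω ≤ cfun P W t + 1 / (n + 1)} < ENNReal.ofReal t := by
    rw [← hiInf]
    exact (ENNReal.ofReal_lt_ofReal_iff ht0).mpr hc
  obtain ⟨n, hn⟩ := iInf_lt_iff.mp hlt
  rw [FWf_ofReal] at hn
  have hFW : FWf P W (cfun P W t + 1 / (n + 1)) < t := (ENNReal.ofReal_lt_ofReal_iff ht0).mp hn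
  have hcs : cfun P W t < cfun P W t + 1 / (n + 1) := by
    have : (0:ℝ) < 1 / (n+1) := by positivity
    linarith
  obtain ⟨y, hy, hylt⟩ := (csInf_lt_iff (cfun_bddBelow P hW ht0) (cfun_nonempty P hW ht1)).mp hcs
  have : FWf P W y ≤ FWf P W (cfun P W t + 1 / (n + 1)) := FWf_mono P hylt.le
  exact absurd (lt_of_lt_of_le hy this) (not_lt.mpr hFW.le)

lemma measure_lt_cfun_le {t : ℝ} (ht0 : 0 < t) :
    P {ω | W ω < cfun P W t} ≤ ENNReal.ofReal t := by
  rw [measure_lt_eq_iSup P hW]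
  refine iSup_le fun n => ?_
  rw [FWf_ofReal]
  refine ENNReal.ofReal_le_ofReal ?_
  refine FWf_le_of_lt_cfun P hW ht0 ?_
  have : (0:ℝ) < 1 / (n+1) := by positivity
  linarith

lemma ofReal_le_measure_le_cfun {t : ℝ} (ht0 : 0 < t) (ht1 : t < 1) :
    ENNReal.ofReal t ≤ P {ω | W ω ≤ cfun P W t} := by
  rw [FWf_ofReal]
  exact ENNReal.ofReal_le_ofReal (le_FWf_cfun P hW ht0 ht1)

/-- The key step: insert a new set between two given ones. -/
lemma step_exists (hat : Atomless P) {t : ℝ} (ht0 : 0 < t) (ht1 : t < 1) {s1 s2 : Set Ω}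
    (h1 : s1 = ∅ ∨ ∃ t1, 0 < t1 ∧ t1 < t ∧ MeasurableSet s1 ∧ P s1 = ENNReal.ofReal t1 ∧
          {ω | W ω < cfun P W t1} ⊆ s1 ∧ s1 ⊆ {ω | W ω ≤ cfun P W t1})
    (h2 : s2 = univ ∨ ∃ t2, t < t2 ∧ t2 < 1 ∧ MeasurableSet s2 ∧ P s2 = ENNReal.ofReal t2 ∧
          {ω | W ω < cfun P W t2} ⊆ s2 ∧ s2 ⊆ {ω | W ω ≤ cfun P W t2})
    (h12 : s1 ⊆ s2) :
    ∃ s, MeasurableSet s ∧ P s = ENNReal.ofReal t ∧ {ω | W ω < cfun P W t} ⊆ s ∧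
      s ⊆ {ω | W ω ≤ cfun P W t} ∧ s1 ⊆ s ∧ s ⊆ s2 := by
  have hs1m : MeasurableSet s1 := by
    rcases h1 with rfl | ⟨t1, _, _, hm, _⟩
    · exact MeasurableSet.empty
    · exact hm
  have hs2m : MeasurableSet s2 := by
    rcases h2 with rfl | ⟨t2, _, _, hm, _⟩
    · exact MeasurableSet.univ
    · exact hm
  -- s1 is below the level t
  have hs1sub : s1 ⊆ {ω | W ω ≤ cfun P W t} := by
    rcases h1 with rfl | ⟨t1, ht10, ht1t, _, _, _, hsub⟩
    · exact empty_subset _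
    · exact hsub.trans (fun ω (h : W ω ≤ _) =>
        le_trans h (cfun_mono P hW ht10 ht1 ht1t.le))
  have hltsub2 : {ω | W ω < cfun P W t} ⊆ s2 := by
    rcases h2 with rfl | ⟨t2, htt2, ht21, _, _, hsub, _⟩
    · exact subset_univ _
    · refine subset_trans ?_ hsub
      intro ω (h : W ω < _)
      exact lt_of_lt_of_le h (cfun_mono P hW ht0 ht21 htt2.le)
  set A := s1 ∪ {ω | W ω < cfun P W t} with hA
  set B := s2 ∩ {ω | W ω ≤ cfun P W t} with hB
  have hAm : MeasurableSet A := hs1m.union (measurable_lt_const hW _)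
  have hBm : MeasurableSet B := hs2m.inter (measurable_le_const hW _)
  have hAB : A ⊆ B := by
    apply union_subset
    · exact subset_inter h12 hs1sub
    · exact subset_inter hltsub2 (fun ω (h : W ω < _) => h.le)
  have hPA : P A ≤ ENNReal.ofReal t := by
    rcases h1 with rfl | ⟨t1, ht10, ht1t, _, hPs1, hlow1, hsub1⟩
    · rw [hA, empty_union]
      exact measure_lt_cfun_le P hW ht0
    · rcases eq_or_lt_of_le (cfun_mono P hW ht10 ht1 ht1t.le) with hceq | hclt
      · have : {ω | W ω < cfun P W t} ⊆ s1 := by rw [← hceq]; exact hlow1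
        rw [hA, union_eq_self_of_subset_right this, hPs1]
        exact ENNReal.ofReal_le_ofReal ht1t.le
      · have : s1 ⊆ {ω | W ω < cfun P W t} := by
          refine hsub1.trans ?_
          intro ω (h : W ω ≤ _)
          exact lt_of_le_of_lt h hclt
        rw [hA, union_eq_self_of_subset_left this]
        exact measure_lt_cfun_le P hW ht0
  have hPB : ENNReal.ofReal t ≤ P B := by
    rcases h2 with rfl | ⟨t2, htt2, ht21, _, hPs2, hlow2, hsub2⟩
    · rw [hB, univ_inter]
      exact ofReal_le_measure_le_cfun P hW ht0 ht1
    · rcases eq_or_lt_of_le (cfun_mono P hW ht0 ht21 htt2.le) with hceq | hclt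
      · have : s2 ⊆ {ω | W ω ≤ cfun P W t} := by rw [hceq]; exact hsub2
        rw [hB, inter_eq_self_of_subset_left this, hPs2]
        exact ENNReal.ofReal_le_ofReal htt2.le
      · have hsub : {ω | W ω ≤ cfun P W t} ⊆ s2 := by
          refine subset_trans ?_ hlow2
          intro ω (h : W ω ≤ _)
          exact lt_of_le_of_lt h hclt
        rw [hB, inter_eq_self_of_subset_right hsub]
        exact ofReal_le_measure_le_cfun P hW ht0 ht1
  -- use sierpinski on B \ A
  have hdm : MeasurableSet (B \ A) := hBm.diff hAm
  have hPd : P (B \ A) = P B - P A := measure_diff hAB hAm.nullMeasurableSet (measure_ne_top P _)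
  have hle : ENNReal.ofReal t - P A ≤ P (B \ A) := by
    rw [hPd]
    exact tsub_le_tsub_right hPB _
  obtain ⟨u, hud, hum, hPu⟩ := sierpinski hat hdm hle
  refine ⟨A ∪ u, hAm.union hum, ?_, ?_, ?_, ?_, ?_⟩
  · have hdisj : Disjoint A u := by
      rw [Set.disjoint_right]
      intro x hxu hxA
      exact (hud hxu).2 hxA
    rw [measure_union hdisj hum, hPu, add_tsub_cancel_of_le hPA]
  · exact subset_union_of_subset_left subset_union_right u
  · apply union_subset
    · apply union_subset hs1sub
      intro ω (h : W ω < _); exact h.le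
    · exact (hud.trans diff_subset).trans (fun ω h => h.2)
  · exact subset_union_of_subset_left subset_union_left u
  · apply union_subset
    · exact union_subset h12 hltsub2
    · intro x hx
      exact ((hud hx).1).1
end Cfun
section Uniform
variable {Ω : Type*} [MeasurableSpace Ω] (P : Measure Ω) [IsProbabilityMeasure P] (W : Ω → ℝ)

/-- An enumeration of the rationals inside `ℝ`. -/
noncomputable def qe (n : ℕ) : ℝ := ((Denumerable.eqv ℚ).symm n : ℚ)

lemma qe_inj : Function.Injective qe := by
  intro a b h
  simp only [qe] at h
  exact (Denumerable.eqv ℚ).symm.injective (Rat.cast_injective h)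

lemma qe_between {a b : ℝ} (h : a < b) : ∃ n, a < qe n ∧ qe n < b := by
  obtain ⟨r, h1, h2⟩ := exists_rat_btwn h
  refine ⟨Denumerable.eqv ℚ r, ?_, ?_⟩ <;> simp [qe, h1, h2]

lemma qe_gt (a : ℝ) : ∃ n, a < qe n := by
  obtain ⟨r, h1⟩ := exists_rat_gt a
  exact ⟨Denumerable.eqv ℚ r, by simp [qe, h1]⟩

/-- The property maintained in the recursive construction of the monotone family. -/
def Psi (n : ℕ) (g : ℕ → Set Ω) (s : Set Ω) : Prop :=
  MeasurableSet s ∧ P s = min (ENNReal.ofReal (qe n)) 1 ∧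
  (qe n ≤ 0 → s = ∅) ∧ (1 ≤ qe n → s = univ) ∧
  (0 < qe n → qe n < 1 → {ω | W ω < cfun P W (qe n)} ⊆ s ∧ s ⊆ {ω | W ω ≤ cfun P W (qe n)}) ∧
  (∀ m, m < n → qe m < qe n → g m ⊆ s) ∧ (∀ m, m < n → qe n < qe m → s ⊆ g m)

open Classical

noncomputable def Ffam : ℕ → ℕ → Set Ω
  | 0 => fun _ => ∅
  | n+1 => Function.update (Ffam n) n (if h : ∃ s, Psi P W n (Ffam n) s then h.choose else ∅)

noncomputable def Sfam (n : ℕ) : Set Ω := Ffam P W (n+1) n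

lemma Ffam_stab : ∀ k n, n < k → Ffam P W k n = Sfam P W n := by
  intro k
  induction k with
  | zero => intro n h; exact absurd h (Nat.not_lt_zero n)
  | succ k ih =>
    intro n h
    rcases Nat.lt_succ_iff_lt_or_eq.mp h with h' | rfl
    · show Function.update (Ffam P W k) k _ n = _
      rw [Function.update_of_ne (by omega)]
      exact ih n h'
    · rfl

variable {P W}
variable (hat : Atomless P) (hW : Measurable W)
include hat hW

lemma Sfam_spec : ∀ n, Psi P W n (Ffam P W n) (Sfam P W n) := by
  intro n
  induction n using Nat.strong_induction_on with
  | _ n IH =>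
  have hmono : ∀ m m', m < n → m' < n → qe m < qe m' → Sfam P W m ⊆ Sfam P W m' := by
    intro m m' hm hm' hq
    rcases lt_trichotomy m m' with h | rfl | h
    · have h6 := (IH m' hm').2.2.2.2.2.1 m h hq
      rwa [Ffam_stab P W m' m h] at h6
    · exact absurd hq (lt_irrefl _)
    · have h7 := (IH m hm).2.2.2.2.2.2 m' h hq
      rwa [Ffam_stab P W m m' h] at h7
  have hex : ∃ s, Psi P W n (Ffam P W n) s := by
    rcases le_or_gt (qe n) 0 with hle | hpos
    · refine ⟨∅, MeasurableSet.empty, ?_, fun _ => rfl, ?_, ?_, ?_, fun _ _ _ => empty_subset _⟩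
      · rw [ENNReal.ofReal_eq_zero.mpr hle]; simp
      · intro h; linarith
      · intro h; linarith
      · intro m hm hq
        rw [Ffam_stab P W n m hm, (IH m hm).2.2.1 (by linarith)]
    rcases le_or_gt 1 (qe n) with hge | hlt1
    · refine ⟨univ, MeasurableSet.univ, ?_, ?_, fun _ => rfl, ?_, fun _ _ _ => subset_univ _, ?_⟩
      · rw [measure_univ, min_eq_right (ENNReal.one_le_ofReal.mpr hge)]
      · intro h; linarith
      · intro h1 h2; linarith
      · intro m hm hq
        rw [Ffam_stab P W n m hm, (IH m hm).2.2.2.1 (by linarith)]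
    -- main case : 0 < qe n < 1
    obtain ⟨s1, hs1all, hs1id⟩ : ∃ s1, (∀ m, m < n → qe m < qe n → Sfam P W m ⊆ s1) ∧
        (s1 = ∅ ∨ ∃ m1, m1 < n ∧ qe m1 < qe n ∧ s1 = Sfam P W m1) := by
      set Afin := (Finset.range n).filter (fun m => qe m < qe n) with hAfin
      rcases Afin.eq_empty_or_nonempty with hA | hA
      · refine ⟨∅, ?_, Or.inl rfl⟩
        intro m hm hq
        have : m ∈ Afin := by
          rw [hAfin, Finset.mem_filter, Finset.mem_range]; exact ⟨hm, hq⟩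
        rw [hA] at this
        exact absurd this (Finset.notMem_empty m)
      · obtain ⟨m1, hmem, hmax⟩ := Finset.exists_max_image Afin qe hA
        rw [hAfin, Finset.mem_filter, Finset.mem_range] at hmem
        refine ⟨Sfam P W m1, ?_, Or.inr ⟨m1, hmem.1, hmem.2, rfl⟩⟩
        intro m hm hq
        have hmA : m ∈ Afin := by
          rw [hAfin, Finset.mem_filter, Finset.mem_range]; exact ⟨hm, hq⟩
        have hle : qe m ≤ qe m1 := hmax m hmA
        rcases eq_or_lt_of_le hle with heq | hlt
        · rw [qe_inj heq]
        · exact hmono m m1 hm hmem.1 hlt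
    obtain ⟨s2, hs2all, hs2id⟩ : ∃ s2, (∀ m, m < n → qe n < qe m → s2 ⊆ Sfam P W m) ∧
        (s2 = univ ∨ ∃ m2, m2 < n ∧ qe n < qe m2 ∧ s2 = Sfam P W m2) := by
      set Bfin := (Finset.range n).filter (fun m => qe n < qe m) with hBfin
      rcases Bfin.eq_empty_or_nonempty with hB | hB
      · refine ⟨univ, ?_, Or.inl rfl⟩
        intro m hm hq
        have : m ∈ Bfin := by
          rw [hBfin, Finset.mem_filter, Finset.mem_range]; exact ⟨hm, hq⟩
        rw [hB] at this
        exact absurd this (Finset.notMem_empty m)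
      · obtain ⟨m2, hmem, hmin⟩ := Finset.exists_min_image Bfin qe hB
        rw [hBfin, Finset.mem_filter, Finset.mem_range] at hmem
        refine ⟨Sfam P W m2, ?_, Or.inr ⟨m2, hmem.1, hmem.2, rfl⟩⟩
        intro m hm hq
        have hmB : m ∈ Bfin := by
          rw [hBfin, Finset.mem_filter, Finset.mem_range]; exact ⟨hm, hq⟩
        have hle : qe m2 ≤ qe m := hmin m hmB
        rcases eq_or_lt_of_le hle with heq | hlt
        · rw [← qe_inj heq]
        · exact hmono m2 m hmem.1 hm hlt
    -- turn these into the hypotheses of `step_exists`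
    have h1 : s1 = ∅ ∨ ∃ t1, 0 < t1 ∧ t1 < qe n ∧ MeasurableSet s1 ∧
        P s1 = ENNReal.ofReal t1 ∧
        {ω | W ω < cfun P W t1} ⊆ s1 ∧ s1 ⊆ {ω | W ω ≤ cfun P W t1} := by
      rcases hs1id with rfl | ⟨m1, hm1, hq1, rfl⟩
      · exact Or.inl rfl
      · rcases le_or_gt (qe m1) 0 with hle | hpos1
        · exact Or.inl ((IH m1 hm1).2.2.1 hle)
        · refine Or.inr ⟨qe m1, hpos1, hq1, (IH m1 hm1).1, ?_, ?_, ?_⟩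
          · rw [(IH m1 hm1).2.1, min_eq_left (ENNReal.ofReal_le_one.mpr (by linarith))]
          · exact ((IH m1 hm1).2.2.2.2.1 hpos1 (by linarith)).1
          · exact ((IH m1 hm1).2.2.2.2.1 hpos1 (by linarith)).2
    have h2 : s2 = univ ∨ ∃ t2, qe n < t2 ∧ t2 < 1 ∧ MeasurableSet s2 ∧
        P s2 = ENNReal.ofReal t2 ∧
        {ω | W ω < cfun P W t2} ⊆ s2 ∧ s2 ⊆ {ω | W ω ≤ cfun P W t2} := by
      rcases hs2id with rfl | ⟨m2, hm2, hq2, rfl⟩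
      · exact Or.inl rfl
      · rcases le_or_gt 1 (qe m2) with hge | hlt2
        · exact Or.inl ((IH m2 hm2).2.2.2.1 hge)
        · refine Or.inr ⟨qe m2, hq2, hlt2, (IH m2 hm2).1, ?_, ?_, ?_⟩
          · rw [(IH m2 hm2).2.1, min_eq_left (ENNReal.ofReal_le_one.mpr (by linarith))]
          · exact ((IH m2 hm2).2.2.2.2.1 (by linarith) hlt2).1
          · exact ((IH m2 hm2).2.2.2.2.1 (by linarith) hlt2).2
    have h12 : s1 ⊆ s2 := by
      rcases hs1id with rfl | ⟨m1, hm1, hq1, rfl⟩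
      · exact empty_subset _
      · rcases hs2id with rfl | ⟨m2, hm2, hq2, rfl⟩
        · exact subset_univ _
        · exact hmono m1 m2 hm1 hm2 (by linarith)
    obtain ⟨s, hsm, hsP, hslow, hshigh, hss1, hss2⟩ :=
      step_exists P hW hat hpos hlt1 h1 h2 h12
    refine ⟨s, hsm, ?_, ?_, ?_, fun _ _ => ⟨hslow, hshigh⟩, ?_, ?_⟩
    · rw [hsP, min_eq_left (ENNReal.ofReal_le_one.mpr (by linarith))]
    · intro h; linarith
    · intro h; linarith
    · intro m hm hq
      rw [Ffam_stab P W n m hm]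
      exact (hs1all m hm hq).trans hss1
    · intro m hm hq
      rw [Ffam_stab P W n m hm]
      exact hss2.trans (hs2all m hm hq)
  have hSn : Sfam P W n = if h : ∃ s, Psi P W n (Ffam P W n) s then h.choose else ∅ := by
    have heq : Ffam P W (n+1) = Function.update (Ffam P W n) n
        (if h : ∃ s, Psi P W n (Ffam P W n) s then h.choose else ∅) := rfl
    unfold Sfam
    rw [heq, Function.update_self]
  rw [hSn, dif_pos hex]
  exact hex.choose_spec

lemma Sfam_mono_global : ∀ m m', qe m < qe m' → Sfam P W m ⊆ Sfam P W m' := by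
  intro m m' hq
  rcases lt_trichotomy m m' with h | rfl | h
  · have h6 := (Sfam_spec hat hW m').2.2.2.2.2.1 m h hq
    rwa [Ffam_stab P W m' m h] at h6
  · exact absurd hq (lt_irrefl _)
  · have h7 := (Sfam_spec hat hW m).2.2.2.2.2.2 m' h hq
    rwa [Ffam_stab P W m m' h] at h7

end Uniform
section Ufacts
variable {Ω : Type*} [MeasurableSpace Ω]

/-- The uniform random variable built from the monotone family `Sfam`. -/
noncomputable def Ufun (P : Measure Ω) (W : Ω → ℝ) (ω : Ω) : ℝ :=
  sInf (qe '' {n | ω ∈ Sfam P W n})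

variable {P : Measure Ω} [IsProbabilityMeasure P] {W : Ω → ℝ}
variable (hat : Atomless P) (hW : Measurable W)
include hat hW

lemma Ufun_nonempty (ω : Ω) : (qe '' {n | ω ∈ Sfam P W n}).Nonempty := by
  obtain ⟨n, hn⟩ := qe_gt 1
  have h : Sfam P W n = univ := (Sfam_spec hat hW n).2.2.2.1 hn.le
  exact ⟨qe n, ⟨n, by simp [h], rfl⟩⟩

lemma Ufun_mem_pos {ω : Ω} {n : ℕ} (hn : ω ∈ Sfam P W n) : 0 < qe n := by
  by_contra hc
  push_neg at hc
  have h : Sfam P W n = ∅ := (Sfam_spec hat hW n).2.2.1 hc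
  rw [h] at hn
  exact hn

lemma Ufun_bddBelow (ω : Ω) : BddBelow (qe '' {n | ω ∈ Sfam P W n}) := by
  refine ⟨0, ?_⟩
  rintro x ⟨n, hn, rfl⟩
  exact (Ufun_mem_pos hat hW hn).le

lemma Ufun_nonneg (ω : Ω) : 0 ≤ Ufun P W ω := by
  refine le_csInf (Ufun_nonempty hat hW ω) ?_
  rintro x ⟨n, hn, rfl⟩
  exact (Ufun_mem_pos hat hW hn).le

lemma Ufun_le_one (ω : Ω) : Ufun P W ω ≤ 1 := by
  by_contra hc
  push_neg at hc
  obtain ⟨n, h1, h2⟩ := qe_between hc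
  have h : Sfam P W n = univ := (Sfam_spec hat hW n).2.2.2.1 h1.le
  have hmem : qe n ∈ qe '' {n | ω ∈ Sfam P W n} := ⟨n, by simp [h], rfl⟩
  exact absurd (csInf_le (Ufun_bddBelow hat hW ω) hmem) (not_le.mpr h2)

lemma Ufun_le_iff (t : ℝ) :
    {ω | Ufun P W ω ≤ t} = ⋂ n : {n : ℕ // t < qe n}, Sfam P W n.1 := by
  ext ω
  simp only [mem_setOf_eq, mem_iInter]
  constructor
  · rintro hU ⟨n, hn⟩
    have hlt : Ufun P W ω < qe n := lt_of_le_of_lt hU hn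
    obtain ⟨x, ⟨m, hm, rfl⟩, hxlt⟩ :=
      (csInf_lt_iff (Ufun_bddBelow hat hW ω) (Ufun_nonempty hat hW ω)).mp hlt
    exact Sfam_mono_global hat hW m n hxlt hm
  · intro h
    by_contra hc
    push_neg at hc
    obtain ⟨n, h1, h2⟩ := qe_between hc
    have hmem : ω ∈ Sfam P W n := h ⟨n, h1⟩
    have : Ufun P W ω ≤ qe n :=
      csInf_le (Ufun_bddBelow hat hW ω) ⟨n, hmem, rfl⟩
    linarith

lemma Ufun_measurable : Measurable (Ufun P W) := by
  apply measurable_of_Iic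
  intro t
  have h : Ufun P W ⁻¹' (Iic t) = {ω | Ufun P W ω ≤ t} := rfl
  rw [h, Ufun_le_iff hat hW]
  exact MeasurableSet.iInter fun n => (Sfam_spec hat hW n.1).1

lemma Ufun_cdf {t : ℝ} (ht1 : t < 1) : P {ω | Ufun P W ω ≤ t} = ENNReal.ofReal t := by
  rcases lt_or_ge t 0 with ht0 | ht0
  · have h : {ω | Ufun P W ω ≤ t} = ∅ := by
      ext ω
      simp only [mem_setOf_eq, mem_empty_iff_false, iff_false, not_le]
      exact lt_of_lt_of_le ht0 (Ufun_nonneg hat hW ω)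
    rw [h, measure_empty, ENNReal.ofReal_eq_zero.mpr ht0.le]
  · rw [Ufun_le_iff hat hW]
    have hnon : Nonempty {n : ℕ // t < qe n} := by
      obtain ⟨n, hn⟩ := qe_gt t
      exact ⟨⟨n, hn⟩⟩
    have hdir : Directed (· ⊇ ·) (fun n : {n : ℕ // t < qe n} => Sfam P W n.1) := by
      rintro ⟨n1, hn1⟩ ⟨n2, hn2⟩
      obtain ⟨m, hm1, hm2⟩ := qe_between (lt_min hn1 hn2)
      refine ⟨⟨m, hm1⟩, ?_, ?_⟩
      · exact Sfam_mono_global hat hW m n1 (lt_of_lt_of_le hm2 (min_le_left _ _))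
      · exact Sfam_mono_global hat hW m n2 (lt_of_lt_of_le hm2 (min_le_right _ _))
    rw [Directed.measure_iInter (fun n => (Sfam_spec hat hW n.1).1.nullMeasurableSet) hdir
      ⟨hnon.some, measure_ne_top P _⟩]
    apply le_antisymm
    · refine ENNReal.le_of_forall_pos_le_add ?_
      intro ε hε _
      obtain ⟨n, hn1, hn2⟩ := qe_between (lt_add_of_pos_right t (by exact_mod_cast hε))
      refine le_trans (iInf_le _ ⟨n, hn1⟩) ?_
      rw [(Sfam_spec hat hW n).2.1]
      refine le_trans (min_le_left _ _) ?_
      calc ENNReal.ofReal (qe n) ≤ ENNReal.ofReal (t + ε) := ENNReal.ofReal_le_ofReal hn2.le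
        _ ≤ ENNReal.ofReal t + ENNReal.ofReal ε := ENNReal.ofReal_add_le
        _ = ENNReal.ofReal t + ε := by rw [ENNReal.ofReal_coe_nnreal]
    · refine le_iInf ?_
      rintro ⟨n, hn⟩
      rw [(Sfam_spec hat hW n).2.1]
      refine le_min (ENNReal.ofReal_le_ofReal hn.le) ?_
      exact ENNReal.ofReal_le_one.mpr ht1.le

lemma Ufun_cdf_all (t : ℝ) : P {ω | Ufun P W ω ≤ t} = ENNReal.ofReal (min t 1) := by
  rcases lt_or_ge t 1 with h | h
  · rw [min_eq_left h.le]; exact Ufun_cdf hat hW h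
  · have huniv : {ω | Ufun P W ω ≤ t} = univ := by
      ext ω
      simp only [mem_setOf_eq, mem_univ, iff_true]
      exact le_trans (Ufun_le_one hat hW ω) h
    rw [huniv, measure_univ, min_eq_right h, ENNReal.ofReal_one]

lemma Ufun_W_le (ω : Ω) (z : ℝ) (hz : z < W ω) : FWf P W z ≤ Ufun P W ω := by
  refine le_csInf (Ufun_nonempty hat hW ω) ?_
  rintro x ⟨n, hn, rfl⟩
  have hpos := Ufun_mem_pos hat hW hn
  rcases le_or_gt 1 (qe n) with hge | hlt
  · exact le_trans (FWf_le_one P z) hge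
  · have hsub := ((Sfam_spec hat hW n).2.2.2.2.1 hpos hlt).2
    have hWc : W ω ≤ cfun P W (qe n) := hsub hn
    exact FWf_le_of_lt_cfun P hW hpos (lt_of_lt_of_le hz hWc)

end Ufacts
section Helpers
variable {Ω : Type*} [MeasurableSpace Ω] {P : Measure Ω} [IsProbabilityMeasure P]

lemma iSup_ofReal_sub_one_div (x : ℝ) :
    ⨆ n : ℕ, ENNReal.ofReal (x - 1 / (n + 1)) = ENNReal.ofReal x := by
  have hmono : Monotone (fun n : ℕ => ENNReal.ofReal (x - 1 / (n + 1))) := by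
    intro a b hab
    exact ENNReal.ofReal_le_ofReal (by linarith [one_div_succ_anti hab])
  have hlim : Tendsto (fun n : ℕ => ENNReal.ofReal (x - 1 / (n + 1))) atTop
      (𝓝 (ENNReal.ofReal x)) := by
    refine (ENNReal.continuous_ofReal.tendsto x).comp ?_
    have h0 : Tendsto (fun n : ℕ => 1 / ((n : ℝ) + 1)) atTop (𝓝 0) :=
      tendsto_one_div_add_atTop_nhds_zero_nat
    have := tendsto_const_nhds (x := x) (f := atTop (α := ℕ)) |>.sub h0
    simpa using this
  exact tendsto_nhds_unique (tendsto_atTop_iSup hmono) hlim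

lemma measure_lt_of_cdf {f : Ω → ℝ}
    (hf : ∀ t : ℝ, t < 1 → P {ω | f ω ≤ t} = ENNReal.ofReal t) {x : ℝ} (hx : x ≤ 1) :
    P {ω | f ω < x} = ENNReal.ofReal x := by
  have hU : {ω | f ω < x} = ⋃ n : ℕ, {ω | f ω ≤ x - 1 / (n + 1)} := by
    ext ω
    simp only [mem_setOf_eq, mem_iUnion]
    constructor
    · intro h
      obtain ⟨n, hn⟩ := exists_nat_one_div_lt (sub_pos.mpr h)
      exact ⟨n, by linarith⟩
    · rintro ⟨n, hn⟩
      have : (0:ℝ) < 1 / (n + 1) := by positivity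
      linarith
  rw [hU, Monotone.measure_iUnion]
  · have : ∀ n : ℕ, P {ω | f ω ≤ x - 1 / (n + 1)} = ENNReal.ofReal (x - 1 / (n + 1)) := by
      intro n
      refine hf _ ?_
      have : (0:ℝ) < 1 / (n + 1) := by positivity
      linarith
    simp_rw [this]
    exact iSup_ofReal_sub_one_div x
  · intro a b hab ω (h : f ω ≤ _)
    refine le_trans h ?_
    linarith [one_div_succ_anti hab]

lemma measure_preimage_eq_of_eq_off_null {f g : Ω → ℝ} {D : Set Ω} (hD : P D = 0)
    (hfg : ∀ ω, ω ∉ D → f ω = g ω) (A : Set ℝ) : P (f ⁻¹' A) = P (g ⁻¹' A) := by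
  have key : ∀ (u v : Ω → ℝ), (∀ ω, ω ∉ D → u ω = v ω) → P (u ⁻¹' A) ≤ P (v ⁻¹' A) := by
    intro u v huv
    have hsub : u ⁻¹' A ⊆ v ⁻¹' A ∪ D := by
      intro x hx
      by_cases hxD : x ∈ D
      · exact Or.inr hxD
      · exact Or.inl (by rw [mem_preimage, ← huv x hxD]; exact hx)
    calc P (u ⁻¹' A) ≤ P (v ⁻¹' A ∪ D) := measure_mono hsub
      _ ≤ P (v ⁻¹' A) + P D := measure_union_le _ _
      _ = P (v ⁻¹' A) := by rw [hD, add_zero]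
  exact le_antisymm (key f g hfg) (key g f (fun ω h => (hfg ω h).symm))

end Helpers

/-- On an atomless probability space, for a random variable `W` with cdf `F_W`
and a cdf `F_V` on `ℝ` with at least one of them continuous, the supremum of `ℙ(W ≤ V)` over all
random variables `V` with cdf `F_V` equals `1 − sup_{z∈ℝ} (F_V(z) − F_W(z))`, and it is
attained. -/
theorem sup_prob_le_eq_and_attained {Ω : Type*} [MeasurableSpace Ω]
    (P : Measure Ω) [IsProbabilityMeasure P] (hatomless : Atomless P)
    (W : Ω → ℝ) (hW : Measurable W)
    (FW : ℝ → ℝ) (hFW : FW = fun z => (P {ω | W ω ≤ z}).toReal)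
    (FV : ℝ → ℝ) (hFVmono : Monotone FV)
    (hFVrc : ∀ x : ℝ, Tendsto FV (𝓝[>] x) (𝓝 (FV x)))
    (hFVbot : Tendsto FV atBot (𝓝 0)) (hFVtop : Tendsto FV atTop (𝓝 1))
    (hcont : Continuous FW ∨ Continuous FV) :
    IsGreatest
      {p : ℝ | ∃ V : Ω → ℝ, Measurable V ∧ (∀ z : ℝ, (P {ω | V ω ≤ z}).toReal = FV z) ∧
        p = (P {ω | W ω ≤ V ω}).toReal}
      (1 - ⨆ z : ℝ, (FV z - FW z)) := by

  classical
  have hFW' : ∀ z, FW z = (P {ω | W ω ≤ z}).toReal := fun z => by rw [hFW]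
  have hFW'' : ∀ z, FW z = FWf P W z := fun z => hFW' z
  -- basic facts about FV
  have hFV0 : ∀ z, 0 ≤ FV z := by
    intro z
    refine le_of_tendsto hFVbot ?_
    filter_upwards [eventually_le_atBot z] with y hy
    exact hFVmono hy
  have hFV1 : ∀ z, FV z ≤ 1 := by
    intro z
    refine ge_of_tendsto hFVtop ?_
    filter_upwards [eventually_ge_atTop z] with y hy
    exact hFVmono hy
  set α := ⨆ z : ℝ, (FV z - FW z) with hα
  have hbdd : BddAbove (Set.range fun z => FV z - FW z) := by
    refine ⟨1, ?_⟩
    rintro x ⟨z, rfl⟩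
    have h1 := hFV1 z
    have h2 : 0 ≤ FW z := by rw [hFW'']; exact FWf_nonneg P z
    simp only
    linarith
  have hαle : ∀ z, FV z - FW z ≤ α := fun z => le_ciSup hbdd z
  have hα1 : α ≤ 1 := by
    refine ciSup_le fun z => ?_
    have h1 := hFV1 z
    have h2 : 0 ≤ FW z := by rw [hFW'']; exact FWf_nonneg P z
    linarith
  have hα0 : 0 ≤ α := by
    have hWtend : Tendsto (fun n : ℕ => FWf P W (n : ℝ)) atTop (𝓝 1) := by
      have hUn : (univ : Set Ω) = ⋃ n : ℕ, {ω | W ω ≤ (n : ℝ)} := by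
        ext ω
        simp only [mem_univ, mem_iUnion, mem_setOf_eq, true_iff]
        obtain ⟨n, hn⟩ := exists_nat_gt (W ω)
        exact ⟨n, hn.le⟩
      have hmono : Monotone (fun n : ℕ => {ω | W ω ≤ (n : ℝ)}) := by
        intro a b hab ω (h : W ω ≤ _)
        exact le_trans h (Nat.cast_le.mpr hab)
      have hsup : (⨆ n : ℕ, P {ω | W ω ≤ (n : ℝ)}) = 1 := by
        rw [← hmono.measure_iUnion, ← hUn, measure_univ]
      have htend : Tendsto (fun n : ℕ => P {ω | W ω ≤ (n : ℝ)}) atTop (𝓝 1) := by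
        rw [← hsup]
        exact tendsto_atTop_iSup (fun a b hab => measure_mono (hmono hab))
      have := (ENNReal.tendsto_toReal ENNReal.one_ne_top).comp htend
      simpa [Function.comp_def, FWf] using this
    have hVtend : Tendsto (fun n : ℕ => FV (n : ℝ)) atTop (𝓝 1) :=
      hFVtop.comp tendsto_natCast_atTop_atTop
    have hdiff : Tendsto (fun n : ℕ => FV (n : ℝ) - FWf P W (n : ℝ)) atTop (𝓝 0) := by
      have := hVtend.sub hWtend
      simpa using this
    refine le_of_tendsto hdiff ?_
    refine Eventually.of_forall fun n => ?_
    rw [← hFW'' (n : ℝ)]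
    exact hαle _
  -- the upper bound, for an arbitrary V with cdf FV
  have hub : ∀ V : Ω → ℝ, Measurable V → (∀ z, (P {ω | V ω ≤ z}).toReal = FV z) →
      (P {ω | W ω ≤ V ω}).toReal ≤ 1 - α := by
    intro V hVm hVc
    have hWV : MeasurableSet {ω | W ω ≤ V ω} := measurableSet_le hW hVm
    have hkey : ∀ z, FV z - FW z ≤ 1 - (P {ω | W ω ≤ V ω}).toReal := by
      intro z
      have hsub : {ω | V ω ≤ z} ⊆ {ω | W ω ≤ z} ∪ {ω | W ω ≤ V ω}ᶜ := by
        intro ω h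
        by_cases hw : W ω ≤ z
        · exact Or.inl hw
        · push_neg at hw
          refine Or.inr ?_
          simp only [mem_compl_iff, mem_setOf_eq, not_le]
          exact lt_of_le_of_lt h hw
      have hm : P {ω | V ω ≤ z} ≤ P {ω | W ω ≤ z} + P ({ω | W ω ≤ V ω}ᶜ) :=
        le_trans (measure_mono hsub) (measure_union_le _ _)
      have hcpl : P ({ω | W ω ≤ V ω}ᶜ) = 1 - P {ω | W ω ≤ V ω} := by
        rw [measure_compl hWV (measure_ne_top P _), measure_univ]
      rw [hcpl] at hm
      have hfin1 : P {ω | W ω ≤ z} ≠ ∞ := measure_ne_top P _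
      have hfin2 : (1 : ℝ≥0∞) - P {ω | W ω ≤ V ω} ≠ ∞ :=
        ne_top_of_le_ne_top ENNReal.one_ne_top tsub_le_self
      have h1 : (P {ω | V ω ≤ z}).toReal ≤
          (P {ω | W ω ≤ z} + (1 - P {ω | W ω ≤ V ω})).toReal := by
        refine ENNReal.toReal_mono ?_ hm
        exact ENNReal.add_ne_top.mpr ⟨hfin1, hfin2⟩
      rw [ENNReal.toReal_add hfin1 hfin2] at h1
      have h2 : ((1 : ℝ≥0∞) - P {ω | W ω ≤ V ω}).toReal = 1 - (P {ω | W ω ≤ V ω}).toReal := by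
        rw [ENNReal.toReal_sub_of_le prob_le_one ENNReal.one_ne_top]
        simp
      rw [h2, hVc z] at h1
      have h3 := hFW' z
      linarith
    have hsle : α ≤ 1 - (P {ω | W ω ≤ V ω}).toReal := ciSup_le hkey
    linarith
  -- the uniform random variable
  set U := Ufun P W with hUdef
  have hUmeas : Measurable U := Ufun_measurable hatomless hW
  have hUcdf : ∀ t : ℝ, t < 1 → P {ω | U ω ≤ t} = ENNReal.ofReal t :=
    fun t ht => Ufun_cdf hatomless hW ht
  have hUall : ∀ t : ℝ, P {ω | U ω ≤ t} = ENNReal.ofReal (min t 1) :=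
    fun t => Ufun_cdf_all hatomless hW t
  have hU0 : ∀ ω, 0 ≤ U ω := Ufun_nonneg hatomless hW
  have hU1 : ∀ ω, U ω ≤ 1 := Ufun_le_one hatomless hW
  have hUW : ∀ ω z, z < W ω → FWf P W z ≤ U ω := Ufun_W_le hatomless hW
  -- the shifted uniform
  set U' := fun ω => if U ω ≤ 1 - α then U ω + α else U ω + α - 1 with hU'def
  have hU'meas : Measurable U' := by
    refine Measurable.ite ?_ (hUmeas.add_const α) ((hUmeas.add_const α).sub measurable_const)
    exact hUmeas measurableSet_Iic
  have hU'0 : ∀ ω, 0 ≤ U' ω := by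
    intro ω
    simp only [hU'def]
    split_ifs with h
    · linarith [hU0 ω]
    · push_neg at h
      linarith
  have hU'le1 : ∀ ω, U' ω ≤ 1 := by
    intro ω
    simp only [hU'def]
    split_ifs with h
    · linarith
    · linarith [hU1 ω]
  have hU'set : ∀ t : ℝ, 0 ≤ t → t < 1 → {ω | U' ω ≤ t} =
      {ω | U ω ≤ t - α} ∪ ({ω | U ω ≤ 1 + t - α} \ {ω | U ω ≤ 1 - α}) := by
    intro t ht0 ht1
    ext ω
    simp only [hU'def, mem_setOf_eq, mem_union, mem_diff]
    by_cases h : U ω ≤ 1 - α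
    · rw [if_pos h]
      constructor
      · intro hh; exact Or.inl (by linarith)
      · rintro (h1 | ⟨h1, h2⟩)
        · linarith
        · exact (h2 h).elim
    · rw [if_neg h]
      push_neg at h
      constructor
      · intro hh
        exact Or.inr ⟨by linarith, by intro hc; linarith⟩
      · rintro (h1 | ⟨h1, h2⟩)
        · linarith
        · linarith
  have hU'cdf : ∀ t : ℝ, t < 1 → P {ω | U' ω ≤ t} = ENNReal.ofReal t := by
    intro t ht1
    rcases lt_or_ge t 0 with ht0 | ht0
    · have hemp : {ω | U' ω ≤ t} = ∅ := by
        ext ω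
        simp only [mem_setOf_eq, mem_empty_iff_false, iff_false, not_le]
        exact lt_of_lt_of_le ht0 (hU'0 ω)
      rw [hemp, measure_empty, ENNReal.ofReal_eq_zero.mpr ht0.le]
    · rw [hU'set t ht0 ht1]
      have hmeasle : ∀ x : ℝ, MeasurableSet {ω | U ω ≤ x} := fun x => hUmeas measurableSet_Iic
      have hd : Disjoint {ω | U ω ≤ t - α}
          ({ω | U ω ≤ 1 + t - α} \ {ω | U ω ≤ 1 - α}) := by
        rw [Set.disjoint_left]
        rintro x hx ⟨h1, h2⟩
        simp only [mem_setOf_eq] at hx h2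
        exact h2 (by linarith)
      have hsub2 : {ω | U ω ≤ 1 - α} ⊆ {ω | U ω ≤ 1 + t - α} := by
        intro ω (h : U ω ≤ _)
        simp only [mem_setOf_eq]
        linarith
      have hdiffP : P ({ω | U ω ≤ 1 + t - α} \ {ω | U ω ≤ 1 - α}) =
          P {ω | U ω ≤ 1 + t - α} - P {ω | U ω ≤ 1 - α} :=
        measure_diff hsub2 (hmeasle _).nullMeasurableSet (measure_ne_top P _)
      rw [measure_union hd ((hmeasle _).diff (hmeasle _)), hdiffP,
        hUall (t - α), hUall (1 + t - α), hUall (1 - α),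
        min_eq_left (by linarith : t - α ≤ 1), min_eq_left (by linarith : (1:ℝ) - α ≤ 1)]
      rcases le_or_gt α t with hc | hc
      · rw [min_eq_right (by linarith : (1:ℝ) ≤ 1 + t - α)]
        have e1 : ENNReal.ofReal 1 - ENNReal.ofReal (1 - α) = ENNReal.ofReal α := by
          rw [← ENNReal.ofReal_sub 1 (by linarith : (0:ℝ) ≤ 1 - α)]
          congr 1
          ring
        rw [e1, ← ENNReal.ofReal_add (by linarith : (0:ℝ) ≤ t - α) hα0]
        congr 1
        ring
      · rw [min_eq_left (by linarith : 1 + t - α ≤ 1)]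
        have e2 : ENNReal.ofReal (1 + t - α) - ENNReal.ofReal (1 - α) = ENNReal.ofReal t := by
          rw [← ENNReal.ofReal_sub _ (by linarith : (0:ℝ) ≤ 1 - α)]
          congr 1
          ring
        rw [ENNReal.ofReal_eq_zero.mpr (by linarith : t - α ≤ 0), zero_add, e2]
  have hU'cdfle : ∀ t : ℝ, 0 ≤ t → t ≤ 1 → P {ω | U' ω ≤ t} = ENNReal.ofReal t := by
    intro t ht0 ht1
    rcases lt_or_eq_of_le ht1 with h | rfl
    · exact hU'cdf t h
    · have huniv : {ω | U' ω ≤ (1:ℝ)} = univ := by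
        ext ω
        simp only [mem_setOf_eq, mem_univ, iff_true]
        exact hU'le1 ω
      rw [huniv, measure_univ, ENNReal.ofReal_one]
  have hU'lt : ∀ x : ℝ, x ≤ 1 → P {ω | U' ω < x} = ENNReal.ofReal x :=
    fun x hx => measure_lt_of_cdf hU'cdf hx
  -- the null set where U' is degenerate
  have hD : P {ω | ¬ (0 < U' ω ∧ U' ω < 1)} = 0 := by
    have hsub : {ω | ¬ (0 < U' ω ∧ U' ω < 1)} ⊆ {ω | U' ω ≤ 0} ∪ {ω | U' ω < 1}ᶜ := by
      intro ω h
      simp only [mem_setOf_eq, not_and_or, not_lt] at h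
      rcases h with h | h
      · exact Or.inl h
      · exact Or.inr (by simp only [mem_compl_iff, mem_setOf_eq, not_lt]; exact h)
    have h1 : P {ω | U' ω ≤ (0:ℝ)} = 0 := by
      rw [hU'cdf 0 one_pos]; simp
    have h2 : P ({ω | U' ω < (1:ℝ)}ᶜ) = 0 := by
      have hms : MeasurableSet {ω | U' ω < (1:ℝ)} := hU'meas measurableSet_Iio
      rw [measure_compl hms (measure_ne_top P _), hU'lt 1 le_rfl]
      simp
    refine le_antisymm ?_ zero_le
    calc P {ω | ¬ (0 < U' ω ∧ U' ω < 1)} ≤ P ({ω | U' ω ≤ 0} ∪ {ω | U' ω < 1}ᶜ) :=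
          measure_mono hsub
      _ ≤ P {ω | U' ω ≤ (0:ℝ)} + P ({ω | U' ω < (1:ℝ)}ᶜ) := measure_union_le _ _
      _ = 0 := by rw [h1, h2, add_zero]
  -- the version of U' valued in (0,1)
  set U'' := fun ω => if 0 < U' ω ∧ U' ω < 1 then U' ω else (1/2 : ℝ) with hU''def
  have hU''meas : Measurable U'' := by
    refine Measurable.ite ?_ hU'meas measurable_const
    exact (hU'meas measurableSet_Ioi).inter (hU'meas measurableSet_Iio)
  have hU''mem : ∀ ω, 0 < U'' ω ∧ U'' ω < 1 := by
    intro ω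
    simp only [hU''def]
    split_ifs with h
    · exact h
    · norm_num
  have hPeq : ∀ A : Set ℝ, P (U'' ⁻¹' A) = P (U' ⁻¹' A) := by
    refine fun A => measure_preimage_eq_of_eq_off_null hD (fun ω h => ?_) A
    simp only [mem_setOf_eq, not_not] at h
    simp only [hU''def]
    rw [if_pos h]
  -- the quantile function of FV
  set Qp := fun p : ℝ => sInf {z | p < FV z} with hQpdef
  have hQne : ∀ {p : ℝ}, p < 1 → {z | p < FV z}.Nonempty := by
    intro p hp
    obtain ⟨y, hy⟩ := (hFVtop.eventually_const_lt hp).exists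
    exact ⟨y, hy⟩
  have hQbdd : ∀ {p : ℝ}, 0 < p → BddBelow {z | p < FV z} := by
    intro p hp
    obtain ⟨z0, hz0⟩ := (hFVbot.eventually_lt_const hp).exists
    refine ⟨z0, fun y hy => ?_⟩
    by_contra hcon
    push_neg at hcon
    exact absurd (lt_of_le_of_lt (hFVmono hcon.le) hz0) (not_lt.mpr hy.le)
  have hQmono : ∀ p q : ℝ, 0 < p → p ≤ q → q < 1 → Qp p ≤ Qp q := by
    intro p q hp hpq hq
    exact csInf_le_csInf (hQbdd hp) (hQne hq) (fun z hz => lt_of_le_of_lt hpq hz)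
  -- V and its measurability
  set V := fun ω => Qp (U'' ω) with hVdef
  have hVmeas : Measurable V := by
    apply measurable_of_Iic
    intro a
    have hpre : V ⁻¹' (Iic a) = U'' ⁻¹' {p | (0 < p ∧ p < 1) ∧ Qp p ≤ a} := by
      ext ω
      simp only [hVdef, mem_preimage, mem_Iic, mem_setOf_eq]
      exact ⟨fun h => ⟨hU''mem ω, h⟩, fun h => h.2⟩
    rw [hpre]
    refine hU''meas ?_
    refine Set.OrdConnected.measurableSet ⟨fun x hx y hy w hw => ?_⟩
    refine ⟨⟨lt_of_lt_of_le hx.1.1 hw.1, lt_of_le_of_lt hw.2 hy.1.2⟩, ?_⟩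
    exact le_trans (hQmono w y (lt_of_lt_of_le hx.1.1 hw.1) hw.2 hy.1.2) hy.2
  -- cdf of V
  have hVcdf : ∀ z, P {ω | V ω ≤ z} = ENNReal.ofReal (FV z) := by
    intro z
    have hclaim1 : U'' ⁻¹' (Iio (FV z)) ⊆ {ω | V ω ≤ z} := by
      intro ω hω
      simp only [mem_preimage, mem_Iio] at hω
      exact csInf_le (hQbdd (hU''mem ω).1) hω
    have hclaim2 : {ω | V ω ≤ z} ⊆ U'' ⁻¹' (Iic (FV z)) := by
      intro ω hω
      simp only [mem_setOf_eq] at hω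
      simp only [mem_preimage, mem_Iic]
      by_contra hcon
      push_neg at hcon
      obtain ⟨h0, h1⟩ := hU''mem ω
      have hev : ∀ᶠ y in 𝓝[>] z, FV y < U'' ω := (hFVrc z).eventually_lt_const hcon
      obtain ⟨y0, hy0lt, hy0mem⟩ := (hev.and eventually_mem_nhdsWithin).exists
      have hlb : ∀ y ∈ {w | U'' ω < FV w}, y0 ≤ y := by
        intro y hy
        by_contra hcy
        push_neg at hcy
        exact absurd (lt_of_le_of_lt (hFVmono hcy.le) hy0lt) (not_lt.mpr hy.le)
      have hge : y0 ≤ Qp (U'' ω) := le_csInf (hQne h1) hlb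
      have : y0 ≤ z := le_trans hge hω
      exact absurd this (not_le.mpr hy0mem)
    refine le_antisymm ?_ ?_
    · calc P {ω | V ω ≤ z} ≤ P (U'' ⁻¹' (Iic (FV z))) := measure_mono hclaim2
        _ = P (U' ⁻¹' (Iic (FV z))) := hPeq _
        _ = ENNReal.ofReal (FV z) := hU'cdfle _ (hFV0 z) (hFV1 z)
    · calc ENNReal.ofReal (FV z) = P {ω | U' ω < FV z} := (hU'lt _ (hFV1 z)).symm
        _ = P (U' ⁻¹' (Iio (FV z))) := rfl
        _ = P (U'' ⁻¹' (Iio (FV z))) := (hPeq _).symm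
        _ ≤ P {ω | V ω ≤ z} := measure_mono hclaim1
  -- V succeeds with probability at least 1 - α
  have hsucc : {ω | U ω < 1 - α} \ {ω | ¬ 0 < U' ω} ⊆ {ω | W ω ≤ V ω} := by
    rintro ω ⟨hUa, hUb⟩
    simp only [mem_setOf_eq] at hUa
    simp only [mem_setOf_eq, not_not] at hUb
    have hUle : U ω ≤ 1 - α := hUa.le
    have hU'eq : U' ω = U ω + α := by simp only [hU'def]; rw [if_pos hUle]
    have hU'lt1 : U' ω < 1 := by rw [hU'eq]; linarith
    have hU''eq : U'' ω = U' ω := by simp only [hU''def]; rw [if_pos ⟨hUb, hU'lt1⟩]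
    simp only [mem_setOf_eq, hVdef]
    refine le_csInf (hQne (by rw [hU''eq]; exact hU'lt1)) ?_
    intro y hy
    simp only [mem_setOf_eq] at hy
    by_contra hcy
    push_neg at hcy
    have h1 : FWf P W y ≤ U ω := hUW ω y hcy
    have h2 : FV y - FW y ≤ α := hαle y
    rw [hFW'' y] at h2
    rw [hU''eq, hU'eq] at hy
    linarith
  have hlow : ENNReal.ofReal (1 - α) ≤ P {ω | W ω ≤ V ω} := by
    refine le_trans ?_ (measure_mono hsucc)
    have hn : P {ω | ¬ 0 < U' ω} = 0 := by
      have hset : {ω | ¬ 0 < U' ω} = {ω | U' ω ≤ 0} := by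
        ext ω; simp [not_lt]
      rw [hset, hU'cdf 0 one_pos]
      simp
    rw [measure_diff_null hn]
    exact le_of_eq (measure_lt_of_cdf hUcdf (by linarith : 1 - α ≤ 1)).symm
  -- assemble
  have hVc : ∀ z, (P {ω | V ω ≤ z}).toReal = FV z := by
    intro z
    rw [hVcdf z]
    exact ENNReal.toReal_ofReal (hFV0 z)
  have hge : 1 - α ≤ (P {ω | W ω ≤ V ω}).toReal := by
    have h := ENNReal.toReal_mono (measure_ne_top P _) hlow
    rwa [ENNReal.toReal_ofReal (by linarith : (0:ℝ) ≤ 1 - α)] at h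
  have hfinal : (P {ω | W ω ≤ V ω}).toReal = 1 - α :=
    le_antisymm (hub V hVmeas hVc) hge
  constructor
  · exact ⟨V, hVmeas, hVc, hfinal.symm⟩
  · rintro p ⟨V0, hV0m, hV0c, rfl⟩
    exact hub V0 hV0m hV0c
end

section
/- Let (Ω, 𝔽, ℙ) be an atomless probability space, let W be a real-valued random variable with cdf F_W, and let F_V be a cdf on ℝ such that at least one of F_W, F_V is continuous. Then inf { ℙ(W > V) : V a random variable on (Ω, 𝔽, ℙ) with cdf F_V } = sup_{z∈ℝ} (F_V(z) − F_W(z)). -/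
open MeasureTheory Filter Topology

open Set
open scoped ENNReal

section Sierpinski
variable {Ω : Type*} [MeasurableSpace Ω] {P : Measure Ω}


variable {Ω : Type*} [MeasurableSpace Ω] {P : Measure Ω}

lemma Atomless.exists_le_half [IsFiniteMeasure P] (hP : Atomless P) {s : Set Ω}
    (hs : MeasurableSet s) (h : 0 < P s) :
    ∃ t, t ⊆ s ∧ MeasurableSet t ∧ 0 < P t ∧ P t ≤ P s / 2 := by
  obtain ⟨t, hts, htm, ht0, htlt⟩ := hP s hs h
  rcases le_or_gt (P t) (P s / 2) with h2 | h2
  · exact ⟨t, hts, htm, ht0, h2⟩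
  · have hdiff : P (s \ t) = P s - P t := measure_diff hts htm.nullMeasurableSet (measure_ne_top P t)
    refine ⟨s \ t, diff_subset, hs.diff htm, ?_, ?_⟩
    · rw [hdiff]; exact tsub_pos_iff_lt.mpr htlt
    · rw [hdiff]
      calc P s - P t ≤ P s - P s / 2 := tsub_le_tsub_left h2.le _
        _ = P s / 2 := ENNReal.sub_half (measure_ne_top P s)

lemma Atomless.exists_le_eps [IsFiniteMeasure P] (hP : Atomless P) {s : Set Ω}
    (hs : MeasurableSet s) (h : 0 < P s) {ε : ℝ≥0∞} (hε : 0 < ε) :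
    ∃ t, t ⊆ s ∧ MeasurableSet t ∧ 0 < P t ∧ P t ≤ ε := by
  have key : ∀ n : ℕ, ∃ t, t ⊆ s ∧ MeasurableSet t ∧ 0 < P t ∧ P t ≤ P s / 2 ^ n := by
    intro n
    induction n with
    | zero => exact ⟨s, Subset.rfl, hs, h, by simp⟩
    | succ n ih =>
      obtain ⟨t, hts, htm, ht0, hle⟩ := ih
      obtain ⟨u, hut, hum, hu0, hule⟩ := hP.exists_le_half htm ht0
      refine ⟨u, hut.trans hts, hum, hu0, hule.trans ?_⟩
      rw [pow_succ]
      rw [show P s / (2 ^ n * 2) = P s / 2 ^ n / 2 from by rw [ENNReal.div_eq_inv_mul, ENNReal.div_eq_inv_mul, ENNReal.div_eq_inv_mul, ENNReal.mul_inv (by simp) (by simp)]; ring]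
      exact ENNReal.div_le_div_right hle 2

  have htend : Tendsto (fun n : ℕ => P s / 2 ^ n) atTop (𝓝 0) := by
    have h1 : Tendsto (fun n : ℕ => ((1:ℝ≥0∞)/2) ^ n) atTop (𝓝 0) :=
      ENNReal.tendsto_pow_atTop_nhds_zero_of_lt_one (by norm_num)
    have h2 := ENNReal.Tendsto.const_mul h1 (Or.inr (measure_ne_top P s))
    simp only [mul_zero] at h2
    convert h2 using 2 with n
    rw [ENNReal.div_eq_inv_mul, one_div, ENNReal.inv_pow, mul_comm]
  obtain ⟨n, hn⟩ : ∃ n : ℕ, P s / 2 ^ n ≤ ε := by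
    rcases (htend.eventually_le_const hε |>.exists) with ⟨n, hn⟩
    exact ⟨n, hn⟩
  obtain ⟨t, hts, htm, ht0, hle⟩ := key n
  exact ⟨t, hts, htm, ht0, hle.trans hn⟩

lemma Atomless.exists_subset_measure_eq [IsFiniteMeasure P] (hP : Atomless P) {s : Set Ω}
    (hs : MeasurableSet s) {r : ℝ≥0∞} (hr : r ≤ P s) :
    ∃ t, t ⊆ s ∧ MeasurableSet t ∧ P t = r := by
  classical
  set good : Set (Set Ω) := {t | t ⊆ s ∧ MeasurableSet t ∧ P t ≤ r} with hgood
  have hgood_empty : (∅ : Set Ω) ∈ good := ⟨empty_subset s, MeasurableSet.empty, by simp⟩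
  have key : ∀ (n : ℕ), ∀ t ∈ good, ∃ u ∈ good, t ⊆ u ∧
      ∀ v ∈ good, t ⊆ v → P v ≤ P u + ((n:ℝ≥0∞)+1)⁻¹ := by
    intro n t ht
    set α : ℝ≥0∞ := ⨆ (v : {v // v ∈ good ∧ t ⊆ v}), P v.1 with hα
    have hαle : ∀ v ∈ good, t ⊆ v → P v ≤ α := fun v hv htv =>
      le_iSup (fun (v : {v // v ∈ good ∧ t ⊆ v}) => P v.1) ⟨v, hv, htv⟩
    have hεpos : (0:ℝ≥0∞) < ((n:ℝ≥0∞)+1)⁻¹ := by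
      simp [ENNReal.inv_pos]
    rcases eq_or_lt_of_le (zero_le : (0:ℝ≥0∞) ≤ α) with hα0 | hα0
    · exact ⟨t, ht, Subset.rfl, fun v hv htv => le_trans (hαle v hv htv) (by rw [← hα0]; simp)⟩
    · have hαtop : α ≠ ∞ := by
        refine ne_top_of_le_ne_top (measure_ne_top P s) (iSup_le fun v => measure_mono v.2.1.1)
      have : α - ((n:ℝ≥0∞)+1)⁻¹ < α := ENNReal.sub_lt_self hαtop hα0.ne' hεpos.ne'
      rw [hα, lt_iSup_iff] at this
      obtain ⟨⟨u, hu, htu⟩, hlt⟩ := this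
      refine ⟨u, hu, htu, fun v hv htv => ?_⟩
      have h1 : α ≤ P u + ((n:ℝ≥0∞)+1)⁻¹ := by
        rw [← tsub_le_iff_right]; exact hlt.le
      exact le_trans (hαle v hv htv) h1
  choose! step hstep₁ hstep₂ hstep₃ using key
  let f : ℕ → Set Ω := fun n => Nat.rec ∅ (fun n t => step n t) n
  have hf0 : f 0 = ∅ := rfl
  have hfs : ∀ n, f (n+1) = step n (f n) := fun n => rfl
  have hfgood : ∀ n, f n ∈ good := by
    intro n; induction n with
    | zero => exact hgood_empty
    | succ n ih => rw [hfs]; exact hstep₁ n _ ih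
  have hfmono : Monotone f := by
    apply monotone_nat_of_le_succ
    intro n; rw [hfs]; exact hstep₂ n _ (hfgood n)
  set T : Set Ω := ⋃ n, f n with hT
  have hTmeas : MeasurableSet T := MeasurableSet.iUnion fun n => (hfgood n).2.1
  have hTsub : T ⊆ s := iUnion_subset fun n => (hfgood n).1
  have hTP : P T = ⨆ n, P (f n) := hfmono.measure_iUnion
  have hTr : P T ≤ r := by rw [hTP]; exact iSup_le fun n => (hfgood n).2.2
  refine ⟨T, hTsub, hTmeas, ?_⟩
  rcases eq_or_lt_of_le hTr with h | h
  · exact h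
  · exfalso
    have hsT : 0 < P (s \ T) := by
      have : P (s \ T) = P s - P T := measure_diff hTsub hTmeas.nullMeasurableSet (measure_ne_top P T)
      rw [this]; exact tsub_pos_iff_lt.mpr (lt_of_lt_of_le h hr)
    obtain ⟨u, hus, hum, hu0, hule⟩ := hP.exists_le_eps (hs.diff hTmeas) hsT
      (tsub_pos_iff_lt.mpr h : (0:ℝ≥0∞) < r - P T)
    set v : Set Ω := T ∪ u with hv
    have hdisj : Disjoint T u := disjoint_of_subset_right hus disjoint_sdiff_right
    have hvP : P v = P T + P u := measure_union hdisj hum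
    have hvgood : v ∈ good := by
      refine ⟨union_subset hTsub (hus.trans diff_subset), hTmeas.union hum, ?_⟩
      rw [hvP]
      calc P T + P u ≤ P T + (r - P T) := add_le_add_right hule _
        _ = r := add_tsub_cancel_of_le hTr
    have hvle : ∀ n : ℕ, P v ≤ P T + ((n:ℝ≥0∞)+1)⁻¹ := by
      intro n
      have h1 : P v ≤ P (f (n+1)) + ((n:ℝ≥0∞)+1)⁻¹ := by
        rw [hfs]
        exact hstep₃ n (f n) (hfgood n) v hvgood ((subset_iUnion f n).trans subset_union_left)
      refine h1.trans (add_le_add_left ?_ _)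
      exact le_trans (le_iSup (fun n => P (f n)) (n+1)) hTP.ge
    have hlim : Tendsto (fun n : ℕ => P T + ((n:ℝ≥0∞)+1)⁻¹) atTop (𝓝 (P T)) := by
      have h0 : Tendsto (fun n : ℕ => ((n:ℝ≥0∞)+1)⁻¹) atTop (𝓝 0) := by
        have := ENNReal.tendsto_inv_nat_nhds_zero.comp (tendsto_add_atTop_nat 1)
        refine this.congr (fun n => by simp)
      have := h0.const_add (P T)
      simpa using this
    have : P v ≤ P T := ge_of_tendsto hlim (Eventually.of_forall hvle)
    rw [hvP] at this
    have : P u = 0 := by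
      have hPT : P T ≠ ∞ := measure_ne_top P T
      exact le_antisymm (ENNReal.le_of_add_le_add_left hPT (by simpa using this)) zero_le
    exact hu0.ne' this

end Sierpinski

section DyadicApprox
lemma dyadic_approx {x ε : ℝ} (hx0 : 0 < x) (hx1 : x ≤ 1) (hε : 0 < ε) :
    ∃ n k : ℕ, (k:ℝ)/2^n < x ∧ x - ε < (k:ℝ)/2^n := by
  obtain ⟨n, hn⟩ : ∃ n : ℕ, (1:ℝ)/2^n < min ε x := by
    obtain ⟨n, hn⟩ := pow_unbounded_of_one_lt (1 / min ε x) (by norm_num : (1:ℝ) < 2)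
    refine ⟨n, ?_⟩
    rw [div_lt_iff₀ (by positivity)]
    rw [div_lt_iff₀ (by positivity)] at hn
    have hmin : 0 < min ε x := lt_min hε hx0
    nlinarith [min_le_left ε x, min_le_right ε x]
  have h2n : (0:ℝ) < 2^n := by positivity
  set K := Nat.ceil (x * 2^n) with hK
  have hK1 : 1 ≤ K := Nat.one_le_ceil_iff.mpr (by positivity)
  have hKlt : (K:ℝ) - 1 < x * 2^n := by
    have := Nat.ceil_lt_add_one (by positivity : (0:ℝ) ≤ x * 2^n)
    linarith [Nat.le_ceil (x * 2^n)]
  have hKge : x * 2^n ≤ (K:ℝ) := Nat.le_ceil _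
  refine ⟨n, K - 1, ?_, ?_⟩
  · rw [div_lt_iff₀ h2n]
    have : ((K - 1 : ℕ) : ℝ) = (K:ℝ) - 1 := by
      rw [Nat.cast_sub hK1]; norm_num
    rw [this]
    have hx2n : (1:ℝ) ≤ x * 2^n := by
      have := hn; rw [div_lt_iff₀ h2n] at this
      nlinarith [min_le_right ε x]
    linarith [Nat.ceil_lt_add_one (by positivity : (0:ℝ) ≤ x * 2^n)]
  · have hc : ((K - 1 : ℕ) : ℝ) = (K:ℝ) - 1 := by rw [Nat.cast_sub hK1]; norm_num
    rw [hc]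
    have h1 : (1:ℝ)/2^n < ε := lt_of_lt_of_le hn (min_le_left _ _)
    rw [lt_div_iff₀ h2n]
    have h3 : (1:ℝ) < ε * 2^n := (div_lt_iff₀ h2n).mp h1
    nlinarith
end DyadicApprox

section Dyadic
variable {Ω : Type*} [MeasurableSpace Ω] {P : Measure Ω} [IsFiniteMeasure P]


/-- Invariant for the dyadic filtration at level `n`. -/
def DyadicInv (P : Measure Ω) (A : Set Ω) (n : ℕ) (g : ℕ → Set Ω) : Prop :=
  (∀ k, MeasurableSet (g k)) ∧ (∀ k, g k ⊆ A) ∧ (∀ k, g k ⊆ g (k+1)) ∧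
  (∀ k, 2^n ≤ k → g k = A) ∧
  (∀ k, k ≤ 2^n → P (g k) = ENNReal.ofReal ((k:ℝ)/2^n) * P A)

lemma exists_dyadic (hP : Atomless P) {A : Set Ω} (hA : MeasurableSet A) :
    ∃ c : ℕ → ℕ → Set Ω, (∀ n, DyadicInv P A n (c n)) ∧ (∀ n k, c (n+1) (2*k) = c n k) := by
  classical
  have base : DyadicInv P A 0 (fun k => if k = 0 then (∅ : Set Ω) else A) := by
    refine ⟨fun k => ?_, fun k => ?_, fun k => ?_, fun k hk => ?_, fun k hk => ?_⟩
    · by_cases h : k = 0 <;> simp [h, hA]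
    · by_cases h : k = 0 <;> simp [h]
    · by_cases h : k = 0 <;> simp [h]
    · have : k ≠ 0 := by omega
      simp [this]
    · interval_cases k <;> simp
  have step : ∀ n, ∀ g, DyadicInv P A n g →
      ∃ g', DyadicInv P A (n+1) g' ∧ ∀ k, g' (2*k) = g k := by
    intro n g hg
    obtain ⟨hgm, hgA, hgmono, hgtop, hgP⟩ := hg
    have hmonole : ∀ j j', j ≤ j' → g j ⊆ g j' := fun j j' h => by
      induction h with
      | refl => exact Subset.rfl
      | step h ih => exact ih.trans (hgmono _)
    have hsel : ∀ j : ℕ, ∃ h, h ⊆ g (j+1) \ g j ∧ MeasurableSet h ∧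
        (j < 2^n → P h = ENNReal.ofReal ((1:ℝ)/2^(n+1)) * P A) := by
      intro j
      by_cases hj : j < 2^n
      · have hd : P (g (j+1) \ g j) = ENNReal.ofReal ((1:ℝ)/2^n) * P A := by
          rw [measure_diff (hgmono j) (hgm j).nullMeasurableSet (measure_ne_top P _)]
        
          rw [hgP (j+1) (by omega), hgP j (by omega)]
          have hsplit : ENNReal.ofReal (((j:ℝ)+1)/2^n) =
              ENNReal.ofReal ((j:ℝ)/2^n) + ENNReal.ofReal ((1:ℝ)/2^n) := by
            rw [← ENNReal.ofReal_add (by positivity) (by positivity)]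
            congr 1; field_simp
          have hcast : ((j+1 : ℕ):ℝ) = (j:ℝ)+1 := by push_cast; ring
          rw [hcast, hsplit, add_mul, ENNReal.add_sub_cancel_left]
          exact ENNReal.mul_ne_top ENNReal.ofReal_ne_top (measure_ne_top P A)
        have hle : ENNReal.ofReal ((1:ℝ)/2^(n+1)) * P A ≤ P (g (j+1) \ g j) := by
          rw [hd]
          refine mul_le_mul_left (ENNReal.ofReal_le_ofReal ?_) _
          have h1 : (0:ℝ) < 2^n := by positivity
          rw [div_le_div_iff₀ (by positivity) h1]
          have : (2:ℝ)^n ≤ 2^(n+1) := by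
            apply pow_le_pow_right₀ (by norm_num) (by omega)
          linarith
        obtain ⟨t, hts, htm, htP⟩ := hP.exists_subset_measure_eq
          ((hgm (j+1)).diff (hgm j)) hle
        exact ⟨t, hts, htm, fun _ => htP⟩
      · exact ⟨∅, empty_subset _, MeasurableSet.empty, fun h => absurd h hj⟩
    choose sel hsel₁ hsel₂ hsel₃ using hsel
    set g' : ℕ → Set Ω := fun k =>
      if 2^(n+1) ≤ k then A else (if k % 2 = 0 then g (k/2) else g (k/2) ∪ sel (k/2)) with hg'
    have hg'eval_even : ∀ k, k < 2^(n+1) → k % 2 = 0 → g' k = g (k/2) := by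
      intro k h1 h2; simp only [hg']; rw [if_neg (by omega), if_pos h2]
    have hg'eval_odd : ∀ k, k < 2^(n+1) → k % 2 = 1 → g' k = g (k/2) ∪ sel (k/2) := by
      intro k h1 h2; simp only [hg']; rw [if_neg (by omega), if_neg (by omega)]
    have hg'eval_top : ∀ k, 2^(n+1) ≤ k → g' k = A := by
      intro k h1; simp only [hg']; rw [if_pos h1]
    have hselA : ∀ j, sel j ⊆ A := fun j => (hsel₁ j).trans (diff_subset.trans (hgA (j+1)))
    refine ⟨g', ⟨?_, ?_, ?_, hg'eval_top, ?_⟩, ?_⟩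
    · intro k
      rcases le_or_gt (2^(n+1)) k with h | h
      · rw [hg'eval_top k h]; exact hA
      · rcases Nat.even_or_odd k with he | ho
        · rw [hg'eval_even k h (Nat.even_iff.mp he)]; exact hgm _
        · rw [hg'eval_odd k h (Nat.odd_iff.mp ho)]; exact (hgm _).union (hsel₂ _)
    · intro k
      rcases le_or_gt (2^(n+1)) k with h | h
      · rw [hg'eval_top k h]
      · rcases Nat.even_or_odd k with he | ho
        · rw [hg'eval_even k h (Nat.even_iff.mp he)]; exact hgA _
        · rw [hg'eval_odd k h (Nat.odd_iff.mp ho)]; exact union_subset (hgA _) (hselA _)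
    · intro k
      rcases le_or_gt (2^(n+1)) (k+1) with h1 | h1
      · rw [hg'eval_top (k+1) h1]
        rcases le_or_gt (2^(n+1)) k with h | h
        · rw [hg'eval_top k h]
        · rcases Nat.even_or_odd k with he | ho
          · rw [hg'eval_even k h (Nat.even_iff.mp he)]; exact hgA _
          · rw [hg'eval_odd k h (Nat.odd_iff.mp ho)]; exact union_subset (hgA _) (hselA _)
      · have h : k < 2^(n+1) := by omega
        rcases Nat.even_or_odd k with he | ho
        · have hk2 : k % 2 = 0 := Nat.even_iff.mp he
          rw [hg'eval_even k h hk2, hg'eval_odd (k+1) h1 (by omega)]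
          have : (k+1)/2 = k/2 := by omega
          rw [this]; exact subset_union_left
        · have hk2 : k % 2 = 1 := Nat.odd_iff.mp ho
          rw [hg'eval_odd k h hk2, hg'eval_even (k+1) h1 (by omega)]
          have h12 : (k+1)/2 = k/2 + 1 := by omega
          rw [h12]
          refine union_subset (hmonole _ _ (by omega)) ?_
          exact (hsel₁ _).trans (diff_subset)
    · intro k hk
      rcases eq_or_lt_of_le hk with he | hlt
      · rw [hg'eval_top k (le_of_eq he.symm)]
        subst he
        have : (((2^(n+1) : ℕ):ℝ)/2^(n+1)) = 1 := by
          push_cast; field_simp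
        rw [this]; simp
      · rcases Nat.even_or_odd k with he | ho
        · have hk2 : k % 2 = 0 := Nat.even_iff.mp he
          rw [hg'eval_even k hlt hk2, hgP (k/2) (by omega)]
          congr 2
          have : ((k/2 : ℕ):ℝ) = (k:ℝ)/2 := by
            obtain ⟨j, hj⟩ := he; subst hj
            rw [show (j+j)/2 = j from by omega]
            push_cast; ring
          rw [this, pow_succ]
          rw [div_div, mul_comm]
        · have hk2 : k % 2 = 1 := Nat.odd_iff.mp ho
          rw [hg'eval_odd k hlt hk2]
          have hdisj : Disjoint (g (k/2)) (sel (k/2)) :=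
            disjoint_of_subset_right (hsel₁ _) disjoint_sdiff_right
          rw [measure_union hdisj (hsel₂ _), hgP (k/2) (by omega),
            hsel₃ (k/2) (by omega)]
          rw [← add_mul, ← ENNReal.ofReal_add (by positivity) (by positivity)]
          congr 2
          obtain ⟨j, hj⟩ := ho; subst hj
          rw [show (2*j+1)/2 = j from by omega]
          push_cast
          rw [pow_succ]
          field_simp
    · intro k
      rcases le_or_gt (2^(n+1)) (2*k) with h | h
      · rw [hg'eval_top _ h, hgtop k (by omega)]
      · rw [hg'eval_even _ h (by omega), Nat.mul_div_cancel_left k (by norm_num)]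
  choose! stepf hstep₁ hstep₂ using step
  set c : ℕ → ℕ → Set Ω := fun n => Nat.rec (fun k => if k = 0 then (∅ : Set Ω) else A)
    (fun n g => stepf n g) n with hc
  have hcinv : ∀ n, DyadicInv P A n (c n) := by
    intro n; induction n with
    | zero => exact base
    | succ n ih => exact hstep₁ n (c n) ih
  exact ⟨c, hcinv, fun n k => hstep₂ n (c n) (hcinv n) k⟩
end Dyadic

section CondUnif
variable {Ω : Type*} [MeasurableSpace Ω] {P : Measure Ω} [IsFiniteMeasure P]

lemma exists_cond_uniform (hP : Atomless P) {A : Set Ω} (hA : MeasurableSet A) :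
    ∃ θ : Ω → ℝ, Measurable θ ∧ (∀ ω, 0 ≤ θ ω ∧ θ ω ≤ 1) ∧
      ∀ t : ℝ, 0 ≤ t → t ≤ 1 → P (A ∩ {ω | θ ω ≤ t}) = ENNReal.ofReal t * P A := by
  classical
  obtain ⟨c, hcinv, hcons⟩ := exists_dyadic hP hA
  have hcm : ∀ n k, MeasurableSet (c n k) := fun n k => (hcinv n).1 k
  have hcA : ∀ n k, c n k ⊆ A := fun n k => (hcinv n).2.1 k
  have hcmono : ∀ n k k', k ≤ k' → c n k ⊆ c n k' := by
    intro n k k' h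
    induction h with
    | refl => exact Subset.rfl
    | step h ih => exact ih.trans ((hcinv n).2.2.1 _)
  have hctop : ∀ n k, 2^n ≤ k → c n k = A := fun n => (hcinv n).2.2.2.1
  have hcP : ∀ n k, k ≤ 2^n → P (c n k) = ENNReal.ofReal ((k:ℝ)/2^n) * P A :=
    fun n => (hcinv n).2.2.2.2
  have hcval : ∀ n k, P (c n k) = ENNReal.ofReal (min ((k:ℝ)/2^n) 1) * P A := by
    intro n k
    rcases le_or_gt k (2^n) with h | h
    · rw [hcP n k h, min_eq_left]
      rw [div_le_one (by positivity)]
      exact_mod_cast h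
    · rw [hctop n k h.le, min_eq_right, ENNReal.ofReal_one, one_mul]
      rw [le_div_iff₀ (by positivity)]
      have : ((2^n : ℕ):ℝ) ≤ (k:ℝ) := by exact_mod_cast h.le
      push_cast at this ⊢
      linarith
  have hlevel : ∀ p n k, c n k = c (n+p) (k * 2^p) := by
    intro p
    induction p with
    | zero => intro n k; simp
    | succ p ih =>
      intro n k
      rw [ih n k, show k * 2^(p+1) = 2*(k*2^p) from by ring]
      exact (hcons (n+p) (k*2^p)).symm
  have hcross : ∀ n k m j : ℕ, (k:ℝ)/2^n ≤ (j:ℝ)/2^m → c n k ⊆ c m j := by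
    intro n k m j h
    have hnat : k * 2^m ≤ j * 2^n := by
      rw [div_le_div_iff₀ (by positivity) (by positivity)] at h
      have : ((k * 2^m : ℕ):ℝ) ≤ ((j * 2^n : ℕ):ℝ) := by push_cast; linarith
      exact_mod_cast this
    calc c n k = c (n+m) (k*2^m) := hlevel m n k
      _ ⊆ c (n+m) (j*2^n) := hcmono _ _ _ hnat
      _ = c (m+n) (j*2^n) := by rw [add_comm]
      _ = c m j := (hlevel n m j).symm
  set S : Ω → Set ℝ := fun ω => {x | ∃ p : ℕ × ℕ, x = (p.2:ℝ)/2^p.1 ∧ ω ∈ c p.1 p.2} with hSdef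
  set θ : Ω → ℝ := fun ω => sInf (S ω) with hθdef
  have hbdd : ∀ ω, BddBelow (S ω) := by
    intro ω
    refine ⟨0, fun x hx => ?_⟩
    obtain ⟨p, hxp, _⟩ := hx
    rw [hxp]; positivity
  have hmem1 : ∀ ω ∈ A, (1:ℝ) ∈ S ω := by
    intro ω hω
    refine ⟨(0,1), by norm_num, ?_⟩
    rw [hctop 0 1 le_rfl]; exact hω
  have hSempty : ∀ ω, ω ∉ A → S ω = ∅ := by
    intro ω hω
    ext x; simp only [hSdef, mem_setOf_eq, mem_empty_iff_false, iff_false]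
    rintro ⟨p, _, hmem⟩
    exact hω (hcA p.1 p.2 hmem)
  have hθ0 : ∀ ω, 0 ≤ θ ω := by
    intro ω
    apply Real.sInf_nonneg
    rintro x ⟨p, hxp, _⟩
    rw [hxp]; positivity
  have hθ1 : ∀ ω, θ ω ≤ 1 := by
    intro ω
    by_cases hω : ω ∈ A
    · exact csInf_le (hbdd ω) (hmem1 ω hω)
    · rw [hθdef]; simp only
      rw [hSempty ω hω, Real.sInf_empty]
      exact zero_le_one
  have hθmeas : Measurable θ := by
    apply measurable_of_Iio
    intro x
    by_cases hx : 0 < x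
    · have hset : θ ⁻¹' Iio x =
          Aᶜ ∪ ⋃ (p : ℕ × ℕ), ⋃ (_ : (p.2:ℝ)/2^p.1 < x), c p.1 p.2 := by
        ext ω
        simp only [mem_preimage, mem_Iio, mem_union, mem_compl_iff, mem_iUnion]
        constructor
        · intro h
          by_cases hω : ω ∈ A
          · obtain ⟨y, hy, hylt⟩ := (csInf_lt_iff (hbdd ω) ⟨1, hmem1 ω hω⟩).mp h
            obtain ⟨p, hyp, hmem⟩ := hy
            exact Or.inr ⟨p, hyp ▸ hylt, hmem⟩
          · exact Or.inl hω
        · rintro (hω | ⟨p, hplt, hmem⟩)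
          · have : θ ω = 0 := by
              rw [hθdef]; simp only; rw [hSempty ω hω, Real.sInf_empty]
            rw [this]; exact hx
          · exact lt_of_le_of_lt (csInf_le (hbdd ω) ⟨p, rfl, hmem⟩) hplt
      rw [hset]
      exact (hA.compl).union
        (MeasurableSet.iUnion fun p => MeasurableSet.iUnion fun _ => hcm p.1 p.2)
    · have hset : θ ⁻¹' Iio x = ∅ := by
        ext ω; simp only [mem_preimage, mem_Iio, mem_empty_iff_false, iff_false, not_lt]
        exact le_trans (not_lt.mp hx) (hθ0 ω)
      rw [hset]; exact MeasurableSet.empty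
  have hPlt : ∀ t : ℝ, 0 < t →
      P (A ∩ {ω | θ ω < t}) = ENNReal.ofReal (min t 1) * P A := by
    intro t ht
    have hset : A ∩ {ω | θ ω < t} =
        ⋃ (p : {p : ℕ × ℕ // (p.2:ℝ)/2^p.1 < t}), c p.1.1 p.1.2 := by
      ext ω
      constructor
      · rintro ⟨hω, hθω⟩
        obtain ⟨y, hy, hylt⟩ := (csInf_lt_iff (hbdd ω) ⟨1, hmem1 ω hω⟩).mp hθω
        obtain ⟨p, hyp, hmem⟩ := hy
        exact mem_iUnion.mpr ⟨⟨p, hyp ▸ hylt⟩, hmem⟩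
      · intro h
        obtain ⟨⟨p, hp⟩, hmem⟩ := mem_iUnion.mp h
        exact ⟨hcA p.1 p.2 hmem,
          lt_of_le_of_lt (csInf_le (hbdd ω) ⟨p, rfl, hmem⟩) hp⟩
    have hdir : Directed (· ⊆ ·)
        (fun p : {p : ℕ × ℕ // (p.2:ℝ)/2^p.1 < t} => c p.1.1 p.1.2) := by
      intro p q
      rcases le_total ((p.1.2:ℝ)/2^p.1.1) ((q.1.2:ℝ)/2^q.1.1) with h | h
      · exact ⟨q, hcross _ _ _ _ h, Subset.rfl⟩
      · exact ⟨p, Subset.rfl, hcross _ _ _ _ h⟩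
    have hnonempty : Nonempty {p : ℕ × ℕ // (p.2:ℝ)/2^p.1 < t} :=
      ⟨⟨(0,0), by simpa using ht⟩⟩
    rw [hset, hdir.measure_iUnion]
    apply le_antisymm
    · refine iSup_le fun p => ?_
      rw [hcval]
      refine mul_le_mul_left (ENNReal.ofReal_le_ofReal ?_) _
      exact min_le_min p.2.le le_rfl
    · set x := min t 1 with hxdef
      have hx0 : 0 < x := lt_min ht one_pos
      have hx1 : x ≤ 1 := min_le_right _ _
      have happrox : ∀ m : ℕ,
          ENNReal.ofReal (x - 1/((m:ℝ)+1)) * P A ≤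
          ⨆ (p : {p : ℕ × ℕ // (p.2:ℝ)/2^p.1 < t}), P (c p.1.1 p.1.2) := by
        intro m
        obtain ⟨n, k, h1, h2⟩ := dyadic_approx hx0 hx1
          (by positivity : (0:ℝ) < 1/((m:ℝ)+1))
        have hvt : ((k:ℝ))/2^n < t := lt_of_lt_of_le h1 (min_le_left t 1)
        refine le_trans ?_ (le_iSup _ (⟨(n,k), hvt⟩ :
          {p : ℕ × ℕ // (p.2:ℝ)/2^p.1 < t}))
        rw [hcval]
        refine mul_le_mul_left (ENNReal.ofReal_le_ofReal ?_) _
        refine le_min h2.le (by linarith)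
      have hlim : Tendsto (fun m : ℕ => ENNReal.ofReal (x - 1/((m:ℝ)+1)) * P A)
          atTop (𝓝 (ENNReal.ofReal x * P A)) := by
        have h1 : Tendsto (fun m : ℕ => x - 1/((m:ℝ)+1)) atTop (𝓝 x) := by
          have h2 := tendsto_one_div_add_atTop_nhds_zero_nat (𝕜 := ℝ)
          simpa using tendsto_const_nhds.sub h2
        exact ENNReal.Tendsto.mul_const
          ((ENNReal.continuous_ofReal.tendsto x).comp h1)
          (Or.inr (measure_ne_top P A))
      exact le_of_tendsto hlim (Eventually.of_forall happrox)
  refine ⟨θ, hθmeas, fun ω => ⟨hθ0 ω, hθ1 ω⟩, ?_⟩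
  intro t ht0 ht1
  have hseteq : A ∩ {ω | θ ω ≤ t} = ⋂ m : ℕ, (A ∩ {ω | θ ω < t + 1/((m:ℝ)+1)}) := by
    ext ω
    simp only [mem_iInter, mem_inter_iff, mem_setOf_eq]
    constructor
    · intro ⟨h1, h2⟩ m
      refine ⟨h1, lt_of_le_of_lt h2 ?_⟩
      have : (0:ℝ) < 1/((m:ℝ)+1) := by positivity
      linarith
    · intro h
      refine ⟨(h 0).1, ?_⟩
      by_contra hgt
      push_neg at hgt
      obtain ⟨m, hm⟩ := exists_nat_one_div_lt (sub_pos.mpr hgt)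
      exact absurd (h m).2 (not_lt.mpr (by push_cast at hm ⊢; linarith))
  rw [hseteq]
  have hanti : Antitone (fun m : ℕ => A ∩ {ω | θ ω < t + 1/((m:ℝ)+1)}) := by
    intro m m' hmm
    apply inter_subset_inter_right
    intro ω hω
    simp only [mem_setOf_eq] at hω ⊢
    have h1 : (1:ℝ)/((m':ℝ)+1) ≤ 1/((m:ℝ)+1) := by
      apply one_div_le_one_div_of_le (by positivity)
      have : (m:ℝ) ≤ (m':ℝ) := by exact_mod_cast hmm
      linarith
    linarith
  rw [hanti.directed_ge.measure_iInter
    (fun m => (hA.inter (measurableSet_lt hθmeas measurable_const)).nullMeasurableSet)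
    ⟨0, measure_ne_top P _⟩]
  have heval : ∀ m : ℕ, P (A ∩ {ω | θ ω < t + 1/((m:ℝ)+1)}) =
      ENNReal.ofReal (min (t + 1/((m:ℝ)+1)) 1) * P A := by
    intro m
    exact hPlt _ (by positivity)
  simp_rw [heval]
  apply le_antisymm
  · have hlim : Tendsto (fun m : ℕ => ENNReal.ofReal (min (t + 1/((m:ℝ)+1)) 1) * P A)
        atTop (𝓝 (ENNReal.ofReal (min t 1) * P A)) := by
      have h1 : Tendsto (fun m : ℕ => t + 1/((m:ℝ)+1)) atTop (𝓝 t) := by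
        have h2 := tendsto_one_div_add_atTop_nhds_zero_nat (𝕜 := ℝ)
        simpa using tendsto_const_nhds.add h2
      have h3 : Tendsto (fun m : ℕ => min (t + 1/((m:ℝ)+1)) 1) atTop (𝓝 (min t 1)) :=
        h1.min tendsto_const_nhds
      exact ENNReal.Tendsto.mul_const
        ((ENNReal.continuous_ofReal.tendsto _).comp h3)
        (Or.inr (measure_ne_top P A))
    have hmin : min t 1 = t := min_eq_left ht1
    rw [hmin] at hlim
    exact ge_of_tendsto hlim (Eventually.of_forall fun m => iInf_le _ m)
  · refine le_iInf fun m => ?_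
    refine mul_le_mul_left (ENNReal.ofReal_le_ofReal ?_) _
    refine le_min ?_ ht1
    have : (0:ℝ) < 1/((m:ℝ)+1) := by positivity
    linarith
end CondUnif

section Glue
variable {Ω : Type*} [MeasurableSpace Ω]

open Classical in
lemma measurable_glue {W : Ω → ℝ} (hW : Measurable W) {T : Set ℝ} (hT : T.Countable)
    {θf : ℝ → Ω → ℝ} (hθf : ∀ w, Measurable (θf w)) :
    Measurable (fun ω => if W ω ∈ T then θf (W ω) ω else 1) := by
  apply measurable_of_Iic
  intro t
  have hset : (fun ω => if W ω ∈ T then θf (W ω) ω else 1) ⁻¹' Iic t =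
      (⋃ w ∈ T, ({ω | W ω = w} ∩ {ω | θf w ω ≤ t})) ∪
        ((W ⁻¹' T)ᶜ ∩ (if (1:ℝ) ≤ t then univ else ∅)) := by
    ext ω
    by_cases hωT : W ω ∈ T
    · have hite : (if W ω ∈ T then θf (W ω) ω else 1) = θf (W ω) ω := if_pos hωT
      simp only [mem_preimage, mem_Iic, hite, mem_union, mem_iUnion, mem_inter_iff,
        mem_setOf_eq, mem_compl_iff, hωT, not_true_eq_false, false_and, or_false]
      constructor
      · intro h; exact ⟨W ω, hωT, rfl, h⟩
      · rintro ⟨w, hwT, hww, h⟩; rw [hww]; exact h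
    · have hite : (if W ω ∈ T then θf (W ω) ω else 1) = 1 := if_neg hωT
      simp only [mem_preimage, mem_Iic, hite, mem_union, mem_iUnion, mem_inter_iff,
        mem_setOf_eq, mem_compl_iff]
      constructor
      · intro h
        refine Or.inr ⟨hωT, ?_⟩
        rw [if_pos h]; exact mem_univ ω
      · rintro (⟨w, hwT, hww, _⟩ | ⟨_, h⟩)
        · exact absurd (hww ▸ hwT) hωT
        · by_contra hc
          rw [if_neg hc] at h
          exact absurd h (notMem_empty ω)
  rw [hset]
  refine MeasurableSet.union ?_ ?_
  · exact MeasurableSet.biUnion hT fun w _ =>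
      (hW (measurableSet_singleton w)).inter (measurableSet_le (hθf w) measurable_const)
  · refine ((hW hT.measurableSet).compl).inter ?_
    split <;> simp
end Glue

section UnifU
variable {Ω : Type*} [MeasurableSpace Ω]

lemma exists_uniform_U (P : Measure Ω) [IsProbabilityMeasure P] (hP : Atomless P)
    (W : Ω → ℝ) (hW : Measurable W)
    (FW : ℝ → ℝ) (hFW : FW = fun z => (P {ω | W ω ≤ z}).toReal) :
    ∃ U : Ω → ℝ, Measurable U ∧ (∀ ω, 0 ≤ U ω ∧ U ω ≤ 1) ∧
      (∀ ω, ∀ z, z < W ω → FW z ≤ U ω) ∧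
      (∀ u : ℝ, 0 ≤ u → u ≤ 1 → P {ω | U ω ≤ u} = ENNReal.ofReal u) := by
  classical
  have hWle : ∀ z : ℝ, MeasurableSet {ω | W ω ≤ z} := fun z => hW measurableSet_Iic
  have hWlt : ∀ z : ℝ, MeasurableSet {ω | W ω < z} := fun z => hW measurableSet_Iio
  have hWeq : ∀ z : ℝ, MeasurableSet {ω | W ω = z} := fun z => hW (measurableSet_singleton z)
  have hFWor : ∀ z, ENNReal.ofReal (FW z) = P {ω | W ω ≤ z} := by
    intro z; rw [hFW]; exact ENNReal.ofReal_toReal (measure_ne_top P _)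
  have hFW0 : ∀ z, 0 ≤ FW z := by intro z; rw [hFW]; exact ENNReal.toReal_nonneg
  have hFW1 : ∀ z, FW z ≤ 1 := by
    intro z; rw [hFW]
    rw [show (1:ℝ) = (P univ).toReal from by simp]
    exact ENNReal.toReal_mono (measure_ne_top P _) (measure_mono (subset_univ _))
  have hFWmono : Monotone FW := by
    intro z z' h; rw [hFW]
    exact ENNReal.toReal_mono (measure_ne_top P _)
      (measure_mono fun ω hω => le_trans hω h)
  set L : ℝ → ℝ := fun w => (P {ω | W ω < w}).toReal with hLdef
  have hLor : ∀ w, ENNReal.ofReal (L w) = P {ω | W ω < w} := by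
    intro w; exact ENNReal.ofReal_toReal (measure_ne_top P _)
  have hL0 : ∀ w, 0 ≤ L w := fun w => ENNReal.toReal_nonneg
  have hLmono : Monotone L := by
    intro z z' h
    exact ENNReal.toReal_mono (measure_ne_top P _)
      (measure_mono fun ω hω => lt_of_lt_of_le hω h)
  have hLleFW : ∀ w, L w ≤ FW w := by
    intro w; rw [hFW]
    exact ENNReal.toReal_mono (measure_ne_top P _)
      (measure_mono (setOf_subset_setOf.mpr fun ω h => le_of_lt h))
  have hFWleL : ∀ z w, z < w → FW z ≤ L w := by
    intro z w h; rw [hFW]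
    exact ENNReal.toReal_mono (measure_ne_top P _)
      (measure_mono fun ω hω => lt_of_le_of_lt hω h)
  have hatomval : ∀ w, P {ω | W ω = w} = ENNReal.ofReal (FW w - L w) := by
    intro w
    have hseteq : {ω | W ω = w} = {ω | W ω ≤ w} \ {ω | W ω < w} := by
      ext ω; simp only [mem_setOf_eq, mem_diff, not_lt]
      constructor
      · intro h; exact ⟨le_of_eq h, le_of_eq h.symm⟩
      · intro ⟨h1, h2⟩; exact le_antisymm h1 h2
    have hsub : {ω | W ω < w} ⊆ {ω | W ω ≤ w} :=
      setOf_subset_setOf.mpr fun ω h => le_of_lt h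
    rw [hseteq, measure_diff hsub (hWlt w).nullMeasurableSet
      (measure_ne_top P _), ← hFWor, ← hLor,
      ENNReal.ofReal_sub _ (hL0 w)]
  -- conditional uniform variables on atoms
  have hatomunif : ∀ w : ℝ, ∃ θ : Ω → ℝ, Measurable θ ∧ (∀ ω, 0 ≤ θ ω ∧ θ ω ≤ 1) ∧
      ∀ t : ℝ, 0 ≤ t → t ≤ 1 →
        P ({ω | W ω = w} ∩ {ω | θ ω ≤ t}) = ENNReal.ofReal t * P {ω | W ω = w} :=
    fun w => exists_cond_uniform hP (hWeq w)
  choose θf hθfm hθf01 hθfunif using hatomunif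
  set T : Set ℝ := {w | 0 < P {ω | W ω = w}} with hTdef
  have hTcount : T.Countable := by
    have := MeasureTheory.Measure.countable_meas_pos_of_disjoint_of_meas_iUnion_ne_top
      (μ := P) (As := fun w : ℝ => {ω | W ω = w}) (fun w => hWeq w)
      (fun w w' hww => Set.disjoint_left.mpr fun ω h1 h2 => hww (h1.symm.trans h2))
      (measure_ne_top P _)
    exact this
  set θ : Ω → ℝ := fun ω => if W ω ∈ T then θf (W ω) ω else 1 with hθdef
  have hθmeas : Measurable θ := by
    apply measurable_of_Iic
    intro t
    have h := measurable_glue (T := T) hW hTcount hθfm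
    have hseteq2 : θ ⁻¹' Iic t =
        (fun ω => @ite ℝ (W ω ∈ T) (Classical.propDecidable _) (θf (W ω) ω) 1) ⁻¹' Iic t := by
      ext ω
      by_cases hh : W ω ∈ T <;> simp [hθdef, hh]
    rw [hseteq2]
    exact h measurableSet_Iic
  have hθ01 : ∀ ω, 0 ≤ θ ω ∧ θ ω ≤ 1 := by
    intro ω; rw [hθdef]
    by_cases h : W ω ∈ T
    · simp only [if_pos h]; exact hθf01 _ ω
    · simp only [if_neg h]; exact ⟨zero_le_one, le_refl 1⟩
  set U : Ω → ℝ := fun ω => L (W ω) + θ ω * (FW (W ω) - L (W ω)) with hUdef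
  have hUmeas : Measurable U := by
    apply Measurable.add (hLmono.measurable.comp hW)
    apply Measurable.mul hθmeas
    exact ((hFWmono.measurable.comp hW).sub (hLmono.measurable.comp hW))
  have hLU : ∀ ω, L (W ω) ≤ U ω := by
    intro ω
    have h1 := (hθ01 ω).1
    have h2 := hLleFW (W ω)
    simp only [hUdef]
    nlinarith [mul_nonneg h1 (sub_nonneg.mpr h2)]
  have hUR : ∀ ω, U ω ≤ FW (W ω) := by
    intro ω
    have h1 := (hθ01 ω).2
    have h0 := (hθ01 ω).1
    have h2 := hLleFW (W ω)
    simp only [hUdef]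
    nlinarith [mul_le_of_le_one_left (sub_nonneg.mpr h2) h1]
  refine ⟨U, hUmeas, fun ω => ⟨le_trans (hL0 _) (hLU ω), le_trans (hUR ω) (hFW1 _)⟩, ?_, ?_⟩
  · intro ω z hz
    exact le_trans (hFWleL z (W ω) hz) (hLU ω)
  intro u hu0 hu1
  by_cases hcross : ∃ w, L w ≤ u ∧ u < FW w
  · obtain ⟨w, hw1, hw2⟩ := hcross
    set j : ℝ := FW w - L w with hjdef
    have hj0 : 0 < j := by simp only [hjdef]; linarith
    set t : ℝ := (u - L w) / j with htdef
    have ht0 : 0 ≤ t := div_nonneg (by linarith) hj0.le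
    have ht1 : t ≤ 1 := by
      rw [htdef, div_le_one hj0]; simp only [hjdef]; linarith
    have hwT : w ∈ T := by
      rw [hTdef]; simp only [mem_setOf_eq, hatomval w]
      rw [← hjdef]; exact ENNReal.ofReal_pos.mpr hj0
    have hseteq : {ω | U ω ≤ u} =
        {ω | W ω < w} ∪ ({ω | W ω = w} ∩ {ω | θ ω ≤ t}) := by
      ext ω
      simp only [mem_setOf_eq, mem_union, mem_inter_iff]
      rcases lt_trichotomy (W ω) w with hlt | heq | hgt
      · simp only [hlt, true_or, iff_true]
        calc U ω ≤ FW (W ω) := hUR ω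
          _ ≤ L w := hFWleL _ _ hlt
          _ ≤ u := hw1
      · constructor
        · intro h
          refine Or.inr ⟨heq, ?_⟩
          simp only [hUdef, heq] at h
          rw [htdef]
          rw [le_div_iff₀ hj0]
          simp only [hjdef]
          linarith
        · rintro (h | ⟨_, hθt⟩)
          · exact absurd (heq ▸ h) (lt_irrefl w)
          · simp only [hUdef, heq]
            have : θ ω * (FW w - L w) ≤ t * j := by
              apply mul_le_mul_of_nonneg_right hθt hj0.le |>.trans
              rw [hjdef]
            have htj : t * j = u - L w := div_mul_cancel₀ _ hj0.ne'
            linarith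
      · constructor
        · intro h
          exfalso
          have h1 : FW w ≤ L (W ω) := hFWleL _ _ hgt
          have h2 := hLU ω
          linarith
        · rintro (h | ⟨heq, _⟩)
          · exact absurd h (not_lt.mpr hgt.le)
          · exact absurd heq (ne_of_gt hgt)
    rw [hseteq, measure_union _ ((hWeq w).inter (measurableSet_le hθmeas measurable_const))]
    · have hsub : {ω | W ω = w} ∩ {ω | θ ω ≤ t} = {ω | W ω = w} ∩ {ω | θf w ω ≤ t} := by
        ext ω
        simp only [mem_inter_iff, mem_setOf_eq, and_congr_right_iff]
        intro hωw
        rw [hθdef]; simp only [hωw, if_pos hwT]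
      rw [hsub, hθfunif w t ht0 ht1, hatomval w, ← hLor, ← hjdef,
        ← ENNReal.ofReal_mul ht0]
      rw [← ENNReal.ofReal_add (hL0 w) (by positivity)]
      congr 1
      have htj : t * j = u - L w := div_mul_cancel₀ _ hj0.ne'
      linarith
    · refine Set.disjoint_left.mpr fun ω h1 ⟨h2, _⟩ => ?_
      simp only [mem_setOf_eq] at h1 h2
      rw [h2] at h1; exact lt_irrefl w h1
  · push_neg at hcross
    have hseteq : {ω | U ω ≤ u} = {ω | FW (W ω) ≤ u} := by
      ext ω
      simp only [mem_setOf_eq]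
      constructor
      · intro h
        by_contra hc
        push_neg at hc
        rcases le_or_gt (L (W ω)) u with hL | hL
        · exact absurd (hcross (W ω) hL) (not_le.mpr hc)
        · exact absurd h (not_le.mpr (lt_of_lt_of_le hL (hLU ω)))
      · intro h; exact le_trans (hUR ω) h
    rw [hseteq]
    set A₀ : Set ℝ := {z | FW z ≤ u} with hA₀def
    by_cases hne : A₀.Nonempty
    · by_cases hbdd : BddAbove A₀
      · set b : ℝ := sSup A₀ with hbdef
        have hFWzb : ∀ z, z < b → FW z ≤ u := by
          intro z hz
          obtain ⟨a, ha, hza⟩ := exists_lt_of_lt_csSup hne hz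
          exact le_trans (hFWmono hza.le) ha
        have hLb : L b ≤ u := by
          have hset2 : {ω | W ω < b} = ⋃ n : ℕ, {ω | W ω ≤ b - 1/((n:ℝ)+1)} := by
            ext ω
            simp only [mem_setOf_eq, mem_iUnion]
            constructor
            · intro h
              obtain ⟨n, hn⟩ := exists_nat_one_div_lt (sub_pos.mpr h)
              exact ⟨n, by push_cast at hn ⊢; linarith⟩
            · intro ⟨n, hn⟩
              have : (0:ℝ) < 1/((n:ℝ)+1) := by positivity
              linarith
          have hP2 : P {ω | W ω < b} ≤ ENNReal.ofReal u := by
            rw [hset2]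
            rw [Monotone.measure_iUnion]
            · refine iSup_le fun n => ?_
              rw [← hFWor]
              apply ENNReal.ofReal_le_ofReal
              apply hFWzb
              have : (0:ℝ) < 1/((n:ℝ)+1) := by positivity
              linarith
            · intro n n' hnn ω hω
              simp only [mem_setOf_eq] at hω ⊢
              have h1 : (1:ℝ)/((n':ℝ)+1) ≤ 1/((n:ℝ)+1) := by
                apply one_div_le_one_div_of_le (by positivity)
                have : (n:ℝ) ≤ (n':ℝ) := by exact_mod_cast hnn
                linarith
              linarith
          calc L b = (P {ω | W ω < b}).toReal := rfl
            _ ≤ (ENNReal.ofReal u).toReal := ENNReal.toReal_mono ENNReal.ofReal_ne_top hP2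
            _ = u := ENNReal.toReal_ofReal hu0
        have hFWble : FW b ≤ u := hcross b hLb
        have hFWbge : u ≤ FW b := by
          have hset3 : {ω | W ω ≤ b} = ⋂ n : ℕ, {ω | W ω ≤ b + 1/((n:ℝ)+1)} := by
            ext ω
            simp only [mem_setOf_eq, mem_iInter]
            constructor
            · intro h n
              have : (0:ℝ) < 1/((n:ℝ)+1) := by positivity
              linarith
            · intro h
              by_contra hc
              push_neg at hc
              obtain ⟨n, hn⟩ := exists_nat_one_div_lt (sub_pos.mpr hc)
              exact absurd (h n) (not_le.mpr (by push_cast at hn ⊢; linarith))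
          have hanti : Antitone (fun n : ℕ => {ω | W ω ≤ b + 1/((n:ℝ)+1)}) := by
            intro n n' hnn ω hω
            simp only [mem_setOf_eq] at hω ⊢
            have h1 : (1:ℝ)/((n':ℝ)+1) ≤ 1/((n:ℝ)+1) := by
              apply one_div_le_one_div_of_le (by positivity)
              have : (n:ℝ) ≤ (n':ℝ) := by exact_mod_cast hnn
              linarith
            linarith
          have hP3 : P {ω | W ω ≤ b} = ⨅ n : ℕ, P {ω | W ω ≤ b + 1/((n:ℝ)+1)} := by
            rw [hset3]
            exact hanti.directed_ge.measure_iInter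
              (fun n => (hWle _).nullMeasurableSet) ⟨0, measure_ne_top P _⟩
          have hge : ENNReal.ofReal u ≤ P {ω | W ω ≤ b} := by
            rw [hP3]
            refine le_iInf fun n => ?_
            rw [← hFWor]
            apply ENNReal.ofReal_le_ofReal
            have hnb : b + 1/((n:ℝ)+1) ∉ A₀ := by
              intro hmem
              have := le_csSup hbdd hmem
              have hpos : (0:ℝ) < 1/((n:ℝ)+1) := by positivity
              rw [← hbdef] at this
              linarith
            simp only [hA₀def, mem_setOf_eq, not_le] at hnb
            exact hnb.le
          rw [← hFWor] at hge
          exact (ENNReal.ofReal_le_ofReal_iff (hFW0 b)).mp hge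
        have hub : u = FW b := le_antisymm hFWbge hFWble
        have hset4 : {ω | FW (W ω) ≤ u} = {ω | W ω ≤ b} := by
          ext ω
          simp only [mem_setOf_eq]
          constructor
          · intro h
            by_contra hc
            push_neg at hc
            have : W ω ∉ A₀ := fun hmem => absurd (le_csSup hbdd hmem) (not_le.mpr hc)
            simp only [hA₀def, mem_setOf_eq, not_le] at this
            linarith
          · intro h
            rw [hub]
            exact hFWmono h
        rw [hset4, ← hFWor, hub]
      · -- A₀ unbounded above: u = 1
        have hall : ∀ z, FW z ≤ u := by
          intro z
          rw [not_bddAbove_iff] at hbdd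
          obtain ⟨a, ha, hza⟩ := hbdd z
          exact le_trans (hFWmono hza.le) ha
        have huniv : {ω | FW (W ω) ≤ u} = univ := eq_univ_of_forall fun ω => hall (W ω)
        have h1le : (1:ℝ≥0∞) ≤ ENNReal.ofReal u := by
          have hU2 : (⋃ n : ℕ, {ω | W ω ≤ (n:ℝ)}) = univ := by
            apply eq_univ_of_forall
            intro ω
            obtain ⟨n, hn⟩ := exists_nat_ge (W ω)
            exact mem_iUnion.mpr ⟨n, hn⟩
          have : (1:ℝ≥0∞) = P univ := (measure_univ).symm
          rw [this, ← hU2, Monotone.measure_iUnion]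
          · refine iSup_le fun n => ?_
            rw [← hFWor]
            exact ENNReal.ofReal_le_ofReal (hall n)
          · intro n n' hnn ω hω
            simp only [mem_setOf_eq] at hω ⊢
            have : (n:ℝ) ≤ (n':ℝ) := by exact_mod_cast hnn
            linarith
        rw [huniv, measure_univ]
        have h2le : ENNReal.ofReal u ≤ 1 := by
          calc ENNReal.ofReal u ≤ ENNReal.ofReal 1 := ENNReal.ofReal_le_ofReal hu1
            _ = 1 := ENNReal.ofReal_one
        exact (le_antisymm h2le h1le).symm
    · -- A₀ empty : u = 0
      have hall : ∀ z, u < FW z := by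
        intro z
        by_contra hc
        exact hne ⟨z, not_lt.mp hc⟩
      have hempty : {ω | FW (W ω) ≤ u} = ∅ := by
        ext ω
        simp only [mem_setOf_eq, mem_empty_iff_false, iff_false, not_le]
        exact hall (W ω)
      have hu0' : ENNReal.ofReal u = 0 := by
        by_contra hc
        have hpos : 0 < ENNReal.ofReal u := pos_iff_ne_zero.mpr hc
        have hI : (⋂ n : ℕ, {ω | W ω ≤ -(n:ℝ)}) = ∅ := by
          ext ω
          simp only [mem_iInter, mem_setOf_eq, mem_empty_iff_false, iff_false, not_forall, not_le]
          obtain ⟨n, hn⟩ := exists_nat_ge (-(W ω))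
          exact ⟨n+1, by push_cast; linarith⟩
        have hanti : Antitone (fun n : ℕ => {ω | W ω ≤ -(n:ℝ)}) := by
          intro n n' hnn ω hω
          simp only [mem_setOf_eq] at hω ⊢
          have : (n:ℝ) ≤ (n':ℝ) := by exact_mod_cast hnn
          linarith
        have h0 : (0:ℝ≥0∞) = ⨅ n : ℕ, P {ω | W ω ≤ -(n:ℝ)} := by
          rw [← measure_empty (μ := P), ← hI]
          exact hanti.directed_ge.measure_iInter
            (fun n => (hWle _).nullMeasurableSet) ⟨0, measure_ne_top P _⟩
        have : ENNReal.ofReal u ≤ 0 := by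
          rw [h0]
          refine le_iInf fun n => ?_
          rw [← hFWor]
          exact ENNReal.ofReal_le_ofReal (hall _).le
        exact absurd (le_antisymm this zero_le) hc
      rw [hempty, measure_empty, hu0']
end UnifU

set_option maxHeartbeats 2000000 in
/-- On an atomless probability space, for a random variable `W` with cdf `F_W`
and a cdf `F_V` on `ℝ` with at least one of them continuous,
`inf { ℙ(W > V) : V ~ F_V } = sup_{z∈ℝ} (F_V(z) − F_W(z))`. -/
theorem inf_prob_gt_eq {Ω : Type*} [MeasurableSpace Ω]
    (P : Measure Ω) [IsProbabilityMeasure P] (hatomless : Atomless P)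
    (W : Ω → ℝ) (hW : Measurable W)
    (FW : ℝ → ℝ) (hFW : FW = fun z => (P {ω | W ω ≤ z}).toReal)
    (FV : ℝ → ℝ) (hFVmono : Monotone FV)
    (hFVrc : ∀ x : ℝ, Tendsto FV (𝓝[>] x) (𝓝 (FV x)))
    (hFVbot : Tendsto FV atBot (𝓝 0)) (hFVtop : Tendsto FV atTop (𝓝 1))
    (hcont : Continuous FW ∨ Continuous FV) :
    sInf {p : ℝ | ∃ V : Ω → ℝ, Measurable V ∧ (∀ z : ℝ, (P {ω | V ω ≤ z}).toReal = FV z) ∧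
        p = (P {ω | V ω < W ω}).toReal}
      = ⨆ z : ℝ, (FV z - FW z) := by
  classical
  have hFW0 : ∀ z, 0 ≤ FW z := by intro z; rw [hFW]; exact ENNReal.toReal_nonneg
  have hFW1 : ∀ z, FW z ≤ 1 := by
    intro z; rw [hFW]
    rw [show (1:ℝ) = (P univ).toReal from by simp]
    exact ENNReal.toReal_mono (measure_ne_top P _) (measure_mono (subset_univ _))
  have hFWmono : Monotone FW := by
    intro z z' h; rw [hFW]
    exact ENNReal.toReal_mono (measure_ne_top P _)
      (measure_mono (setOf_subset_setOf.mpr fun ω hω => le_trans hω h))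
  have hFWor : ∀ z, ENNReal.ofReal (FW z) = P {ω | W ω ≤ z} := by
    intro z; rw [hFW]; exact ENNReal.ofReal_toReal (measure_ne_top P _)
  have hFV0 : ∀ z, 0 ≤ FV z := by
    intro z
    refine le_of_tendsto hFVbot (eventually_atBot.mpr ⟨z, fun y hy => hFVmono hy⟩)
  have hFV1 : ∀ z, FV z ≤ 1 := by
    intro z
    refine ge_of_tendsto hFVtop (eventually_atTop.mpr ⟨z, fun y hy => hFVmono hy⟩)
  set S : ℝ := ⨆ z : ℝ, (FV z - FW z) with hSdef
  have hbddS : BddAbove (range fun z => FV z - FW z) := by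
    refine ⟨1, fun x hx => ?_⟩
    obtain ⟨z, rfl⟩ := hx
    have h1 := hFV1 z
    have h2 := hFW0 z
    show FV z - FW z ≤ 1
    linarith
  have hSub : ∀ z, FV z - FW z ≤ S := fun z => le_ciSup hbddS z
  have hS0 : 0 ≤ S := by
    have h1 : Tendsto (fun n : ℕ => FV n - 1) atTop (𝓝 0) := by
      have h2 : Tendsto (fun n : ℕ => FV n) atTop (𝓝 1) :=
        hFVtop.comp tendsto_natCast_atTop_atTop
      simpa using h2.sub_const 1
    refine le_of_tendsto h1 (Eventually.of_forall fun n => ?_)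
    have := hSub n; have := hFW1 n; linarith
  have hS1 : S ≤ 1 := by
    refine ciSup_le fun z => ?_
    have := hFV1 z; have := hFW0 z; linarith
  obtain ⟨U, hUmeas, hU01, hUdom, hUunif⟩ := exists_uniform_U P hatomless W hW FW hFW
  have hUle : ∀ u : ℝ, u ≤ 1 → P {ω | U ω ≤ u} = ENNReal.ofReal u := by
    intro u hu1
    rcases le_or_gt 0 u with h0 | h0
    · exact hUunif u h0 hu1
    · have h1 : P {ω | U ω ≤ u} ≤ P {ω | U ω ≤ 0} :=
        measure_mono (setOf_subset_setOf.mpr fun ω h => le_trans h h0.le)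
      rw [hUunif 0 le_rfl zero_le_one, ENNReal.ofReal_zero] at h1
      rw [le_zero_iff.mp h1, ENNReal.ofReal_eq_zero.mpr h0.le]
  have hUge1 : ∀ x : ℝ, 1 ≤ x → P {ω | U ω ≤ x} = 1 := by
    intro x hx
    refine le_antisymm (le_trans (measure_mono (subset_univ _)) (by simp)) ?_
    calc (1:ℝ≥0∞) = ENNReal.ofReal 1 := ENNReal.ofReal_one.symm
      _ = P {ω | U ω ≤ 1} := (hUunif 1 zero_le_one le_rfl).symm
      _ ≤ P {ω | U ω ≤ x} := measure_mono (setOf_subset_setOf.mpr fun ω h => le_trans h hx)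
  have hUeq0 : ∀ c : ℝ, P {ω | U ω = c} = 0 := by
    intro c
    rcases le_or_gt c 1 with hc | hc
    · have key : ∀ n : ℕ, P {ω | U ω = c} ≤ ENNReal.ofReal (1/((n:ℝ)+1)) := by
        intro n
        have hsub : {ω | U ω = c} ⊆
            {ω | U ω ≤ c} \ {ω | U ω ≤ c - 1/((n:ℝ)+1)} := by
          intro ω h
          simp only [mem_setOf_eq] at h
          have hpos : (0:ℝ) < 1/((n:ℝ)+1) := by positivity
          exact ⟨le_of_eq h, by simp only [mem_setOf_eq]; linarith⟩
        have hsub2 : {ω | U ω ≤ c - 1/((n:ℝ)+1)} ⊆ {ω | U ω ≤ c} := by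
          refine setOf_subset_setOf.mpr fun ω h => ?_
          have hpos : (0:ℝ) < 1/((n:ℝ)+1) := by positivity
          linarith
        calc P {ω | U ω = c} ≤ P ({ω | U ω ≤ c} \ {ω | U ω ≤ c - 1/((n:ℝ)+1)}) :=
              measure_mono hsub
          _ = P {ω | U ω ≤ c} - P {ω | U ω ≤ c - 1/((n:ℝ)+1)} :=
              measure_diff hsub2 (hUmeas measurableSet_Iic).nullMeasurableSet
                (measure_ne_top P _)
          _ ≤ ENNReal.ofReal (1/((n:ℝ)+1)) := by
              rw [hUle c hc, hUle _ (by
                have hpos : (0:ℝ) < 1/((n:ℝ)+1) := by positivity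
                linarith)]
              rcases le_or_gt 0 (c - 1/((n:ℝ)+1)) with h | h
              · rw [← ENNReal.ofReal_sub _ h]
                apply ENNReal.ofReal_le_ofReal
                linarith
              · refine le_trans (tsub_le_self.trans ?_) le_rfl
                apply ENNReal.ofReal_le_ofReal
                linarith
      have hlim : Tendsto (fun n : ℕ => ENNReal.ofReal (1/((n:ℝ)+1))) atTop (𝓝 0) := by
        rw [show (0:ℝ≥0∞) = ENNReal.ofReal 0 from by simp]
        apply (ENNReal.continuous_ofReal.tendsto 0).comp
        exact tendsto_one_div_add_atTop_nhds_zero_nat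
      have := ge_of_tendsto hlim (Eventually.of_forall key)
      exact le_antisymm this zero_le
    · have hsub : {ω | U ω = c} ⊆ {ω | U ω ≤ 1}ᶜ := by
        intro ω h
        simp only [mem_setOf_eq] at h
        simp only [mem_compl_iff, mem_setOf_eq, not_le]
        rw [h]; exact hc
      refine le_antisymm (le_trans (measure_mono hsub) ?_) zero_le
      rw [measure_compl (s := {ω | U ω ≤ 1}) (hUmeas measurableSet_Iic) (measure_ne_top P _),
        measure_univ, hUge1 1 le_rfl]
      simp
  -- the shifted uniform
  set U' : Ω → ℝ := fun ω => if U ω ≤ 1 - S then U ω + S else U ω + S - 1 with hU'def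
  have hU'meas : Measurable U' := by
    apply Measurable.ite (measurableSet_le hUmeas measurable_const)
    · exact hUmeas.add_const S
    · exact (hUmeas.add_const S).sub_const 1
  have hU'01 : ∀ ω, 0 ≤ U' ω ∧ U' ω ≤ 1 := by
    intro ω
    have h1 := (hU01 ω).1
    have h2 := (hU01 ω).2
    rw [hU'def]
    by_cases h : U ω ≤ 1 - S <;> simp only [h, if_true, if_false] <;>
      constructor <;> first
      | linarith
      | (push_neg at h; linarith)
  have hU'le : ∀ v : ℝ, 0 ≤ v → v ≤ 1 → P {ω | U' ω ≤ v} = ENNReal.ofReal v := by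
    intro v h0 h1
    have hset : {ω | U' ω ≤ v} =
        {ω | U ω ≤ v - S} ∪ ({ω | U ω ≤ v + 1 - S} \ {ω | U ω ≤ 1 - S}) := by
      ext ω
      simp only [mem_setOf_eq, mem_union, mem_diff, not_le]
      rw [hU'def]
      by_cases h : U ω ≤ 1 - S
      · simp only [if_pos h]
        constructor
        · intro hh; exact Or.inl (by linarith)
        · rintro (hh | ⟨hh, hgt⟩)
          · linarith
          · linarith
      · simp only [if_neg h]
        push_neg at h
        constructor
        · intro hh; exact Or.inr ⟨by linarith, h⟩
        · rintro (hh | ⟨hh, _⟩)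
          · linarith
          · linarith
    have hdisj : Disjoint {ω | U ω ≤ v - S} ({ω | U ω ≤ v + 1 - S} \ {ω | U ω ≤ 1 - S}) := by
      refine Set.disjoint_left.mpr fun ω hω1 hω2 => ?_
      simp only [mem_setOf_eq] at hω1
      obtain ⟨_, hgt⟩ := hω2
      simp only [mem_setOf_eq] at hgt
      exact hgt (by linarith)
    have hsub : {ω | U ω ≤ 1 - S} ⊆ {ω | U ω ≤ v + 1 - S} :=
      setOf_subset_setOf.mpr fun ω h => by linarith
    rw [hset, measure_union hdisj
      (((hUmeas measurableSet_Iic)).diff (hUmeas measurableSet_Iic)),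
      measure_diff hsub (hUmeas measurableSet_Iic).nullMeasurableSet (measure_ne_top P _)]
    rcases le_or_gt v S with hvS | hvS
    · rw [hUle (v - S) (by linarith), hUle (v + 1 - S) (by linarith),
        hUle (1 - S) (by linarith)]
      rw [ENNReal.ofReal_eq_zero.mpr (by linarith), zero_add,
        ← ENNReal.ofReal_sub _ (by linarith : (0:ℝ) ≤ 1 - S)]
      congr 1; ring
    · rw [hUle (v - S) (by linarith), hUge1 (v + 1 - S) (by linarith),
        hUle (1 - S) (by linarith)]
      rw [show (1:ℝ≥0∞) = ENNReal.ofReal 1 from ENNReal.ofReal_one.symm,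
        ← ENNReal.ofReal_sub _ (by linarith : (0:ℝ) ≤ 1 - S),
        ← ENNReal.ofReal_add (by linarith) (by linarith)]
      congr 1; ring
  have hU'eq1 : P {ω | U' ω = 1} = 0 := by
    have key : ∀ n : ℕ, P {ω | U' ω = 1} ≤ ENNReal.ofReal (1/((n:ℝ)+1)) := by
      intro n
      have hpos : (0:ℝ) < 1/((n:ℝ)+1) := by positivity
      have hple : (1:ℝ)/((n:ℝ)+1) ≤ 1 := by
        rw [div_le_one (by positivity)]; push_cast; linarith
      have hsub : {ω | U' ω = 1} ⊆
          {ω | U' ω ≤ 1} \ {ω | U' ω ≤ 1 - 1/((n:ℝ)+1)} := by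
        intro ω h
        simp only [mem_setOf_eq] at h
        exact ⟨le_of_eq h, by simp only [mem_setOf_eq]; linarith⟩
      have hsub2 : {ω | U' ω ≤ 1 - 1/((n:ℝ)+1)} ⊆ {ω | U' ω ≤ 1} :=
        setOf_subset_setOf.mpr fun ω h => by linarith
      calc P {ω | U' ω = 1} ≤ _ := measure_mono hsub
        _ = P {ω | U' ω ≤ 1} - P {ω | U' ω ≤ 1 - 1/((n:ℝ)+1)} :=
            measure_diff hsub2 (hU'meas measurableSet_Iic).nullMeasurableSet
              (measure_ne_top P _)
        _ ≤ ENNReal.ofReal (1/((n:ℝ)+1)) := by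
            rw [hU'le 1 zero_le_one le_rfl, hU'le _ (by linarith) (by linarith),
              ← ENNReal.ofReal_sub _ (by linarith : (0:ℝ) ≤ 1 - 1/((n:ℝ)+1))]
            apply ENNReal.ofReal_le_ofReal
            linarith
    have hlim : Tendsto (fun n : ℕ => ENNReal.ofReal (1/((n:ℝ)+1))) atTop (𝓝 0) := by
      rw [show (0:ℝ≥0∞) = ENNReal.ofReal 0 from by simp]
      apply (ENNReal.continuous_ofReal.tendsto 0).comp
      exact tendsto_one_div_add_atTop_nhds_zero_nat
    exact le_antisymm (ge_of_tendsto hlim (Eventually.of_forall key)) zero_le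
  have hU'eq0 : P {ω | U' ω ≤ 0} = 0 := by
    rw [hU'le 0 le_rfl zero_le_one]; simp
  -- the set C of good quantile arguments
  set C : Set ℝ := {u | 0 < u ∧ ∃ z, u ≤ FV z} with hCdef
  have hCcases : C = Ioc 0 1 ∨ C = Ioo 0 1 := by
    by_cases hone : ∃ z : ℝ, 1 ≤ FV z
    · left
      ext u
      simp only [hCdef, mem_setOf_eq, mem_Ioc]
      constructor
      · rintro ⟨h0, z, hz⟩; exact ⟨h0, le_trans hz (hFV1 z)⟩
      · rintro ⟨h0, h1⟩
        obtain ⟨z, hz⟩ := hone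
        exact ⟨h0, z, le_trans h1 hz⟩
    · right
      push_neg at hone
      ext u
      simp only [hCdef, mem_setOf_eq, mem_Ioo]
      constructor
      · rintro ⟨h0, z, hz⟩
        refine ⟨h0, lt_of_le_of_lt hz (hone z)⟩
      · rintro ⟨h0, h1⟩
        obtain ⟨z, hz⟩ := (hFVtop.eventually (eventually_gt_nhds h1)).exists
        exact ⟨h0, z, hz.le⟩
  have hCmeas : MeasurableSet C := by
    rcases hCcases with h | h <;> rw [h] <;> measurability
  have hhalf : (1/2 : ℝ) ∈ C := by
    rcases hCcases with h | h <;> rw [h] <;> norm_num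
  set U'' : Ω → ℝ := fun ω => if U' ω ∈ C then U' ω else 1/2 with hU''def
  have hU''meas : Measurable U'' := Measurable.ite (hU'meas hCmeas) hU'meas measurable_const
  have hU''C : ∀ ω, U'' ω ∈ C := by
    intro ω; rw [hU''def]
    by_cases h : U' ω ∈ C
    · simpa [if_pos h] using h
    · simpa [if_neg h] using hhalf
  have hU''ae : ∀ᵐ ω ∂P, U'' ω = U' ω := by
    have hsub : {ω | U'' ω ≠ U' ω} ⊆ {ω | U' ω ≤ 0} ∪ {ω | U' ω = 1} := by
      intro ω h
      simp only [mem_setOf_eq, hU''def] at h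
      have hnC : U' ω ∉ C := by
        by_contra hC
        rw [if_pos hC] at h
        exact h rfl
      rcases le_or_gt (U' ω) 0 with h0 | h0
      · exact Or.inl h0
      · right
        simp only [mem_setOf_eq]
        have h1 := (hU'01 ω).2
        rcases eq_or_lt_of_le h1 with he | hlt
        · exact he
        · exfalso
          apply hnC
          rcases hCcases with hc | hc <;> rw [hc]
          · exact ⟨h0, h1⟩
          · exact ⟨h0, hlt⟩
    have hnull : P ({ω | U' ω ≤ 0} ∪ {ω | U' ω = 1}) = 0 :=
      measure_union_null hU'eq0 hU'eq1
    rw [ae_iff]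
    exact measure_mono_null hsub hnull
  -- the quantile function composed
  set Q : ℝ → ℝ := fun u => sInf {z | u ≤ FV z} with hQdef
  have hQbdd : ∀ u ∈ C, BddBelow {z | u ≤ FV z} := by
    rintro u ⟨h0, _⟩
    obtain ⟨z0, hz0⟩ := (hFVbot.eventually (eventually_lt_nhds h0)).exists
    refine ⟨z0, fun z hz => ?_⟩
    by_contra hc
    push_neg at hc
    exact absurd (le_trans hz (hFVmono hc.le)) (not_le.mpr hz0)
  have hQne : ∀ u ∈ C, {z | u ≤ FV z}.Nonempty := fun u hu => hu.2
  have hQle : ∀ u ∈ C, ∀ t : ℝ, Q u ≤ t ↔ u ≤ FV t := by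
    intro u hu t
    constructor
    · intro h
      have key : ∀ n : ℕ, u ≤ FV (t + 1/((n:ℝ)+1)) := by
        intro n
        have hpos : (0:ℝ) < 1/((n:ℝ)+1) := by positivity
        have h2 : Q u < t + 1/((n:ℝ)+1) := lt_of_le_of_lt h (by linarith)
        obtain ⟨z, hz, hzlt⟩ := (csInf_lt_iff (hQbdd u hu) (hQne u hu)).mp h2
        exact le_trans hz (hFVmono hzlt.le)
      have htend : Tendsto (fun n : ℕ => FV (t + 1/((n:ℝ)+1))) atTop (𝓝 (FV t)) := by
        apply (hFVrc t).comp
        rw [tendsto_nhdsWithin_iff]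
        constructor
        · have : Tendsto (fun n : ℕ => t + 1/((n:ℝ)+1)) atTop (𝓝 t) := by
            have h2 := tendsto_one_div_add_atTop_nhds_zero_nat (𝕜 := ℝ)
            simpa using tendsto_const_nhds.add h2
          exact this
        · refine Eventually.of_forall fun n => ?_
          simp only [mem_Ioi]
          have : (0:ℝ) < 1/((n:ℝ)+1) := by positivity
          linarith
      exact ge_of_tendsto htend (Eventually.of_forall key)
    · intro h
      exact csInf_le (hQbdd u hu) h
  set V : Ω → ℝ := fun ω => Q (U'' ω) with hVdef
  have hVset : ∀ t : ℝ, {ω | V ω ≤ t} = {ω | U'' ω ≤ FV t} := by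
    intro t
    ext ω
    simp only [mem_setOf_eq, hVdef]
    exact hQle (U'' ω) (hU''C ω) t
  have hVmeas : Measurable V := by
    apply measurable_of_Iic
    intro t
    have : V ⁻¹' Iic t = {ω | U'' ω ≤ FV t} := hVset t
    rw [this]
    exact hU''meas measurableSet_Iic
  have hVcdf : ∀ z : ℝ, (P {ω | V ω ≤ z}).toReal = FV z := by
    intro z
    rw [hVset z]
    have hae : {ω | U'' ω ≤ FV z} =ᵐ[P] {ω | U' ω ≤ FV z} := by
      rw [eventuallyEq_set]
      filter_upwards [hU''ae] with ω h
      simp only [mem_setOf_eq, h]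
    rw [measure_congr hae, hU'le (FV z) (hFV0 z) (hFV1 z),
      ENNReal.toReal_ofReal (hFV0 z)]
  -- lower bound
  have hlb : ∀ p ∈ {p : ℝ | ∃ V : Ω → ℝ, Measurable V ∧
      (∀ z : ℝ, (P {ω | V ω ≤ z}).toReal = FV z) ∧
      p = (P {ω | V ω < W ω}).toReal}, S ≤ p := by
    rintro p ⟨V', hV'm, hV'cdf, rfl⟩
    refine ciSup_le fun z => ?_
    have hsub : {ω | V' ω ≤ z} ⊆ {ω | V' ω < W ω} ∪ {ω | W ω ≤ z} := by
      intro ω h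
      simp only [mem_setOf_eq] at h
      by_cases hw : W ω ≤ z
      · exact Or.inr hw
      · push_neg at hw
        exact Or.inl (lt_of_le_of_lt h hw)
    have hle : P {ω | V' ω ≤ z} ≤ P {ω | V' ω < W ω} + P {ω | W ω ≤ z} :=
      le_trans (measure_mono hsub) (measure_union_le _ _)
    have := ENNReal.toReal_mono
      (by
        refine ENNReal.add_ne_top.mpr ⟨measure_ne_top P _, measure_ne_top P _⟩)
      hle
    rw [ENNReal.toReal_add (measure_ne_top P _) (measure_ne_top P _), hV'cdf z] at this
    have hFWz : (P {ω | W ω ≤ z}).toReal = FW z := by rw [hFW]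
    rw [hFWz] at this
    linarith
  -- upper bound via our V
  have hupper : (P {ω | V ω < W ω}).toReal ≤ S := by
    set N₂ : Set Ω := ⋃ q : ℚ, {ω | (q:ℝ) < W ω ∧ U ω ≤ FW q} with hN₂def
    have hN₂null : P N₂ = 0 := by
      rw [hN₂def]
      refine measure_iUnion_null fun q => ?_
      have hsub : {ω | (q:ℝ) < W ω ∧ U ω ≤ FW q} ⊆ {ω | U ω = FW q} := by
        rintro ω ⟨h1, h2⟩
        exact le_antisymm h2 (hUdom ω q h1)
      exact measure_mono_null hsub (hUeq0 (FW q))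
    have hNAnull : P {ω | U'' ω ≠ U' ω} = 0 := by
      rw [← ae_iff] at *
      exact hU''ae
    have hsubset : {ω | V ω < W ω} ⊆
        {ω | 1 - S < U ω} ∪ ({ω | U'' ω ≠ U' ω} ∪ N₂) := by
      intro ω hVW
      simp only [mem_setOf_eq] at hVW
      by_cases hU1S : U ω ≤ 1 - S
      · by_cases hUU : U'' ω = U' ω
        · right; right
          have hU'val : U' ω = U ω + S := by rw [hU'def]; simp [if_pos hU1S]
          have hu : U'' ω ∈ C := hU''C ω
          have hQlt : Q (U'' ω) < W ω := hVW
          obtain ⟨z, hz, hzlt⟩ :=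
            (csInf_lt_iff (hQbdd _ hu) (hQne _ hu)).mp hQlt
          simp only [mem_setOf_eq] at hz
          obtain ⟨q, hq1, hq2⟩ := exists_rat_btwn hzlt
          refine mem_iUnion.mpr ⟨q, ?_⟩
          simp only [mem_setOf_eq]
          refine ⟨hq2, ?_⟩
          have h1 : FV z - FW z ≤ S := hSub z
          have h2 : FW z ≤ FW q := hFWmono hq1.le
          have h3 : U'' ω ≤ FV z := hz
          rw [hUU, hU'val] at h3
          linarith
        · right; left; exact hUU
      · left; push_neg at hU1S; exact hU1S
    have hP1 : P {ω | 1 - S < U ω} = ENNReal.ofReal S := by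
      have hcompl : {ω | 1 - S < U ω} = {ω | U ω ≤ 1 - S}ᶜ := by
        ext ω; simp [not_le]
      rw [hcompl, measure_compl (s := {ω | U ω ≤ 1 - S}) (hUmeas measurableSet_Iic)
        (measure_ne_top P _),
        measure_univ, hUle (1 - S) (by linarith),
        show (1:ℝ≥0∞) = ENNReal.ofReal 1 from ENNReal.ofReal_one.symm,
        ← ENNReal.ofReal_sub _ (by linarith : (0:ℝ) ≤ 1 - S)]
      congr 1; ring
    have hPle : P {ω | V ω < W ω} ≤ ENNReal.ofReal S := by
      calc P {ω | V ω < W ω} ≤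
          P ({ω | 1 - S < U ω} ∪ ({ω | U'' ω ≠ U' ω} ∪ N₂)) := measure_mono hsubset
        _ ≤ P {ω | 1 - S < U ω} + P ({ω | U'' ω ≠ U' ω} ∪ N₂) := measure_union_le _ _
        _ = P {ω | 1 - S < U ω} := by
            rw [measure_union_null hNAnull hN₂null, add_zero]
        _ = ENNReal.ofReal S := hP1
    calc (P {ω | V ω < W ω}).toReal ≤ (ENNReal.ofReal S).toReal :=
        ENNReal.toReal_mono ENNReal.ofReal_ne_top hPle
      _ = S := ENNReal.toReal_ofReal hS0
  have hmem : (P {ω | V ω < W ω}).toReal ∈ {p : ℝ | ∃ V : Ω → ℝ, Measurable V ∧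
      (∀ z : ℝ, (P {ω | V ω ≤ z}).toReal = FV z) ∧
      p = (P {ω | V ω < W ω}).toReal} := ⟨V, hVmeas, hVcdf, rfl⟩
  have heq : (P {ω | V ω < W ω}).toReal = S :=
    le_antisymm hupper (hlb _ hmem)
  apply le_antisymm
  · calc sInf _ ≤ (P {ω | V ω < W ω}).toReal := csInf_le ⟨S, hlb⟩ hmem
      _ = S := heq
  · exact le_csInf ⟨_, hmem⟩ hlb
end

section
/- Let (Ω, 𝔽, ℙ) be an atomless probability space, let W be a real-valued random variable with cdf F_W, and let F_V be a cdf on ℝ such that at least one of F_W, F_V is continuous. Then, with all suprema and infima taken over random variables V on (Ω, 𝔽, ℙ) with cdf F_V: (i) sup_V ℙ(W ≥ V) = sup_V ℙ(W > V); (ii) inf_V ℙ(W < V) = inf_V ℙ(W ≤ V); (iii) inf_V ℙ(W > V) = inf_V ℙ(W ≥ V). -/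
open MeasureTheory Filter Topology

section Helpers
open Set

lemma seq_lim : Tendsto (fun n : ℕ => (1:ℝ)/(n+1)) atTop (𝓝 0) :=
  tendsto_one_div_add_atTop_nhds_zero_nat

lemma real_le_of_forall_pos {a b : ℝ} (h : ∀ ε : ℝ, 0 < ε → a ≤ b + ε) : a ≤ b := by
  by_contra hc
  push_neg at hc
  have := h ((a - b)/2) (by linarith)
  linarith

lemma pointCont {Ω : Type*} [MeasurableSpace Ω] (P : Measure Ω) [IsProbabilityMeasure P]
    (X : Ω → ℝ) (hX : Measurable X) (Fx : ℝ → ℝ)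
    (hFx : ∀ z, (P {ω | X ω ≤ z}).toReal = Fx z) (c : ℝ) (hc : ContinuousAt Fx c) :
    P {ω | X ω = c} = 0 := by
  have hmeq : ∀ z, P {ω | X ω ≤ z} = ENNReal.ofReal (Fx z) := by
    intro z
    rw [← hFx z, ENNReal.ofReal_toReal (measure_ne_top _ _)]
  have hseq : Tendsto (fun n : ℕ => c - 1/(n+1:ℝ)) atTop (𝓝 c) := by
    have := seq_lim.const_sub c
    simpa using this
  have hlt : P {ω | X ω < c} = ENNReal.ofReal (Fx c) := by
    have hmono : Monotone (fun n : ℕ => {ω | X ω ≤ c - 1/(n+1:ℝ)}) := by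
      intro i j hij ω (h : X ω ≤ _)
      refine h.trans ?_
      have hc1 : (i:ℝ) ≤ j := Nat.cast_le.mpr hij
      have h1 : (1:ℝ)/(j+1) ≤ 1/(i+1) := by
        apply one_div_le_one_div_of_le
        · positivity
        · linarith
      linarith
    have hU : ⋃ n : ℕ, {ω | X ω ≤ c - 1/(n+1:ℝ)} = {ω | X ω < c} := by
      ext ω
      simp only [mem_iUnion, mem_setOf_eq]
      constructor
      · rintro ⟨n, hn⟩
        have : (0:ℝ) < 1/(n+1) := by positivity
        linarith
      · intro h
        obtain ⟨n, hn⟩ := exists_nat_one_div_lt (show (0:ℝ) < c - X ω by linarith)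
        exact ⟨n, by push_cast at hn ⊢; linarith⟩
    have h1 := tendsto_measure_iUnion_atTop (μ := P) hmono
    rw [hU] at h1
    have h2 : Tendsto (fun n : ℕ => P {ω | X ω ≤ c - 1/(n+1:ℝ)}) atTop
        (𝓝 (ENNReal.ofReal (Fx c))) := by
      simp only [hmeq]
      exact (ENNReal.continuous_ofReal.tendsto _).comp ((hc.tendsto).comp hseq)
    exact tendsto_nhds_unique h1 h2
  have hdiff : {ω | X ω = c} = {ω | X ω ≤ c} \ {ω | X ω < c} := by
    ext ω; simp only [mem_setOf_eq, mem_diff, not_lt]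
    constructor
    · rintro rfl; exact ⟨le_refl _, le_refl _⟩
    · rintro ⟨h1, h2⟩; exact le_antisymm h1 h2
  have hsub : {ω | X ω < c} ⊆ {ω | X ω ≤ c} := fun ω (h : X ω < c) => h.le
  rw [hdiff]
  rw [measure_diff hsub (hX measurableSet_Iio).nullMeasurableSet (measure_ne_top _ _),
    hlt, hmeq c, tsub_self]



lemma meas_union_null' {Ω : Type*} [MeasurableSpace Ω] (P : Measure Ω) {s t : Set Ω}
    (ht : P t = 0) : P (s ∪ t) = P s :=
  le_antisymm (by simpa [ht] using measure_union_le (μ := P) s t) (measure_mono subset_union_left)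

lemma key {Ω : Type*} [MeasurableSpace Ω] (P : Measure Ω) [IsProbabilityMeasure P]
    (V : Ω → ℝ) (hV : Measurable V) (D : Set ℝ) (hDc : D.Countable)
    (hD0 : ∀ c ∉ D, P {ω | V ω = c} = 0) {ε : ℝ} (hε : 0 < ε) :
    ∃ Vd Vu : Ω → ℝ, Measurable Vd ∧ Measurable Vu ∧
      (∀ z, P {ω | Vd ω ≤ z} = P {ω | V ω ≤ z}) ∧
      (∀ z, P {ω | Vu ω ≤ z} = P {ω | V ω ≤ z}) ∧
      ∃ Bd Bu : Set Ω, P Bd ≤ ENNReal.ofReal ε ∧ P Bu ≤ ENNReal.ofReal ε ∧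
      (∀ ω, Vd ω < V ω ∨ ω ∈ Bd ∨ (Vd ω = V ω ∧ V ω ∈ D)) ∧
      (∀ ω, V ω < Vu ω ∨ ω ∈ Bu ∨ (Vu ω = V ω ∧ V ω ∈ D)) := by
  classical
  have hDm : MeasurableSet D := hDc.measurableSet
  have hVD : MeasurableSet {ω | V ω ∈ D} := hV hDm
  by_cases hm0 : P {ω | V ω ∉ D} = 0
  · refine ⟨V, V, hV, hV, fun z => rfl, fun z => rfl,
      {ω | V ω ∉ D}, {ω | V ω ∉ D}, by rw [hm0]; exact zero_le, by rw [hm0]; exact zero_le,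
      ?_, ?_⟩ <;>
    · intro ω
      by_cases h : V ω ∈ D
      · exact Or.inr (Or.inr ⟨rfl, h⟩)
      · exact Or.inr (Or.inl h)
  -- main case
  set G : ℝ → ℝ := fun x => (P {ω | V ω ∉ D ∧ V ω ≤ x}).toReal with hGdef
  set m : ℝ := (P {ω | V ω ∉ D}).toReal with hmdef
  have hmpos : 0 < m := ENNReal.toReal_pos hm0 (measure_ne_top _ _)
  have hmeasx : ∀ x : ℝ, MeasurableSet {ω | V ω ∉ D ∧ V ω ≤ x} := by
    intro x
    exact hVD.compl.inter (hV measurableSet_Iic)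
  have hGmono : Monotone G := by
    intro a b hab
    exact ENNReal.toReal_mono (measure_ne_top _ _)
      (measure_mono (fun ω h => ⟨h.1, h.2.trans hab⟩))
  have hGnn : ∀ x, 0 ≤ G x := fun x => ENNReal.toReal_nonneg
  have hGlem : ∀ x, G x ≤ m := fun x =>
    ENNReal.toReal_mono (measure_ne_top _ _) (measure_mono (fun ω h => h.1))
  have hGmeas : Measurable G := hGmono.measurable
  -- right continuity along sequences
  have hinv_anti : ∀ i j : ℕ, i ≤ j → (1:ℝ)/(j+1) ≤ 1/(i+1) := by
    intro i j hij
    have hc1 : (i:ℝ) ≤ j := Nat.cast_le.mpr hij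
    apply one_div_le_one_div_of_le
    · positivity
    · linarith
  have hinv_pos : ∀ n : ℕ, (0:ℝ) < 1/(n+1) := by intro n; positivity
  have hGrc : ∀ x : ℝ, Tendsto (fun n : ℕ => G (x + 1/(n+1))) atTop (𝓝 (G x)) := by
    intro x
    have hanti : Antitone (fun n : ℕ => {ω | V ω ∉ D ∧ V ω ≤ x + 1/(n+1)}) := by
      intro i j hij ω h
      exact ⟨h.1, h.2.trans (by linarith [hinv_anti i j hij])⟩
    have hI : ⋂ n : ℕ, {ω | V ω ∉ D ∧ V ω ≤ x + 1/(n+1)} = {ω | V ω ∉ D ∧ V ω ≤ x} := by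
      ext ω
      simp only [mem_iInter, mem_setOf_eq]
      constructor
      · intro h
        refine ⟨(h 0).1, ?_⟩
        by_contra hlt
        push_neg at hlt
        obtain ⟨n, hn⟩ := exists_nat_one_div_lt (show (0:ℝ) < V ω - x by linarith)
        have := (h n).2
        push_cast at hn
        linarith
      · intro h n
        exact ⟨h.1, h.2.trans (by linarith [hinv_pos n])⟩
    have h1 := tendsto_measure_iInter_atTop (μ := P)
      (fun n => (hmeasx _).nullMeasurableSet) hanti ⟨0, measure_ne_top _ _⟩
    rw [hI] at h1
    exact ((ENNReal.tendsto_toReal (measure_ne_top _ _)).comp h1 : _)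
  have hGlc : ∀ x : ℝ, Tendsto (fun n : ℕ => G (x - 1/(n+1))) atTop (𝓝 (G x)) := by
    intro x
    have hmono : Monotone (fun n : ℕ => {ω | V ω ∉ D ∧ V ω ≤ x - 1/(n+1)}) := by
      intro i j hij ω h
      exact ⟨h.1, h.2.trans (by linarith [hinv_anti i j hij])⟩
    have hU : ⋃ n : ℕ, {ω | V ω ∉ D ∧ V ω ≤ x - 1/(n+1)} = {ω | V ω ∉ D ∧ V ω < x} := by
      ext ω
      simp only [mem_iUnion, mem_setOf_eq]
      constructor
      · rintro ⟨n, hn⟩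
        exact ⟨hn.1, by linarith [hinv_pos n, hn.2]⟩
      · rintro ⟨h1, h2⟩
        obtain ⟨n, hn⟩ := exists_nat_one_div_lt (show (0:ℝ) < x - V ω by linarith)
        push_cast at hn
        exact ⟨n, h1, by linarith⟩
    have hPeq : P {ω | V ω ∉ D ∧ V ω < x} = P {ω | V ω ∉ D ∧ V ω ≤ x} := by
      have hsplit : {ω | V ω ∉ D ∧ V ω ≤ x} =
          {ω | V ω ∉ D ∧ V ω < x} ∪ {ω | V ω ∉ D ∧ V ω = x} := by
        ext ω
        simp only [mem_setOf_eq, mem_union]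
        constructor
        · rintro ⟨h1, h2⟩
          rcases lt_or_eq_of_le h2 with h | h
          · exact Or.inl ⟨h1, h⟩
          · exact Or.inr ⟨h1, h⟩
        · rintro (⟨h1, h2⟩ | ⟨h1, h2⟩)
          · exact ⟨h1, h2.le⟩
          · exact ⟨h1, h2.le⟩
      have hnull : P {ω | V ω ∉ D ∧ V ω = x} = 0 := by
        by_cases hx : x ∈ D
        · have : {ω | V ω ∉ D ∧ V ω = x} = ∅ := by
            ext ω
            simp only [mem_setOf_eq, mem_empty_iff_false, iff_false, not_and]
            intro h1 h2
            exact h1 (h2 ▸ hx)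
          rw [this, measure_empty]
        · exact measure_mono_null (fun ω h => h.2) (hD0 x hx)
      rw [hsplit, meas_union_null' P hnull]
    have h1 := tendsto_measure_iUnion_atTop (μ := P) hmono
    rw [hU, hPeq] at h1
    exact ((ENNReal.tendsto_toReal (measure_ne_top _ _)).comp h1 : _)
  have hGbot : Tendsto (fun n : ℕ => G (-(n:ℝ))) atTop (𝓝 0) := by
    have hanti : Antitone (fun n : ℕ => {ω | V ω ∉ D ∧ V ω ≤ -(n:ℝ)}) := by
      intro i j hij ω h
      have : (i:ℝ) ≤ j := Nat.cast_le.mpr hij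
      exact ⟨h.1, h.2.trans (by linarith)⟩
    have hI : ⋂ n : ℕ, {ω | V ω ∉ D ∧ V ω ≤ -(n:ℝ)} = (∅ : Set Ω) := by
      ext ω
      simp only [mem_iInter, mem_setOf_eq, mem_empty_iff_false, iff_false, not_forall]
      obtain ⟨n, hn⟩ := exists_nat_gt (-(V ω))
      exact ⟨n, fun h => absurd h.2 (by push_neg; linarith)⟩
    have h1 := tendsto_measure_iInter_atTop (μ := P)
      (fun n => (hmeasx _).nullMeasurableSet) hanti ⟨0, measure_ne_top _ _⟩
    rw [hI, measure_empty] at h1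
    have := ((ENNReal.tendsto_toReal (by simp)).comp h1 : _)
    exact (by simpa using this : Tendsto (ENNReal.toReal ∘ ⇑P ∘ fun n : ℕ => {ω | V ω ∉ D ∧ V ω ≤ -(n:ℝ)}) atTop (𝓝 0))
  have hGtop : Tendsto (fun n : ℕ => G (n:ℝ)) atTop (𝓝 m) := by
    have hmono : Monotone (fun n : ℕ => {ω | V ω ∉ D ∧ V ω ≤ (n:ℝ)}) := by
      intro i j hij ω h
      have : (i:ℝ) ≤ j := Nat.cast_le.mpr hij
      exact ⟨h.1, h.2.trans (by linarith)⟩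
    have hU : ⋃ n : ℕ, {ω | V ω ∉ D ∧ V ω ≤ (n:ℝ)} = {ω | V ω ∉ D} := by
      ext ω
      simp only [mem_iUnion, mem_setOf_eq]
      constructor
      · rintro ⟨n, hn⟩; exact hn.1
      · intro h
        obtain ⟨n, hn⟩ := exists_nat_gt (V ω)
        exact ⟨n, h, hn.le⟩
    have h1 := tendsto_measure_iUnion_atTop (μ := P) hmono
    rw [hU] at h1
    exact ((ENNReal.tendsto_toReal (measure_ne_top _ _)).comp h1 : _)
  -- the distribution of G ∘ V off the atoms
  have hmid : ∀ a : ℝ, 0 < a → a < m → P {ω | V ω ∉ D ∧ G (V ω) ≤ a} = ENNReal.ofReal a := by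
    intro a ha0 ham
    set S : Set ℝ := {x | G x ≤ a} with hSdef
    have hSne : S.Nonempty := by
      obtain ⟨n, hn⟩ := (hGbot.eventually_lt_const ha0).exists
      exact ⟨-(n:ℝ), hn.le⟩
    have hSbdd : BddAbove S := by
      obtain ⟨n, hn⟩ := (hGtop.eventually_const_lt ham).exists
      refine ⟨n, fun y hy => ?_⟩
      by_contra hgt
      push_neg at hgt
      have h2 := hGmono hgt.le
      have h3 : G y ≤ a := hy
      linarith
    set xa := sSup S with hxadef
    have hxa_le : G xa ≤ a := by
      have hev : ∀ n : ℕ, G (xa - 1/(n+1)) ≤ a := by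
        intro n
        obtain ⟨y, hyS, hy⟩ := exists_lt_of_lt_csSup hSne
          (show xa - 1/(n+1) < xa by linarith [hinv_pos n])
        exact (hGmono hy.le).trans hyS
      exact le_of_tendsto (hGlc xa) (Eventually.of_forall hev)
    have hxa_ge : a ≤ G xa := by
      have hev : ∀ n : ℕ, a ≤ G (xa + 1/(n+1)) := by
        intro n
        by_contra h
        push_neg at h
        have h1 : xa + 1/(n+1) ∈ S := h.le
        have h2 := le_csSup hSbdd h1
        linarith [hinv_pos n]
      exact ge_of_tendsto (hGrc xa) (Eventually.of_forall hev)
    have hset : {ω | V ω ∉ D ∧ G (V ω) ≤ a} = {ω | V ω ∉ D ∧ V ω ≤ xa} := by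
      ext ω
      simp only [mem_setOf_eq, and_congr_right_iff]
      intro _
      constructor
      · intro h
        exact le_csSup hSbdd h
      · intro h
        exact (hGmono h).trans hxa_le
    have heq : P {ω | V ω ∉ D ∧ V ω ≤ xa} = ENNReal.ofReal (G xa) :=
      (ENNReal.ofReal_toReal (measure_ne_top _ _)).symm
    rw [hset, heq, le_antisymm hxa_le hxa_ge]
  have hPfull : ∀ a : ℝ, P {ω | V ω ∉ D ∧ G (V ω) ≤ a} =
      ENNReal.ofReal (max 0 (min a m)) := by
    intro a
    rcases le_or_gt a 0 with ha | ha
    · have hmax : max 0 (min a m) = 0 := by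
        rw [max_eq_left]
        exact (min_le_left a m).trans ha
      rw [hmax, ENNReal.ofReal_zero]
      have hb : ∀ n : ℕ, 1/(n+1:ℝ) < m →
          P {ω | V ω ∉ D ∧ G (V ω) ≤ a} ≤ ENNReal.ofReal (1/(n+1)) := by
        intro n hn
        rw [← hmid (1/(n+1)) (hinv_pos n) hn]
        exact measure_mono (fun ω h => ⟨h.1, h.2.trans (ha.trans (hinv_pos n).le)⟩)
      have hev : ∀ᶠ n : ℕ in atTop,
          P {ω | V ω ∉ D ∧ G (V ω) ≤ a} ≤ ENNReal.ofReal (1/(n+1:ℝ)) := by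
        filter_upwards [seq_lim.eventually_lt_const hmpos] with n hn using hb n hn
      have htend : Tendsto (fun n : ℕ => ENNReal.ofReal (1/(n+1:ℝ))) atTop (𝓝 0) := by
        simpa [Function.comp_def] using (ENNReal.continuous_ofReal.tendsto _).comp seq_lim
      exact le_antisymm (ge_of_tendsto htend hev) zero_le
    · rcases le_or_gt m a with ham | ham
      · have hset : {ω | V ω ∉ D ∧ G (V ω) ≤ a} = {ω | V ω ∉ D} := by
          ext ω
          simp only [mem_setOf_eq, and_iff_left_iff_imp]
          intro _
          exact (hGlem _).trans ham
        have hmax : max 0 (min a m) = m := by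
          rw [min_eq_right ham, max_eq_right hmpos.le]
        rw [hset, hmax]
        exact (ENNReal.ofReal_toReal (measure_ne_top _ _)).symm
      · have hmax : max 0 (min a m) = a := by
          rw [min_eq_left ham.le, max_eq_right ha.le]
        rw [hmax]
        exact hmid a ha ham
  have hPlt : ∀ a : ℝ, 0 < a → a < m →
      P {ω | V ω ∉ D ∧ G (V ω) < a} = ENNReal.ofReal a := by
    intro a ha0 ham
    apply le_antisymm
    · calc P {ω | V ω ∉ D ∧ G (V ω) < a} ≤ P {ω | V ω ∉ D ∧ G (V ω) ≤ a} :=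
            measure_mono (fun ω h => ⟨h.1, h.2.le⟩)
        _ = ENNReal.ofReal a := hmid a ha0 ham
    · have hev : ∀ n : ℕ, ENNReal.ofReal (a - 1/(n+1)) ≤
          P {ω | V ω ∉ D ∧ G (V ω) < a} := by
        intro n
        have h1 : max 0 (min (a - 1/(n+1:ℝ)) m) ≥ a - 1/(n+1) := by
          have hmin : min (a - 1/(n+1:ℝ)) m = a - 1/(n+1) :=
            min_eq_left (by linarith [hinv_pos n])
          rw [hmin]
          exact le_max_right _ _
        calc ENNReal.ofReal (a - 1/(n+1)) ≤
              ENNReal.ofReal (max 0 (min (a - 1/(n+1:ℝ)) m)) := ENNReal.ofReal_le_ofReal h1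
          _ = P {ω | V ω ∉ D ∧ G (V ω) ≤ a - 1/(n+1)} := (hPfull _).symm
          _ ≤ P {ω | V ω ∉ D ∧ G (V ω) < a} :=
              measure_mono (fun ω h => ⟨h.1, lt_of_le_of_lt h.2 (by linarith [hinv_pos n])⟩)
      have htend : Tendsto (fun n : ℕ => ENNReal.ofReal (a - 1/(n+1:ℝ))) atTop
          (𝓝 (ENNReal.ofReal a)) := by
        apply (ENNReal.continuous_ofReal.tendsto _).comp
        have := seq_lim.const_sub a
        simpa using this
      exact le_of_tendsto htend (Eventually.of_forall hev)
  -- quantile function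
  set Qc : ℝ → ℝ := fun u => sInf {x | u ≤ G x} with hQdef
  set I : Set ℝ := {u | 0 < u ∧ ∃ x, u ≤ G x} with hIdef
  have hIeq : I = Ioi (0:ℝ) ∩ ⋃ n : ℕ, Iic (G n) := by
    ext u
    simp only [hIdef, mem_setOf_eq, mem_inter_iff, mem_Ioi, mem_iUnion, mem_Iic]
    refine and_congr_right fun _ => ⟨?_, fun ⟨n, hn⟩ => ⟨n, hn⟩⟩
    rintro ⟨x, hx⟩
    obtain ⟨n, hn⟩ := exists_nat_ge x
    exact ⟨n, hx.trans (hGmono hn)⟩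
  have hImeas : MeasurableSet I := by
    rw [hIeq]
    exact measurableSet_Ioi.inter (MeasurableSet.iUnion fun n => measurableSet_Iic)
  have hbdd : ∀ u : ℝ, 0 < u → BddBelow {x | u ≤ G x} := by
    intro u hu
    obtain ⟨n, hn⟩ := (hGbot.eventually_lt_const hu).exists
    refine ⟨-(n:ℝ), fun y hy => ?_⟩
    by_contra hgt
    push_neg at hgt
    have h2 := hGmono hgt.le
    have h3 : u ≤ G y := hy
    linarith
  have hQG : ∀ u ∈ I, u ≤ G (Qc u) := by
    rintro u ⟨hu0, hune⟩
    have hne : {x | u ≤ G x}.Nonempty := hune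
    have hev : ∀ n : ℕ, u ≤ G (Qc u + 1/(n+1)) := by
      intro n
      obtain ⟨x, hxS, hx⟩ := exists_lt_of_csInf_lt hne
        (show Qc u < Qc u + 1/(n+1) by linarith [hinv_pos n])
      exact le_trans hxS (hGmono hx.le)
    exact ge_of_tendsto (hGrc (Qc u)) (Eventually.of_forall hev)
  have hQle : ∀ u ∈ I, ∀ z, (Qc u ≤ z ↔ u ≤ G z) := by
    intro u hu z
    constructor
    · intro h
      exact (hQG u hu).trans (hGmono h)
    · intro h
      exact csInf_le (hbdd u hu.1) h
  have hQlt : ∀ u b, 0 < u → ∀ x, x < b → u ≤ G x → Qc u < b := by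
    intro u b hu x hxb hx
    exact lt_of_le_of_lt (csInf_le (hbdd u hu) hx) hxb
  have hQgt : ∀ u b, G b < u → {x | u ≤ G x}.Nonempty → b < Qc u := by
    intro u b hb hne
    obtain ⟨n, hn⟩ := ((hGrc b).eventually_lt_const hb).exists
    have hlb : ∀ y ∈ {x | u ≤ G x}, b + 1/(n+1) ≤ y := by
      intro y hy
      by_contra hgt
      push_neg at hgt
      have h2 := hGmono hgt.le
      have h3 : u ≤ G y := hy
      linarith
    have := le_csInf hne hlb
    linarith [hinv_pos n]
  -- the generic rotation construction
  have hmeasG : ∀ a : ℝ, MeasurableSet {ω | V ω ∉ D ∧ G (V ω) ≤ a} := fun a =>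
    hVD.compl.inter ((hGmeas.comp hV) measurableSet_Iic)
  have hcons : ∀ δ : ℝ, 0 < δ → δ < m →
      ∃ V' : Ω → ℝ, Measurable V' ∧ (∀ z, P {ω | V' ω ≤ z} = P {ω | V ω ≤ z}) ∧
        (∀ ω, V ω ∈ D → V' ω = V ω) ∧
        (∀ ω, V ω ∉ D →
          (if G (V ω) ≤ δ then G (V ω) + (m - δ) else G (V ω) - δ) ∈ I →
          V' ω = Qc (if G (V ω) ≤ δ then G (V ω) + (m - δ) else G (V ω) - δ)) := by
    intro δ hδ0 hδm
    set Hf : Ω → ℝ := fun ω => if G (V ω) ≤ δ then G (V ω) + (m - δ) else G (V ω) - δ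
      with hHdef
    have hHmeas : Measurable Hf := by
      apply Measurable.ite ((hGmeas.comp hV) measurableSet_Iic)
      · exact (hGmeas.comp hV).add_const _
      · exact (hGmeas.comp hV).sub_const _
    set A : Set Ω := {ω | V ω ∈ D ∨ Hf ω ∉ I} with hAdef
    have hAmeas : MeasurableSet A := by
      have hAeq : A = {ω | V ω ∈ D} ∪ Hf ⁻¹' Iᶜ := by
        ext ω
        simp only [hAdef, mem_setOf_eq, mem_union, mem_preimage, mem_compl_iff]
      rw [hAeq]
      exact hVD.union (hHmeas hImeas.compl)
    set V' : Ω → ℝ := fun ω => if ω ∈ A then V ω else Qc (Hf ω) with hV'def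
    have hAc : ∀ ω, ω ∉ A → V ω ∉ D ∧ Hf ω ∈ I := by
      intro ω h
      simp only [hAdef, mem_setOf_eq, not_or, not_not] at h
      exact h
    have hkeyset : ∀ c : ℝ,
        {ω | V' ω ≤ c} = (A ∩ {ω | V ω ≤ c}) ∪ (Aᶜ ∩ {ω | Hf ω ≤ G c}) := by
      intro c
      ext ω
      by_cases hω : ω ∈ A
      · simp only [hV'def, mem_setOf_eq, mem_union, mem_inter_iff, mem_compl_iff, if_pos hω]
        constructor
        · intro h
          exact Or.inl ⟨hω, h⟩
        · rintro (⟨_, h⟩ | ⟨hni, _⟩)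
          · exact h
          · exact absurd hω hni
      · have h2 := (hAc ω hω).2
        simp only [hV'def, mem_setOf_eq, if_neg hω, mem_union, mem_inter_iff,
          mem_compl_iff, hω, false_and, false_or, not_false_eq_true, true_and]
        exact hQle _ h2 c
    have hV'meas : Measurable V' := by
      apply measurable_of_Iic
      intro c
      have he : V' ⁻¹' Iic c = (A ∩ {ω | V ω ≤ c}) ∪ (Aᶜ ∩ {ω | Hf ω ≤ G c}) := hkeyset c
      rw [he]
      exact (hAmeas.inter (hV measurableSet_Iic)).union
        (hAmeas.compl.inter (hHmeas measurableSet_Iic))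
    have hNsub : {ω | V ω ∉ D ∧ Hf ω ∉ I} ⊆ {ω | V ω ∉ D ∧ G (V ω) = δ} := by
      rintro ω ⟨h1, h2⟩
      refine ⟨h1, ?_⟩
      by_cases ht : G (V ω) ≤ δ
      · rcases lt_or_eq_of_le ht with hlt | heq
        · exfalso
          apply h2
          have hHf : Hf ω = G (V ω) + (m - δ) := by simp only [hHdef, if_pos ht]
          refine ⟨by rw [hHf]; linarith [hGnn (V ω)], ?_⟩
          obtain ⟨n, hn⟩ := (hGtop.eventually_const_lt
            (show G (V ω) + (m - δ) < m by linarith)).exists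
          exact ⟨(n : ℝ), by rw [hHf]; linarith⟩
        · exact heq
      · exfalso
        push_neg at ht
        apply h2
        have hHf : Hf ω = G (V ω) - δ := by simp only [hHdef, if_neg (not_le.mpr ht)]
        refine ⟨by rw [hHf]; linarith, ?_⟩
        obtain ⟨n, hn⟩ := (hGtop.eventually_const_lt
          (show G (V ω) - δ < m by linarith [hGlem (V ω)])).exists
        exact ⟨(n : ℝ), by rw [hHf]; linarith⟩
    have hN : P {ω | V ω ∉ D ∧ Hf ω ∉ I} = 0 := by
      apply measure_mono_null hNsub
      have hseteq : {ω | V ω ∉ D ∧ G (V ω) = δ} =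
          {ω | V ω ∉ D ∧ G (V ω) ≤ δ} \ {ω | V ω ∉ D ∧ G (V ω) < δ} := by
        ext ω
        simp only [mem_setOf_eq, mem_diff, not_and, not_lt]
        constructor
        · rintro ⟨hd, heq⟩
          exact ⟨⟨hd, heq.le⟩, fun _ => heq.ge⟩
        · rintro ⟨⟨hd, hle⟩, hge⟩
          exact ⟨hd, le_antisymm hle (hge hd)⟩
      have hmeaslt : MeasurableSet {ω | V ω ∉ D ∧ G (V ω) < δ} :=
        hVD.compl.inter ((hGmeas.comp hV) measurableSet_Iio)
      have hsub' : {ω | V ω ∉ D ∧ G (V ω) < δ} ⊆ {ω | V ω ∉ D ∧ G (V ω) ≤ δ} :=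
        fun ω h => ⟨h.1, h.2.le⟩
      rw [hseteq, measure_diff hsub' hmeaslt.nullMeasurableSet
        (measure_ne_top _ _), hmid δ hδ0 hδm, hPlt δ hδ0 hδm, tsub_self]
    have hcdf : ∀ z, P {ω | V' ω ≤ z} = P {ω | V ω ≤ z} := by
      intro z
      have hc0 : 0 ≤ G z := hGnn z
      have hcm : G z ≤ m := hGlem z
      rw [hkeyset z]
      have hdisj : Disjoint (A ∩ {ω | V ω ≤ z}) (Aᶜ ∩ {ω | Hf ω ≤ G z}) :=
        disjoint_compl_right.mono inf_le_left inf_le_left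
      rw [measure_union hdisj (hAmeas.compl.inter (hHmeas measurableSet_Iic))]
      have hpart1 : P (A ∩ {ω | V ω ≤ z}) = P ({ω | V ω ∈ D} ∩ {ω | V ω ≤ z}) := by
        apply le_antisymm
        · have hsub : A ∩ {ω | V ω ≤ z} ⊆
              ({ω | V ω ∈ D} ∩ {ω | V ω ≤ z}) ∪ {ω | V ω ∉ D ∧ Hf ω ∉ I} := by
            rintro ω ⟨hA, hz⟩
            by_cases hd : V ω ∈ D
            · exact Or.inl ⟨hd, hz⟩
            · rcases hA with h | h
              · exact absurd h hd
              · exact Or.inr ⟨hd, h⟩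
          calc P (A ∩ {ω | V ω ≤ z}) ≤ _ := measure_mono hsub
            _ = P ({ω | V ω ∈ D} ∩ {ω | V ω ≤ z}) := meas_union_null' P hN
        · exact measure_mono (fun ω h => ⟨Or.inl h.1, h.2⟩)
      have hpart2 : P (Aᶜ ∩ {ω | Hf ω ≤ G z}) = P {ω | V ω ∉ D ∧ Hf ω ≤ G z} := by
        apply le_antisymm
        · exact measure_mono (fun ω h => ⟨(hAc ω h.1).1, h.2⟩)
        · have hsub : {ω | V ω ∉ D ∧ Hf ω ≤ G z} ⊆
              (Aᶜ ∩ {ω | Hf ω ≤ G z}) ∪ {ω | V ω ∉ D ∧ Hf ω ∉ I} := by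
            rintro ω ⟨hd, hz⟩
            by_cases hi : Hf ω ∈ I
            · refine Or.inl ⟨?_, hz⟩
              simp only [mem_compl_iff, hAdef, mem_setOf_eq, not_or, not_not]
              exact ⟨hd, hi⟩
            · exact Or.inr ⟨hd, hi⟩
          calc P {ω | V ω ∉ D ∧ Hf ω ≤ G z} ≤ _ := measure_mono hsub
            _ = _ := meas_union_null' P hN
      have hpart3 : P {ω | V ω ∉ D ∧ Hf ω ≤ G z} = ENNReal.ofReal (G z) := by
        set c := G z with hcdef2
        have hsplit : {ω | V ω ∉ D ∧ Hf ω ≤ c} =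
            {ω | V ω ∉ D ∧ G (V ω) ≤ min δ (c - (m - δ))} ∪
            ({ω | V ω ∉ D ∧ G (V ω) ≤ c + δ} \ {ω | V ω ∉ D ∧ G (V ω) ≤ δ}) := by
          ext ω
          simp only [mem_setOf_eq, mem_union, mem_diff, le_min_iff, hHdef, not_and, not_le]
          by_cases ht : G (V ω) ≤ δ
          · rw [if_pos ht]
            constructor
            · rintro ⟨hd, hle⟩
              exact Or.inl ⟨hd, ht, by linarith⟩
            · rintro (⟨hd, _, h2⟩ | ⟨⟨hd, h1⟩, h2⟩)
              · exact ⟨hd, by linarith⟩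
              · exact absurd (h2 hd) (not_lt.mpr ht)
          · rw [if_neg ht]
            push_neg at ht
            constructor
            · rintro ⟨hd, hle⟩
              exact Or.inr ⟨⟨hd, by linarith⟩, fun _ => ht⟩
            · rintro (⟨hd, h1, h2⟩ | ⟨⟨hd, h1⟩, h2⟩)
              · exact absurd h1 (not_le.mpr ht)
              · exact ⟨hd, by linarith⟩
        have hsub2 : {ω | V ω ∉ D ∧ G (V ω) ≤ δ} ⊆ {ω | V ω ∉ D ∧ G (V ω) ≤ c + δ} :=
          fun ω h => ⟨h.1, h.2.trans (by linarith)⟩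
        have hdisj2 : Disjoint {ω | V ω ∉ D ∧ G (V ω) ≤ min δ (c - (m - δ))}
            ({ω | V ω ∉ D ∧ G (V ω) ≤ c + δ} \ {ω | V ω ∉ D ∧ G (V ω) ≤ δ}) := by
          rw [Set.disjoint_left]
          rintro ω ⟨hd, hmin⟩ ⟨_, hnot⟩
          exact hnot ⟨hd, hmin.trans (min_le_left _ _)⟩
        rw [hsplit, measure_union hdisj2 ((hmeasG _).diff (hmeasG _)),
          measure_diff hsub2 (hmeasG δ).nullMeasurableSet (measure_ne_top _ _),
          hPfull, hPfull, hPfull]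
        have e2 : max 0 (min δ m) = δ := by
          rw [min_eq_left hδm.le, max_eq_right hδ0.le]
        have e1 : max 0 (min (min δ (c - (m - δ))) m) = max 0 (c - (m - δ)) := by
          rw [min_eq_right (by linarith : c - (m - δ) ≤ δ),
            min_eq_left (by linarith : c - (m - δ) ≤ m)]
        have e3 : max 0 (min (c + δ) m) = min (c + δ) m :=
          max_eq_right (le_min (by linarith) hmpos.le)
        rw [e1, e2, e3]
        rcases le_or_gt (c + δ) m with hcase | hcase
        · rw [max_eq_left (by linarith : c - (m - δ) ≤ 0), min_eq_left hcase,
            ENNReal.ofReal_zero, zero_add, ← ENNReal.ofReal_sub _ hδ0.le]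
          congr 1
          ring
        · rw [max_eq_right (by linarith : (0:ℝ) ≤ c - (m - δ)), min_eq_right hcase.le,
            ← ENNReal.ofReal_sub _ hδ0.le,
            ← ENNReal.ofReal_add (by linarith) (by linarith)]
          congr 1
          ring
      rw [hpart1, hpart2, hpart3]
      have hofr : ENNReal.ofReal (G z) = P {ω | V ω ∉ D ∧ V ω ≤ z} :=
        ENNReal.ofReal_toReal (measure_ne_top _ _)
      rw [hofr]
      have hdisj3 : Disjoint ({ω | V ω ∈ D} ∩ {ω | V ω ≤ z}) {ω | V ω ∉ D ∧ V ω ≤ z} := by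
        rw [Set.disjoint_left]
        rintro ω ⟨hd, _⟩ ⟨hnd, _⟩
        exact hnd hd
      rw [← measure_union hdisj3 (hmeasx z)]
      congr 1
      ext ω
      simp only [mem_union, mem_inter_iff, mem_setOf_eq]
      constructor
      · rintro (⟨_, h⟩ | ⟨_, h⟩) <;> exact h
      · intro h
        by_cases hd : V ω ∈ D
        · exact Or.inl ⟨hd, h⟩
        · exact Or.inr ⟨hd, h⟩
    refine ⟨V', hV'meas, hcdf, ?_, ?_⟩
    · intro ω hω
      have hωA : ω ∈ A := Or.inl hω
      simp only [hV'def, if_pos hωA]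
    · intro ω h1 h2
      have hωA : ω ∉ A := by
        simp only [hAdef, mem_setOf_eq, not_or, not_not]
        exact ⟨h1, h2⟩
      simp only [hV'def, if_neg hωA]
      rfl
  set e := min ε (m/2) with hedef
  have he0 : 0 < e := lt_min hε (by linarith)
  have hem : e < m := lt_of_le_of_lt (min_le_right _ _) (by linarith)
  have heε : e ≤ ε := min_le_left _ _
  obtain ⟨Vd, hVdm, hVdcdf, hVdD, hVdQ⟩ := hcons e he0 hem
  obtain ⟨Vu, hVum, hVucdf, hVuD, hVuQ⟩ := hcons (m - e) (by linarith) (by linarith)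
  refine ⟨Vd, Vu, hVdm, hVum, hVdcdf, hVucdf,
    {ω | V ω ∉ D ∧ G (V ω) ≤ e}, {ω | V ω ∉ D ∧ m - e ≤ G (V ω)}, ?_, ?_, ?_, ?_⟩
  · rw [hPfull e, min_eq_left hem.le, max_eq_right he0.le]
    exact ENNReal.ofReal_le_ofReal heε
  · have hsplitm : {ω | V ω ∉ D} =
        {ω | V ω ∉ D ∧ G (V ω) < m - e} ∪ {ω | V ω ∉ D ∧ m - e ≤ G (V ω)} := by
      ext ω
      simp only [mem_setOf_eq, mem_union]
      constructor
      · intro h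
        rcases lt_or_ge (G (V ω)) (m - e) with hc | hc
        · exact Or.inl ⟨h, hc⟩
        · exact Or.inr ⟨h, hc⟩
      · rintro (⟨h, _⟩ | ⟨h, _⟩) <;> exact h
    have hdisj : Disjoint {ω | V ω ∉ D ∧ G (V ω) < m - e}
        {ω | V ω ∉ D ∧ m - e ≤ G (V ω)} := by
      rw [Set.disjoint_left]
      rintro ω ⟨_, h1⟩ ⟨_, h2⟩
      linarith
    have hBum : MeasurableSet {ω | V ω ∉ D ∧ m - e ≤ G (V ω)} :=
      hVD.compl.inter ((hGmeas.comp hV) measurableSet_Ici)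
    have hPm : P {ω | V ω ∉ D} = ENNReal.ofReal m :=
      (ENNReal.ofReal_toReal (measure_ne_top _ _)).symm
    have heq1 : ENNReal.ofReal (m - e) + P {ω | V ω ∉ D ∧ m - e ≤ G (V ω)} =
        ENNReal.ofReal m := by
      rw [← hPlt (m - e) (by linarith) (by linarith), ← measure_union hdisj hBum,
        ← hsplitm, hPm]
    have heq2 : P {ω | V ω ∉ D ∧ m - e ≤ G (V ω)} =
        ENNReal.ofReal m - ENNReal.ofReal (m - e) := by
      rw [← heq1, add_comm]
      rw [ENNReal.add_sub_cancel_right ENNReal.ofReal_ne_top]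
    rw [heq2, ← ENNReal.ofReal_sub m (by linarith : (0:ℝ) ≤ m - e)]
    apply ENNReal.ofReal_le_ofReal
    linarith
  · intro ω
    by_cases hd : V ω ∈ D
    · exact Or.inr (Or.inr ⟨hVdD ω hd, hd⟩)
    by_cases hg : G (V ω) ≤ e
    · exact Or.inr (Or.inl ⟨hd, hg⟩)
    push_neg at hg
    left
    have hne : ¬ (G (V ω) ≤ e) := not_le.mpr hg
    have hIH : (if G (V ω) ≤ e then G (V ω) + (m - e) else G (V ω) - e) ∈ I := by
      rw [if_neg hne]
      refine ⟨by linarith, ?_⟩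
      obtain ⟨n, hn⟩ := (hGtop.eventually_const_lt
        (show G (V ω) - e < m by linarith [hGlem (V ω)])).exists
      exact ⟨(n:ℝ), hn.le⟩
    have hVdω := hVdQ ω hd hIH
    rw [if_neg hne] at hVdω
    obtain ⟨n, hn⟩ := ((hGlc (V ω)).eventually_const_lt
      (show G (V ω) - e < G (V ω) by linarith)).exists
    rw [hVdω]
    exact hQlt _ _ (by linarith) (V ω - 1/(n+1)) (by linarith [hinv_pos n]) hn.le
  · intro ω
    by_cases hd : V ω ∈ D
    · exact Or.inr (Or.inr ⟨hVuD ω hd, hd⟩)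
    by_cases hg : G (V ω) < m - e
    · left
      have hle : G (V ω) ≤ m - e := hg.le
      have hne2 : {x | G (V ω) + (m - (m - e)) ≤ G x}.Nonempty := by
        obtain ⟨n, hn⟩ := (hGtop.eventually_const_lt
          (show G (V ω) + (m - (m - e)) < m by linarith)).exists
        exact ⟨(n:ℝ), hn.le⟩
      have hIH : (if G (V ω) ≤ m - e then G (V ω) + (m - (m - e))
          else G (V ω) - (m - e)) ∈ I := by
        rw [if_pos hle]
        exact ⟨by linarith [hGnn (V ω)], hne2⟩
      have hVuω := hVuQ ω hd hIH
      rw [if_pos hle] at hVuω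
      rw [hVuω]
      exact hQgt _ _ (by linarith) hne2
    · exact Or.inr (Or.inl ⟨hd, not_lt.mp hg⟩)


theorem strict_nonstrict_sup_inf_eq' {Ω : Type*} [MeasurableSpace Ω]
    (P : Measure Ω) [IsProbabilityMeasure P]
    (W : Ω → ℝ) (hW : Measurable W)
    (FW : ℝ → ℝ) (hFW : FW = fun z => (P {ω | W ω ≤ z}).toReal)
    (FV : ℝ → ℝ) (hFVmono : Monotone FV)
    (hcont : Continuous FW ∨ Continuous FV)
    (keyP : ∀ (V : Ω → ℝ), Measurable V → ∀ (D : Set ℝ), D.Countable →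
      (∀ c ∉ D, P {ω | V ω = c} = 0) → ∀ {ε : ℝ}, 0 < ε →
      ∃ Vd Vu : Ω → ℝ, Measurable Vd ∧ Measurable Vu ∧
      (∀ z, P {ω | Vd ω ≤ z} = P {ω | V ω ≤ z}) ∧
      (∀ z, P {ω | Vu ω ≤ z} = P {ω | V ω ≤ z}) ∧
      ∃ Bd Bu : Set Ω, P Bd ≤ ENNReal.ofReal ε ∧ P Bu ≤ ENNReal.ofReal ε ∧
      (∀ ω, Vd ω < V ω ∨ ω ∈ Bd ∨ (Vd ω = V ω ∧ V ω ∈ D)) ∧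
      (∀ ω, V ω < Vu ω ∨ ω ∈ Bu ∨ (Vu ω = V ω ∧ V ω ∈ D)))
    (ptC : ∀ (X : Ω → ℝ), Measurable X → ∀ (Fx : ℝ → ℝ),
      (∀ z, (P {ω | X ω ≤ z}).toReal = Fx z) → ∀ c, ContinuousAt Fx c →
      P {ω | X ω = c} = 0)
    (rle : ∀ {a b : ℝ}, (∀ ε : ℝ, 0 < ε → a ≤ b + ε) → a ≤ b) :
    (sSup {p : ℝ | ∃ V : Ω → ℝ, Measurable V ∧ (∀ z : ℝ, (P {ω | V ω ≤ z}).toReal = FV z) ∧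
          p = (P {ω | V ω ≤ W ω}).toReal}
        = sSup {p : ℝ | ∃ V : Ω → ℝ, Measurable V ∧ (∀ z : ℝ, (P {ω | V ω ≤ z}).toReal = FV z) ∧
          p = (P {ω | V ω < W ω}).toReal}) ∧
    (sInf {p : ℝ | ∃ V : Ω → ℝ, Measurable V ∧ (∀ z : ℝ, (P {ω | V ω ≤ z}).toReal = FV z) ∧
          p = (P {ω | W ω < V ω}).toReal}
        = sInf {p : ℝ | ∃ V : Ω → ℝ, Measurable V ∧ (∀ z : ℝ, (P {ω | V ω ≤ z}).toReal = FV z) ∧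
          p = (P {ω | W ω ≤ V ω}).toReal}) ∧
    (sInf {p : ℝ | ∃ V : Ω → ℝ, Measurable V ∧ (∀ z : ℝ, (P {ω | V ω ≤ z}).toReal = FV z) ∧
          p = (P {ω | V ω < W ω}).toReal}
        = sInf {p : ℝ | ∃ V : Ω → ℝ, Measurable V ∧ (∀ z : ℝ, (P {ω | V ω ≤ z}).toReal = FV z) ∧
          p = (P {ω | V ω ≤ W ω}).toReal}) := by
  classical
  by_cases hex : ∃ V : Ω → ℝ, Measurable V ∧ ∀ z : ℝ, (P {ω | V ω ≤ z}).toReal = FV z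
  · obtain ⟨V₀, hV₀m, hV₀c⟩ := hex
    set D : Set ℝ := {x | ¬ ContinuousAt FV x} with hDdef
    have hDc : D.Countable := hFVmono.countable_not_continuousAt
    have hD0 : ∀ (V : Ω → ℝ), Measurable V → (∀ z, (P {ω | V ω ≤ z}).toReal = FV z) →
        ∀ c ∉ D, P {ω | V ω = c} = 0 := by
      intro V hVm hVc c hc
      rw [hDdef, mem_setOf_eq, not_not] at hc
      exact ptC V hVm FV hVc c hc
    have hnull3 : ∀ (V : Ω → ℝ), Measurable V → (∀ z, (P {ω | V ω ≤ z}).toReal = FV z) →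
        P {ω | V ω ∈ D ∧ V ω = W ω} = 0 := by
      rcases hcont with hFWc | hFVc
      · have hWc : ∀ c, P {ω | W ω = c} = 0 := fun c =>
          ptC W hW FW (fun z => by rw [hFW]) c hFWc.continuousAt
        intro V hVm hVcdf
        have hsub : {ω | V ω ∈ D ∧ V ω = W ω} ⊆ ⋃ c ∈ D, {ω | W ω = c} := by
          rintro ω ⟨h1, h2⟩
          exact mem_biUnion h1 h2.symm
        exact measure_mono_null hsub ((measure_biUnion_null_iff hDc).mpr fun c _ => hWc c)
      · intro V hVm hVcdf
        have hempty : {ω | V ω ∈ D ∧ V ω = W ω} = ∅ := by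
          ext ω
          simp only [hDdef, mem_setOf_eq, mem_empty_iff_false, iff_false, not_and]
          intro h
          exact absurd hFVc.continuousAt h
        rw [hempty, measure_empty]
    have main : ∀ (V : Ω → ℝ), Measurable V → (∀ z, (P {ω | V ω ≤ z}).toReal = FV z) →
        ∀ ε : ℝ, 0 < ε →
        ∃ Vd Vu : Ω → ℝ, Measurable Vd ∧ Measurable Vu ∧
          (∀ z, (P {ω | Vd ω ≤ z}).toReal = FV z) ∧
          (∀ z, (P {ω | Vu ω ≤ z}).toReal = FV z) ∧
          (P {ω | V ω ≤ W ω}).toReal ≤ (P {ω | Vd ω < W ω}).toReal + ε ∧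
          (P {ω | W ω ≤ Vd ω}).toReal ≤ (P {ω | W ω < V ω}).toReal + ε ∧
          (P {ω | Vu ω ≤ W ω}).toReal ≤ (P {ω | V ω < W ω}).toReal + ε := by
      intro V hVm hVc ε hε
      obtain ⟨Vd, Vu, hVdm, hVum, hVdcdf, hVucdf, Bd, Bu, hBd, hBu, hgd, hgu⟩ :=
        keyP V hVm D hDc (hD0 V hVm hVc) hε
      have hE3 := hnull3 V hVm hVc
      have hbound : ∀ S T B E : Set Ω, P E = 0 → P B ≤ ENNReal.ofReal ε →
          S ⊆ T ∪ B ∪ E → (P S).toReal ≤ (P T).toReal + ε := by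
        intro S T B E hE hB hsub
        have h1 : P S ≤ P T + ENNReal.ofReal ε := by
          calc P S ≤ P (T ∪ B ∪ E) := measure_mono hsub
            _ ≤ P (T ∪ B) + P E := measure_union_le _ _
            _ = P (T ∪ B) := by rw [hE, add_zero]
            _ ≤ P T + P B := measure_union_le _ _
            _ ≤ P T + ENNReal.ofReal ε := add_le_add_right hB _
        have h2 := ENNReal.toReal_mono
          (ENNReal.add_ne_top.mpr ⟨measure_ne_top _ _, ENNReal.ofReal_ne_top⟩) h1
        rwa [ENNReal.toReal_add (measure_ne_top _ _) ENNReal.ofReal_ne_top,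
          ENNReal.toReal_ofReal hε.le] at h2
      refine ⟨Vd, Vu, hVdm, hVum, (fun z => by rw [hVdcdf z]; exact hVc z),
        (fun z => by rw [hVucdf z]; exact hVc z), ?_, ?_, ?_⟩
      · apply hbound _ _ Bd {ω | V ω ∈ D ∧ V ω = W ω} hE3 hBd
        intro ω h
        have h' : V ω ≤ W ω := h
        rcases hgd ω with hlt | hB | ⟨heq, hDm⟩
        · exact Or.inl (Or.inl (lt_of_lt_of_le hlt h'))
        · exact Or.inl (Or.inr hB)
        · rcases eq_or_lt_of_le h' with he | hl
          · exact Or.inr ⟨hDm, he⟩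
          · exact Or.inl (Or.inl (show Vd ω < W ω by rw [heq]; exact hl))
      · apply hbound _ _ Bd {ω | V ω ∈ D ∧ V ω = W ω} hE3 hBd
        intro ω h
        have h' : W ω ≤ Vd ω := h
        rcases hgd ω with hlt | hB | ⟨heq, hDm⟩
        · exact Or.inl (Or.inl (lt_of_le_of_lt h' hlt))
        · exact Or.inl (Or.inr hB)
        · rw [heq] at h'
          rcases eq_or_lt_of_le h' with he | hl
          · exact Or.inr ⟨hDm, he.symm⟩
          · exact Or.inl (Or.inl hl)
      · apply hbound _ _ Bu {ω | V ω ∈ D ∧ V ω = W ω} hE3 hBu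
        intro ω h
        have h' : Vu ω ≤ W ω := h
        rcases hgu ω with hlt | hB | ⟨heq, hDm⟩
        · exact Or.inl (Or.inl (lt_of_lt_of_le hlt h'))
        · exact Or.inl (Or.inr hB)
        · rw [heq] at h'
          rcases eq_or_lt_of_le h' with he | hl
          · exact Or.inr ⟨hDm, he⟩
          · exact Or.inl (Or.inl hl)
    have hub : ∀ s : Set Ω, (P s).toReal ≤ 1 := fun s =>
      le_trans (ENNReal.toReal_mono ENNReal.one_ne_top prob_le_one) (by simp)
    refine ⟨?_, ?_, ?_⟩
    · apply le_antisymm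
      · refine csSup_le ⟨_, V₀, hV₀m, hV₀c, rfl⟩ ?_
        rintro p ⟨V, hVm, hVc, rfl⟩
        apply rle
        intro ε hε
        obtain ⟨Vd, Vu, hVdm, hVum, hVdc, hVuc, hb1, hb2, hb3⟩ := main V hVm hVc ε hε
        refine hb1.trans (add_le_add_left ?_ ε)
        exact le_csSup ⟨1, by rintro q ⟨V', hm', hc', rfl⟩; exact hub _⟩ ⟨Vd, hVdm, hVdc, rfl⟩
      · refine csSup_le ⟨_, V₀, hV₀m, hV₀c, rfl⟩ ?_
        rintro p ⟨V, hVm, hVc, rfl⟩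
        refine le_trans ?_
          (le_csSup ⟨1, by rintro q ⟨V', hm', hc', rfl⟩; exact hub _⟩ ⟨V, hVm, hVc, rfl⟩)
        exact ENNReal.toReal_mono (measure_ne_top _ _)
          (measure_mono (fun ω (h : V ω < W ω) => h.le))
    · apply le_antisymm
      · refine le_csInf ⟨_, V₀, hV₀m, hV₀c, rfl⟩ ?_
        rintro q ⟨V, hVm, hVc, rfl⟩
        refine le_trans
          (csInf_le ⟨0, by rintro r ⟨V', hm', hc', rfl⟩; exact ENNReal.toReal_nonneg⟩
            ⟨V, hVm, hVc, rfl⟩) ?_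
        exact ENNReal.toReal_mono (measure_ne_top _ _)
          (measure_mono (fun ω (h : W ω < V ω) => h.le))
      · refine le_csInf ⟨_, V₀, hV₀m, hV₀c, rfl⟩ ?_
        rintro p ⟨V, hVm, hVc, rfl⟩
        apply rle
        intro ε hε
        obtain ⟨Vd, Vu, hVdm, hVum, hVdc, hVuc, hb1, hb2, hb3⟩ := main V hVm hVc ε hε
        refine le_trans ?_ hb2
        exact csInf_le ⟨0, by rintro r ⟨V', hm', hc', rfl⟩; exact ENNReal.toReal_nonneg⟩
          ⟨Vd, hVdm, hVdc, rfl⟩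
    · apply le_antisymm
      · refine le_csInf ⟨_, V₀, hV₀m, hV₀c, rfl⟩ ?_
        rintro q ⟨V, hVm, hVc, rfl⟩
        refine le_trans
          (csInf_le ⟨0, by rintro r ⟨V', hm', hc', rfl⟩; exact ENNReal.toReal_nonneg⟩
            ⟨V, hVm, hVc, rfl⟩) ?_
        exact ENNReal.toReal_mono (measure_ne_top _ _)
          (measure_mono (fun ω (h : V ω < W ω) => h.le))
      · refine le_csInf ⟨_, V₀, hV₀m, hV₀c, rfl⟩ ?_
        rintro p ⟨V, hVm, hVc, rfl⟩
        apply rle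
        intro ε hε
        obtain ⟨Vd, Vu, hVdm, hVum, hVdc, hVuc, hb1, hb2, hb3⟩ := main V hVm hVc ε hε
        refine le_trans ?_ hb3
        exact csInf_le ⟨0, by rintro r ⟨V', hm', hc', rfl⟩; exact ENNReal.toReal_nonneg⟩
          ⟨Vu, hVum, hVuc, rfl⟩
  · have hemp : ∀ f : Ω → Prop, True := fun _ => trivial
    have h1 : ∀ (g : (Ω → ℝ) → Set Ω),
        {p : ℝ | ∃ V : Ω → ℝ, Measurable V ∧ (∀ z : ℝ, (P {ω | V ω ≤ z}).toReal = FV z) ∧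
          p = (P (g V)).toReal} = (∅ : Set ℝ) := by
      intro g
      ext p
      simp only [mem_setOf_eq, mem_empty_iff_false, iff_false, not_exists]
      rintro V ⟨hm, hc, -⟩
      exact hex ⟨V, hm, hc⟩
    rw [h1 (fun V => {ω | V ω ≤ W ω}), h1 (fun V => {ω | V ω < W ω}),
      h1 (fun V => {ω | W ω < V ω}), h1 (fun V => {ω | W ω ≤ V ω})]
    exact ⟨rfl, rfl, rfl⟩

end Helpers

/-- On an atomless probability space, for a random variable `W` with cdf
`F_W` and a cdf `F_V` on `ℝ` with at least one of them continuous, over random variables `V`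
with cdf `F_V`: (i) `sup_V ℙ(W ≥ V) = sup_V ℙ(W > V)`; (ii) `inf_V ℙ(W < V) = inf_V ℙ(W ≤ V)`;
(iii) `inf_V ℙ(W > V) = inf_V ℙ(W ≥ V)`. -/
theorem strict_nonstrict_sup_inf_eq {Ω : Type*} [MeasurableSpace Ω]
    (P : Measure Ω) [IsProbabilityMeasure P] (hatomless : Atomless P)
    (W : Ω → ℝ) (hW : Measurable W)
    (FW : ℝ → ℝ) (hFW : FW = fun z => (P {ω | W ω ≤ z}).toReal)
    (FV : ℝ → ℝ) (hFVmono : Monotone FV)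
    (hFVrc : ∀ x : ℝ, Tendsto FV (𝓝[>] x) (𝓝 (FV x)))
    (hFVbot : Tendsto FV atBot (𝓝 0)) (hFVtop : Tendsto FV atTop (𝓝 1))
    (hcont : Continuous FW ∨ Continuous FV) :
    (sSup {p : ℝ | ∃ V : Ω → ℝ, Measurable V ∧ (∀ z : ℝ, (P {ω | V ω ≤ z}).toReal = FV z) ∧
          p = (P {ω | V ω ≤ W ω}).toReal}
        = sSup {p : ℝ | ∃ V : Ω → ℝ, Measurable V ∧ (∀ z : ℝ, (P {ω | V ω ≤ z}).toReal = FV z) ∧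
          p = (P {ω | V ω < W ω}).toReal}) ∧
    (sInf {p : ℝ | ∃ V : Ω → ℝ, Measurable V ∧ (∀ z : ℝ, (P {ω | V ω ≤ z}).toReal = FV z) ∧
          p = (P {ω | W ω < V ω}).toReal}
        = sInf {p : ℝ | ∃ V : Ω → ℝ, Measurable V ∧ (∀ z : ℝ, (P {ω | V ω ≤ z}).toReal = FV z) ∧
          p = (P {ω | W ω ≤ V ω}).toReal}) ∧
    (sInf {p : ℝ | ∃ V : Ω → ℝ, Measurable V ∧ (∀ z : ℝ, (P {ω | V ω ≤ z}).toReal = FV z) ∧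
          p = (P {ω | V ω < W ω}).toReal}
        = sInf {p : ℝ | ∃ V : Ω → ℝ, Measurable V ∧ (∀ z : ℝ, (P {ω | V ω ≤ z}).toReal = FV z) ∧
          p = (P {ω | V ω ≤ W ω}).toReal}) :=
  strict_nonstrict_sup_inf_eq' P W hW FW hFW FV hFVmono hcont
    (fun V hV D hDc hD0 {ε} hε => key P V hV D hDc hD0 hε)
    (fun X hX Fx hFx c hc => pointCont P X hX Fx hFx c hc)
    (fun {a b} h => real_le_of_forall_pos h)
end
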